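/- arXiv:2104.10556 — 7 statements merged into one kernel-verified Lean document; each statement's English description precedes it below -/
import Mathlib

section
/- Let X ∈ Thompson's semigroup S with X_0 | X, and let n ∈ ℕ. Then X_1^{-n} X X_1^{n} lies in S (computed inside Thompson's group F) if and only if X_1^n divides X. -/
/-- The defining relators of Thompson's group `F`:
`X_i⁻¹ X_j X_i = X_{j+1}` for `i < j`. -/
def thompsonGroupRels : Set (FreeGroup ℕ) :=
  {r | ∃ i j : ℕ, i < j ∧
    r = (FreeGroup.of i)⁻¹ * FreeGroup.of j * FreeGroup.of i * (FreeGroup.of (j + 1))⁻¹}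

/-- Thompson's group `F`. -/
def ThompsonF : Type := PresentedGroup thompsonGroupRels

instance : Group ThompsonF := inferInstanceAs (Group (PresentedGroup thompsonGroupRels))

/-- The generators `X_n` of Thompson's group. -/
def x (n : ℕ) : ThompsonF := PresentedGroup.of n

/-- Thompson's semigroup, realized as the submonoid of positive words inside
Thompson's group `F`. -/
def ThompsonSemigroup : Submonoid ThompsonF := Submonoid.closure (Set.range x)

set_option linter.dupNamespace false

namespace ThompsonAux


/-- Insert a generator index on the left of a normal-form word. -/
def insL : ℕ → List ℕ → List ℕ
  | i, [] => [i]
  | i, j :: t => if i ≤ j then i :: j :: t else j :: insL (i + 1) t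

@[simp] lemma insL_nil (i : ℕ) : insL i [] = [i] := rfl

lemma insL_cons (i j : ℕ) (t : List ℕ) :
    insL i (j :: t) = if i ≤ j then i :: j :: t else j :: insL (i + 1) t := rfl

lemma insL_of_le {i j : ℕ} (h : i ≤ j) (t : List ℕ) : insL i (j :: t) = i :: j :: t := by
  simp [insL, h]

lemma insL_of_gt {i j : ℕ} (h : j < i) (t : List ℕ) :
    insL i (j :: t) = j :: insL (i + 1) t := by
  simp [insL, Nat.not_le.2 h]

lemma insL_ne_nil (i : ℕ) (l : List ℕ) : insL i l ≠ [] := by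
  induction l generalizing i with
  | nil => simp [insL]
  | cons j t ih =>
    by_cases h : i ≤ j
    · simp [insL_of_le h]
    · simp [insL_of_gt (Nat.not_le.1 h)]

lemma mem_insL {a i : ℕ} {l : List ℕ} (h : a ∈ insL i l) : a ∈ l ∨ i ≤ a := by
  induction l generalizing i with
  | nil => simp [insL] at h; omega
  | cons j t ih =>
    by_cases hij : i ≤ j
    · rw [insL_of_le hij, List.mem_cons] at h
      rcases h with h | h
      · right; omega
      · left; exact h
    · rw [insL_of_gt (Nat.not_le.1 hij), List.mem_cons] at h
      rcases h with h | h
      · left; simp [h]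
      · rcases ih h with h' | h'
        · left; simp [h']
        · right; omega

lemma sorted_insL {l : List ℕ} (hl : l.Pairwise (· ≤ ·)) (i : ℕ) :
    (insL i l).Pairwise (· ≤ ·) := by
  induction l generalizing i with
  | nil => simp [insL]
  | cons j t ih =>
    rw [List.pairwise_cons] at hl
    by_cases hij : i ≤ j
    · rw [insL_of_le hij]
      refine List.pairwise_cons.2 ⟨?_, List.pairwise_cons.2 hl⟩
      intro b hb
      rw [List.mem_cons] at hb
      rcases hb with hb | hb
      · omega
      · have := hl.1 b hb; omega
    · rw [insL_of_gt (Nat.not_le.1 hij)]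
      refine List.pairwise_cons.2 ⟨?_, ih hl.2 (i+1)⟩
      intro b hb
      rcases mem_insL hb with hb | hb
      · exact hl.1 b hb
      · omega

/-- The key commutation: for `j < i`, `insL i ∘ insL j = insL j ∘ insL (i+1)`. -/
lemma insL_comm {i j : ℕ} (h : j < i) (l : List ℕ) :
    insL i (insL j l) = insL j (insL (i + 1) l) := by
  induction l generalizing i j with
  | nil =>
    simp [insL, Nat.not_le.2 h, Nat.le_of_lt (Nat.lt_succ_of_lt h)]
  | cons k t ih =>
    by_cases hjk : j ≤ k
    · rw [insL_of_le hjk, insL_of_gt h]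
      by_cases hik : i + 1 ≤ k
      · rw [insL_of_le hik t, insL_of_le (show j ≤ i + 1 by omega)]
      · rw [insL_of_gt (show k < i + 1 by omega) t, insL_of_le hjk (insL (i + 1 + 1) t)]
    · have hjk' : k < j := Nat.not_le.1 hjk
      rw [insL_of_gt hjk' t, insL_of_gt (show k < i by omega), insL_of_gt (show k < i + 1 by omega) t,
        insL_of_gt hjk', ih (show j + 1 < i + 1 by omega)]

def mulL (u v : List ℕ) : List ℕ := u.foldr insL v

@[simp] lemma mulL_nil (v : List ℕ) : mulL [] v = v := rfl

@[simp] lemma mulL_cons (i : ℕ) (u v : List ℕ) : mulL (i :: u) v = insL i (mulL u v) := rfl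

lemma mulL_insL (V : List ℕ) (i : ℕ) (w : List ℕ) :
    mulL (insL i V) w = insL i (mulL V w) := by
  induction V generalizing i with
  | nil => rfl
  | cons j t ih =>
    by_cases hij : i ≤ j
    · rw [insL_of_le hij]; rfl
    · rw [insL_of_gt (Nat.not_le.1 hij)]
      rw [mulL_cons, mulL_cons, ih, insL_comm (Nat.not_le.1 hij)]

lemma mulL_assoc (u v w : List ℕ) : mulL (mulL u v) w = mulL u (mulL v w) := by
  induction u with
  | nil => rfl
  | cons i t ih => rw [mulL_cons, mulL_insL, ih, mulL_cons]

lemma insL_eq_cons {i : ℕ} {l : List ℕ} (h : ∀ a ∈ l, i ≤ a) : insL i l = i :: l := by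
  cases l with
  | nil => rfl
  | cons j t => exact insL_of_le (h j (by simp)) t

lemma mulL_one {u : List ℕ} (hu : u.Pairwise (· ≤ ·)) : mulL u [] = u := by
  induction u with
  | nil => rfl
  | cons i t ih =>
    rw [List.pairwise_cons] at hu
    rw [mulL_cons, ih hu.2, insL_eq_cons hu.1]

/-- Normal forms: sorted lists of generator indices. -/
abbrev NF : Type := {l : List ℕ // l.Pairwise (· ≤ ·)}

lemma sorted_mulL {v : List ℕ} (hv : v.Pairwise (· ≤ ·)) (u : List ℕ) :
    (mulL u v).Pairwise (· ≤ ·) := by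
  induction u with
  | nil => exact hv
  | cons i t ih => exact sorted_insL ih i

instance : Monoid NF where
  mul a b := ⟨mulL a.1 b.1, sorted_mulL b.2 a.1⟩
  one := ⟨[], List.Pairwise.nil⟩
  mul_assoc a b c := Subtype.ext (mulL_assoc a.1 b.1 c.1)
  one_mul a := Subtype.ext rfl
  mul_one a := Subtype.ext (mulL_one a.2)

lemma NF_mul_val (a b : NF) : (a * b).1 = mulL a.1 b.1 := rfl

lemma NF_one_val : (1 : NF).1 = [] := rfl

lemma NF_nil_eq_one (h : ([] : List ℕ).Pairwise (· ≤ ·)) : (⟨[], h⟩ : NF) = 1 := rfl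

/-- The generators of the Thompson monoid. -/
def gen (i : ℕ) : NF := ⟨[i], List.pairwise_singleton _ i⟩

lemma gen_mul_val (i : ℕ) (t : NF) : (gen i * t).1 = insL i t.1 := rfl

lemma NF_cons (i : ℕ) (t : List ℕ) (h : (i :: t).Pairwise (· ≤ ·)) :
    (⟨i :: t, h⟩ : NF) = gen i * ⟨t, h.of_cons⟩ := by
  apply Subtype.ext
  rw [gen_mul_val]
  exact (insL_eq_cons (fun a ha => (List.pairwise_cons.1 h).1 a ha)).symm

/-- The defining relation of the Thompson monoid. -/
lemma gen_rel {i j : ℕ} (h : i < j) : gen j * gen i = gen i * gen (j + 1) := by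
  apply Subtype.ext
  show mulL [j] [i] = mulL [i] [j+1]
  show insL j (insL i []) = insL i (insL (j+1) [])
  rw [insL_nil, insL_nil, insL_of_gt h, insL_of_le (by omega : i ≤ j + 1), insL_nil]

lemma insL_injective {i : ℕ} : ∀ {a b : List ℕ}, insL i a = insL i b → a = b := by
  intro a
  induction a generalizing i with
  | nil =>
    intro b h
    cases b with
    | nil => rfl
    | cons j t =>
      exfalso
      by_cases hij : i ≤ j
      · rw [insL_nil, insL_of_le hij] at h
        simp at h
      · rw [insL_nil, insL_of_gt (Nat.not_le.1 hij)] at h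
        have : insL (i+1) t = [] := by
          have := congrArg List.tail h
          simpa using this.symm
        exact insL_ne_nil _ _ this
  | cons j t ih =>
    intro b h
    cases b with
    | nil =>
      exfalso
      by_cases hij : i ≤ j
      · rw [insL_nil, insL_of_le hij] at h
        simp at h
      · rw [insL_nil, insL_of_gt (Nat.not_le.1 hij)] at h
        have : insL (i+1) t = [] := by
          have := congrArg List.tail h
          simpa using this
        exact insL_ne_nil _ _ this
    | cons j' t' =>
      by_cases hij : i ≤ j <;> by_cases hij' : i ≤ j'
      · rw [insL_of_le hij, insL_of_le hij'] at h
        simpa using h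
      · rw [insL_of_le hij, insL_of_gt (Nat.not_le.1 hij')] at h
        simp only [List.cons.injEq] at h
        omega
      · rw [insL_of_gt (Nat.not_le.1 hij), insL_of_le hij'] at h
        simp only [List.cons.injEq] at h
        omega
      · rw [insL_of_gt (Nat.not_le.1 hij), insL_of_gt (Nat.not_le.1 hij')] at h
        simp only [List.cons.injEq] at h
        obtain ⟨rfl, h2⟩ := h
        exact congrArg _ (ih h2)

lemma mulL_left_cancel : ∀ (u : List ℕ) {v w : List ℕ}, mulL u v = mulL u w → v = w := by
  intro u
  induction u with
  | nil => intro v w h; exact h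
  | cons i t ih => intro v w h; exact ih (insL_injective h)

lemma NF_left_cancel (a : NF) : ∀ {b c : NF}, a * b = a * c → b = c := by
  intro b c h
  exact Subtype.ext (mulL_left_cancel a.1 (congrArg Subtype.val h))

/-- Splitting a sorted list at a threshold. -/
lemma exists_le_gt_split (k : ℕ) : ∀ {u : List ℕ}, u.Pairwise (· ≤ ·) →
    ∃ A B, u = A ++ B ∧ (∀ a ∈ A, a ≤ k) ∧ (∀ b ∈ B, k < b) := by
  intro u
  induction u with
  | nil => exact fun _ => ⟨[], [], by simp⟩
  | cons a t ih =>
    intro hu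
    rw [List.pairwise_cons] at hu
    by_cases hak : a ≤ k
    · obtain ⟨A, B, h1, h2, h3⟩ := ih hu.2
      exact ⟨a :: A, B, by simp [h1], by
        intro x hx; rcases List.mem_cons.1 hx with rfl | hx; exact hak; exact h2 x hx, h3⟩
    · refine ⟨[], a :: t, by simp, by simp, ?_⟩
      intro b hb
      rcases List.mem_cons.1 hb with rfl | hb
      · omega
      · have := hu.1 b hb; omega

lemma mulL_eq_append {A : List ℕ} (hA : A.Pairwise (· ≤ ·)) :
    ∀ {W : List ℕ}, (∀ a ∈ A, ∀ w ∈ W, a ≤ w) → mulL A W = A ++ W := by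
  induction A with
  | nil => intro W _; rfl
  | cons a t ih =>
    intro W hAW
    rw [List.pairwise_cons] at hA
    rw [mulL_cons, ih hA.2 (fun x hx w hw => hAW x (by simp [hx]) w hw)]
    refine insL_eq_cons ?_
    intro b hb
    rcases List.mem_append.1 hb with hb | hb
    · exact hA.1 b hb
    · exact hAW a (by simp) b hb

/-- Right multiplication by a generator: explicit formula. -/
lemma mulL_gen_formula {A B : List ℕ} {k : ℕ} (hA : A.Pairwise (· ≤ ·)) (hB : B.Pairwise (· ≤ ·))
    (h2 : ∀ a ∈ A, a ≤ k) (h3 : ∀ b ∈ B, k < b) :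
    mulL (A ++ B) [k] = A ++ k :: B.map (· + 1) := by
  have hBk : mulL B [k] = k :: B.map (· + 1) := by
    clear h2 hA A
    induction B with
    | nil => simp [mulL]
    | cons b t ih =>
      rw [List.pairwise_cons] at hB
      rw [mulL_cons, ih hB.2 (fun x hx => h3 x (by simp [hx])),
        insL_of_gt (h3 b (by simp)), List.map_cons]
      congr 1
      refine insL_eq_cons ?_
      intro c hc
      simp only [List.mem_map] at hc
      obtain ⟨c', hc', rfl⟩ := hc
      have := hB.1 c' hc'
      omega
  show List.foldr insL [k] (A ++ B) = _
  rw [List.foldr_append]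
  show mulL A (mulL B [k]) = _
  rw [hBk]
  refine mulL_eq_append hA ?_
  intro a ha w hw
  rcases List.mem_cons.1 hw with rfl | hw
  · exact h2 a ha
  · simp only [List.mem_map] at hw
    obtain ⟨c', hc', rfl⟩ := hw
    have := h3 c' hc'
    have := h2 a ha
    omega

lemma split_unique {k : ℕ} : ∀ {A A' B B' : List ℕ}, (∀ a ∈ A, a ≤ k) → (∀ a ∈ A', a ≤ k) →
    (∀ b ∈ B, k < b) → (∀ b ∈ B', k < b) →
    A ++ k :: B.map (· + 1) = A' ++ k :: B'.map (· + 1) → A = A' ∧ B = B' := by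
  intro A
  induction A with
  | nil =>
    intro A' B B' _ hA' hB hB' h
    cases A' with
    | nil =>
      simp only [List.nil_append, List.cons.injEq] at h
      exact ⟨rfl, List.map_injective_iff.2 (fun a b => by omega) h.2⟩
    | cons a' t' =>
      exfalso
      simp only [List.nil_append, List.cons_append, List.cons.injEq] at h
      obtain ⟨hk, h2⟩ := h
      subst hk
      have hmem : k ∈ t' ++ k :: B'.map (· + 1) := by simp
      rw [← h2] at hmem
      simp only [List.mem_map] at hmem
      obtain ⟨c, hc, hc2⟩ := hmem
      have := hB c hc
      omega
  | cons a t ih =>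
    intro A' B B' hA hA' hB hB' h
    cases A' with
    | nil =>
      exfalso
      simp only [List.nil_append, List.cons_append, List.cons.injEq] at h
      obtain ⟨hk, h2⟩ := h
      subst hk
      have hmem : a ∈ t ++ a :: B.map (· + 1) := by simp
      rw [h2] at hmem
      simp only [List.mem_map] at hmem
      obtain ⟨c, hc, hc2⟩ := hmem
      have := hB' c hc
      omega
    | cons a' t' =>
      simp only [List.cons_append, List.cons.injEq] at h
      obtain ⟨rfl, h2⟩ := h
      obtain ⟨h3, h4⟩ := ih (fun x hx => hA x (by simp [hx])) (fun x hx => hA' x (by simp [hx]))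
        hB hB' h2
      exact ⟨by rw [h3], h4⟩

lemma NF_right_cancel_gen {k : ℕ} {u v : NF} (h : u * gen k = v * gen k) : u = v := by
  obtain ⟨A, B, hsplit, h2, h3⟩ := exists_le_gt_split k u.2
  obtain ⟨A', B', hsplit', h2', h3'⟩ := exists_le_gt_split k v.2
  have hu2 := u.2
  have hv2 := v.2
  rw [hsplit] at hu2
  rw [hsplit'] at hv2
  have hA : A.Pairwise (· ≤ ·) := hu2.sublist (List.sublist_append_left A B)
  have hB : B.Pairwise (· ≤ ·) := hu2.sublist (List.sublist_append_right A B)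
  have hA' : A'.Pairwise (· ≤ ·) := hv2.sublist (List.sublist_append_left A' B')
  have hB' : B'.Pairwise (· ≤ ·) := hv2.sublist (List.sublist_append_right A' B')
  have heq : A ++ k :: B.map (· + 1) = A' ++ k :: B'.map (· + 1) := by
    have hval := congrArg Subtype.val h
    rw [NF_mul_val, NF_mul_val, hsplit, hsplit'] at hval
    rwa [show (gen k).1 = [k] from rfl, mulL_gen_formula hA hB h2 h3,
      mulL_gen_formula hA' hB' h2' h3'] at hval
  obtain ⟨e1, e2⟩ := split_unique h2 h2' h3 h3' heq
  apply Subtype.ext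
  rw [hsplit, hsplit', e1, e2]

lemma NF_right_cancel : ∀ (w : NF) {u v : NF}, u * w = v * w → u = v := by
  have key : ∀ (l : List ℕ) (hl : l.Pairwise (· ≤ ·)) {u v : NF},
      u * ⟨l, hl⟩ = v * ⟨l, hl⟩ → u = v := by
    intro l
    induction l with
    | nil =>
      intro hl u v h
      rw [NF_nil_eq_one, mul_one, mul_one] at h
      exact h
    | cons k t ih =>
      intro hl u v h
      rw [NF_cons k t hl, ← mul_assoc, ← mul_assoc] at h
      exact NF_right_cancel_gen (ih hl.of_cons h)
  intro w u v h
  exact key w.1 w.2 (by simpa using h)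

/-- Common right multiples: generator versus element. -/
lemma ore_gen : ∀ (l : List ℕ) (hl : l.Pairwise (· ≤ ·)) (i : ℕ),
    ∃ c d : NF, gen i * c = ⟨l, hl⟩ * d := by
  intro l
  induction l with
  | nil =>
    intro hl i
    refine ⟨1, gen i, ?_⟩
    rw [NF_nil_eq_one, mul_one, one_mul]
  | cons j t ih =>
    intro hl i
    rcases Nat.lt_trichotomy i j with hij | rfl | hij
    · obtain ⟨c, d, hcd⟩ := ih hl.of_cons i
      refine ⟨gen (j + 1) * c, d, ?_⟩
      rw [NF_cons, mul_assoc, ← hcd, ← mul_assoc, ← mul_assoc, ← gen_rel hij]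
    · refine ⟨⟨t, hl.of_cons⟩, 1, ?_⟩
      rw [NF_cons, mul_one]
    · obtain ⟨c, d, hcd⟩ := ih hl.of_cons (i + 1)
      refine ⟨gen j * c, d, ?_⟩
      rw [NF_cons, mul_assoc, ← hcd, ← mul_assoc, ← mul_assoc, ← gen_rel hij]

lemma ore_pair (a b : NF) : ∃ c d : NF, a * c = b * d := by
  have key : ∀ (l : List ℕ) (hl : l.Pairwise (· ≤ ·)) (b : NF),
      ∃ c d : NF, (⟨l, hl⟩ : NF) * c = b * d := by
    intro l
    induction l with
    | nil =>
      intro hl b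
      refine ⟨b, 1, ?_⟩
      rw [NF_nil_eq_one, one_mul, mul_one]
    | cons i t ih =>
      intro hl b
      obtain ⟨c1, d1, h1⟩ := ore_gen b.1 b.2 i
      rw [Subtype.coe_eta] at h1
      obtain ⟨u, v, h2⟩ := ih hl.of_cons c1
      refine ⟨u, d1 * v, ?_⟩
      rw [NF_cons, mul_assoc, h2, ← mul_assoc, h1, mul_assoc]
  obtain ⟨c, d, h⟩ := key a.1 a.2 b
  rw [Subtype.coe_eta] at h
  exact ⟨c, d, h⟩

/-! ### The relations hold in Thompson's group -/

lemma x_relator_eq_one {i j : ℕ} (h : i < j) :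
    (x i)⁻¹ * x j * x i * (x (j + 1))⁻¹ = 1 := by
  have hr : ((FreeGroup.of i)⁻¹ * FreeGroup.of j * FreeGroup.of i * (FreeGroup.of (j + 1))⁻¹)
      ∈ Subgroup.normalClosure thompsonGroupRels :=
    Subgroup.subset_normalClosure ⟨i, j, h, rfl⟩
  have h2 : PresentedGroup.mk thompsonGroupRels
      ((FreeGroup.of i)⁻¹ * FreeGroup.of j * FreeGroup.of i * (FreeGroup.of (j + 1))⁻¹) = 1 :=
    (QuotientGroup.eq_one_iff _).2 hr
  simp only [map_mul, map_inv] at h2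
  exact h2

lemma x_rel {i j : ℕ} (h : i < j) : x j * x i = x i * x (j + 1) := by
  have h1 := x_relator_eq_one h
  rw [mul_inv_eq_one] at h1
  calc x j * x i = x i * ((x i)⁻¹ * x j * x i) := by group
  _ = x i * x (j + 1) := by rw [h1]

/-! ### The monoid homomorphism from `NF` to `ThompsonF` -/

def toF : List ℕ → ThompsonF
  | [] => 1
  | i :: t => x i * toF t

lemma toF_insL (l : List ℕ) : ∀ i, toF (insL i l) = x i * toF l := by
  induction l with
  | nil => intro i; simp [insL, toF]
  | cons j t ih =>
    intro i
    by_cases hij : i ≤ j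
    · rw [insL_of_le hij]; rfl
    · rw [insL_of_gt (Nat.not_le.1 hij)]
      show x j * toF (insL (i + 1) t) = x i * (x j * toF t)
      rw [ih (i + 1), ← mul_assoc, ← mul_assoc, x_rel (Nat.not_le.1 hij)]

lemma toF_mulL (u v : List ℕ) : toF (mulL u v) = toF u * toF v := by
  induction u with
  | nil => simp [toF]
  | cons i t ih =>
    rw [mulL_cons, toF_insL, ih]
    show _ = x i * toF t * (toF v)
    rw [mul_assoc]

def θ : NF →* ThompsonF where
  toFun m := toF m.1
  map_one' := rfl
  map_mul' a b := toF_mulL a.1 b.1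

lemma θ_gen (i : ℕ) : θ (gen i) = x i := by
  show x i * 1 = x i
  rw [mul_one]

lemma θ_apply (m : NF) : θ m = toF m.1 := rfl

/-- Custom induction principle for `NF`. -/
lemma NF_induction {P : NF → Prop} (h1 : P 1) (hg : ∀ (i : ℕ) (t : NF), P t → P (gen i * t)) :
    ∀ m : NF, P m := by
  rintro ⟨l, hl⟩
  induction l with
  | nil => exact h1
  | cons i t ih =>
    rw [NF_cons]
    exact hg i _ (ih _)

lemma theta_mem_S (m : NF) : θ m ∈ ThompsonSemigroup := by
  induction m using NF_induction with
  | h1 => rw [map_one]; exact one_mem _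
  | hg i t ih =>
    rw [map_mul, θ_gen]
    exact mul_mem (Submonoid.subset_closure ⟨i, rfl⟩) ih

lemma mem_S_iff {a : ThompsonF} : a ∈ ThompsonSemigroup ↔ ∃ m : NF, θ m = a := by
  constructor
  · intro ha
    induction ha using Submonoid.closure_induction with
    | mem b hb =>
      obtain ⟨i, rfl⟩ := hb
      exact ⟨gen i, θ_gen i⟩
    | one => exact ⟨1, map_one θ⟩
    | mul b c _ _ ihb ihc =>
      obtain ⟨mb, rfl⟩ := ihb
      obtain ⟨mc, rfl⟩ := ihc
      exact ⟨mb * mc, map_mul θ mb mc⟩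
  · rintro ⟨m, rfl⟩
    exact theta_mem_S m

/-! ### Ore localization of the opposite monoid, and injectivity of `θ` -/

lemma ore_ex (r s : MulOpposite NF) : ∃ p : MulOpposite NF × MulOpposite NF,
    p.2 * r = p.1 * s := by
  obtain ⟨c, d, h⟩ := ore_pair r.unop s.unop
  refine ⟨(MulOpposite.op d, MulOpposite.op c), ?_⟩
  apply MulOpposite.unop_injective
  simpa using h

noncomputable instance : OreLocalization.OreSet (⊤ : Submonoid (MulOpposite NF)) where
  ore_right_cancel r₁ r₂ s h := by
    refine ⟨1, ?_⟩
    have h' : s.1.unop * r₁.unop = s.1.unop * r₂.unop := by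
      have := congrArg MulOpposite.unop h
      simpa using this
    have : r₁ = r₂ := MulOpposite.unop_injective (NF_left_cancel _ h')
    rw [this]
  oreNum r s := (ore_ex r s.1).choose.1
  oreDenom r s := ⟨(ore_ex r s.1).choose.2, trivial⟩
  ore_eq r s := (ore_ex r s.1).choose_spec

noncomputable abbrev OT : Type :=
  OreLocalization (⊤ : Submonoid (MulOpposite NF)) (MulOpposite NF)

noncomputable def ν : MulOpposite NF →* OT := OreLocalization.numeratorHom

lemma ν_injective : Function.Injective ν := by
  intro a b h
  rw [ν, OreLocalization.numeratorHom_apply, OreLocalization.numeratorHom_apply,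
    OreLocalization.oreDiv_eq_iff] at h
  obtain ⟨u, v, h1, h2⟩ := h
  have hu : (u : MulOpposite NF) = v := by simpa using h2
  rw [← hu] at h1
  have h1' : (u : MulOpposite NF) * b = (u : MulOpposite NF) * a := by simpa [Submonoid.smul_def] using h1
  have h2' : b.unop * (u : MulOpposite NF).unop = a.unop * (u : MulOpposite NF).unop := by
    have := congrArg MulOpposite.unop h1'
    simpa using this
  exact (MulOpposite.unop_injective (NF_right_cancel _ h2')).symm

noncomputable def xu (i : ℕ) : Units OT :=
  OreLocalization.numeratorUnit ⟨MulOpposite.op (gen i), trivial⟩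

lemma xu_val (i : ℕ) : (xu i : OT) = ν (MulOpposite.op (gen i)) := rfl

lemma xu_rel {i j : ℕ} (h : i < j) : xu i * xu j = xu (j + 1) * xu i := by
  apply Units.ext
  show ν (MulOpposite.op (gen i)) * ν (MulOpposite.op (gen j)) =
    ν (MulOpposite.op (gen (j + 1))) * ν (MulOpposite.op (gen i))
  rw [← map_mul, ← map_mul]
  congr 1
  apply MulOpposite.unop_injective
  simpa using gen_rel h

lemma rels_hold : ∀ r ∈ thompsonGroupRels,
    FreeGroup.lift (fun i => (xu i)⁻¹) r = 1 := by
  rintro r ⟨i, j, hij, rfl⟩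
  simp only [map_mul, map_inv, FreeGroup.lift_apply_of]
  have key := xu_rel hij
  have h2 : xu j = (xu i)⁻¹ * xu (j + 1) * xu i := by
    rw [mul_assoc, ← key, inv_mul_cancel_left]
  rw [h2]
  group

noncomputable def ρ : ThompsonF →* Units OT := PresentedGroup.toGroup rels_hold

lemma ρ_x (i : ℕ) : ρ (x i) = (xu i)⁻¹ := PresentedGroup.toGroup.of rels_hold

lemma rho_theta (m : NF) : ∃ w : Units OT, ρ (θ m) = w⁻¹ ∧
    (w : OT) = ν (MulOpposite.op m) := by
  induction m using NF_induction with
  | h1 =>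
    refine ⟨1, ?_, ?_⟩
    · rw [map_one, map_one, inv_one]
    · rw [MulOpposite.op_one, map_one, Units.val_one]
  | hg i t ih =>
    obtain ⟨w, hw1, hw2⟩ := ih
    refine ⟨w * xu i, ?_, ?_⟩
    · rw [map_mul, map_mul, θ_gen, ρ_x i, hw1, mul_inv_rev]
    · rw [Units.val_mul, hw2, xu_val, ← map_mul, MulOpposite.op_mul]

lemma theta_injective : Function.Injective θ := by
  intro a b h
  obtain ⟨wa, ha1, ha2⟩ := rho_theta a
  obtain ⟨wb, hb1, hb2⟩ := rho_theta b
  have : wa⁻¹ = wb⁻¹ := by rw [← ha1, ← hb1, h]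
  have hww : wa = wb := inv_injective this
  have : ν (MulOpposite.op a) = ν (MulOpposite.op b) := by rw [← ha2, ← hb2, hww]
  exact MulOpposite.op_injective (ν_injective this)

/-! ### Computation of iterated insertions -/

lemma insL_formula : ∀ (P : List ℕ) (v : ℕ) (Q : List ℕ),
    (∀ (t : ℕ) (ht : t < P.length), P[t] < v + t) →
    (∀ q ∈ Q.head?, v + P.length ≤ q) →
    insL v (P ++ Q) = P ++ (v + P.length) :: Q := by
  intro P
  induction P with
  | nil =>
    intro v Q _ hstop
    cases Q with
    | nil => simp [insL]
    | cons q t =>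
      have hq : v ≤ q := by simpa using hstop q
      simpa using insL_of_le hq t
  | cons e P' ih =>
    intro v Q hpass hstop
    have he : e < v := by exact hpass 0 (by simp)
    rw [List.cons_append, insL_of_gt he]
    have h1 := ih (v + 1) Q (fun t ht => by
      have := hpass (t + 1) (by simpa using Nat.succ_lt_succ ht)
      simpa [Nat.add_assoc, Nat.add_comm 1 t] using this)
      (fun q hq => by have := hstop q hq; simp at this ⊢; omega)
    rw [h1]
    have h2 : v + 1 + P'.length = v + (e :: P').length := by simp; omega
    rw [h2]
    simp

lemma insL_inversion : ∀ (l : List ℕ) (v : ℕ), ∃ P Q : List ℕ, l = P ++ Q ∧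
    insL v l = P ++ (v + P.length) :: Q ∧
    (∀ (t : ℕ) (ht : t < P.length), P[t] < v + t) ∧
    (∀ q ∈ Q.head?, v + P.length ≤ q) := by
  intro l
  induction l with
  | nil =>
    intro v
    exact ⟨[], [], by simp, by simp [insL], by simp, by intro q hq; simp at hq⟩
  | cons j t ih =>
    intro v
    by_cases hvj : v ≤ j
    · refine ⟨[], j :: t, by simp, ?_, by simp, ?_⟩
      · rw [insL_of_le hvj]; simp
      · intro q hq
        have h6 : j = q := by simpa using hq
        simp only [List.length_nil]
        omega
    · obtain ⟨P', Q', h1, h2, h3, h4⟩ := ih (v + 1)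
      refine ⟨j :: P', Q', by simp [h1], ?_, ?_, ?_⟩
      · rw [insL_of_gt (Nat.not_le.1 hvj), h2]
        have h5 : v + 1 + P'.length = v + (j :: P').length := by simp; omega
        rw [h5]
        simp
      · intro s hs
        cases s with
        | zero => simpa using Nat.not_le.1 hvj
        | succ s' =>
          have := h3 s' (by simpa using Nat.succ_lt_succ_iff.1 hs)
          simp at this ⊢
          omega
      · intro q hq
        have := h4 q hq
        simp at this ⊢
        omega

lemma insL_iterate_formula (v : ℕ) (P Q : List ℕ)
    (hpass : ∀ (t : ℕ) (ht : t < P.length), P[t] < v + t)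
    (hstop : ∀ q ∈ Q.head?, v + P.length ≤ q) :
    ∀ n : ℕ, (insL v)^[n] (P ++ Q) = P ++ List.replicate n (v + P.length) ++ Q := by
  intro n
  induction n with
  | zero => simp
  | succ m ihm =>
    rw [Function.iterate_succ_apply', ihm]
    have hstop2 : ∀ q ∈ (List.replicate m (v + P.length) ++ Q).head?, v + P.length ≤ q := by
      cases m with
      | zero => simpa using hstop
      | succ m' => intro q hq; simp [List.replicate_succ] at hq; omega
    have := insL_formula P v (List.replicate m (v + P.length) ++ Q) hpass hstop2
    rw [← List.append_assoc] at this
    rw [this, List.replicate_succ]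
    simp

lemma insL_iterate_inversion (m : ℕ) (l : List ℕ) (v : ℕ) :
    ∃ P Q : List ℕ, l = P ++ Q ∧
    (insL v)^[m + 1] l = P ++ List.replicate (m + 1) (v + P.length) ++ Q ∧
    (∀ (t : ℕ) (ht : t < P.length), P[t] < v + t) ∧
    (∀ q ∈ Q.head?, v + P.length ≤ q) := by
  obtain ⟨P, Q, h1, h2, h3, h4⟩ := insL_inversion l v
  refine ⟨P, Q, h1, ?_, h3, h4⟩
  rw [Function.iterate_succ_apply, h1]
  have e1 : insL v (P ++ Q) = P ++ ((v + P.length) :: Q) := by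
    rw [← h1, h2]
  rw [e1]
  have := insL_iterate_formula v P ((v + P.length) :: Q) h3 (by simp) m
  rw [this]
  rw [List.append_assoc, List.append_assoc]
  congr 1
  rw [List.replicate_succ', List.append_assoc]
  simp

/-- `insL v` jumps over a block of ones, picking up `+1` for each. -/
lemma insL_replicate_one (v : ℕ) (hv : 2 ≤ v) : ∀ (n : ℕ) (Z : List ℕ),
    insL v (List.replicate n 1 ++ Z) = List.replicate n 1 ++ insL (v + n) Z := by
  intro n
  induction n generalizing v with
  | zero => simp
  | succ m ihm =>
    intro Z
    rw [List.replicate_succ, List.cons_append, insL_of_gt (by omega : 1 < v),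
      ihm (v + 1) (by omega) Z]
    have h2 : v + 1 + m = v + (m + 1) := by omega
    rw [h2]
    simp

/-- Right multiplication by `gen 1 ^ n`, explicitly. -/
lemma mulL_replicate_one_formula (n : ℕ) : ∀ (A B : List ℕ), (A ++ B).Pairwise (· ≤ ·) →
    (∀ a ∈ A, a ≤ 1) → (∀ b ∈ B, 2 ≤ b) →
    mulL (A ++ B) (List.replicate n 1) =
      A ++ List.replicate n 1 ++ B.map (· + n) := by
  have base : ∀ (B : List ℕ), B.Pairwise (· ≤ ·) → (∀ b ∈ B, 2 ≤ b) →
      mulL B (List.replicate n 1) = List.replicate n 1 ++ B.map (· + n) := by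
    intro B
    induction B with
    | nil => intro _ _; simp [mulL_one (List.Pairwise.nil)]
    | cons e B' ihB =>
      intro hs hB
      rw [List.pairwise_cons] at hs
      rw [mulL_cons, ihB hs.2 (fun b hb => hB b (by simp [hb])),
        insL_replicate_one (e) (hB e (by simp)) n]
      have : insL (e + n) (B'.map (· + n)) = (e + n) :: B'.map (· + n) := by
        refine insL_eq_cons ?_
        intro c hc
        simp only [List.mem_map] at hc
        obtain ⟨b, hb, rfl⟩ := hc
        have := hs.1 b hb
        omega
      rw [this]
      simp
  intro A
  induction A with
  | nil =>
    intro B hs _ hB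
    simp only [List.nil_append] at hs ⊢
    exact base B hs hB
  | cons a A' ihA =>
    intro B hs hA hB
    rw [List.cons_append, List.pairwise_cons] at hs
    rw [List.cons_append, mulL_cons,
      ihA B hs.2 (fun y hy => hA y (by simp [hy])) hB]
    have : insL a (A' ++ List.replicate n 1 ++ B.map (· + n)) =
        a :: (A' ++ List.replicate n 1 ++ B.map (· + n)) := by
      refine insL_eq_cons ?_
      intro c hc
      have ha1 : a ≤ 1 := hA a (by simp)
      rcases List.mem_append.1 hc with hc | hc
      · rcases List.mem_append.1 hc with hc | hc
        · exact hs.1 c (by simp [hc])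
        · have := List.eq_of_mem_replicate hc; omega
      · simp only [List.mem_map] at hc
        obtain ⟨b, hb, rfl⟩ := hc
        have := hB b hb
        omega
    rw [this]
    simp

/-! ### values of products in `NF` -/

lemma pow_gen_one_val (n : ℕ) : ((gen 1) ^ n : NF).1 = List.replicate n 1 := by
  induction n with
  | zero => rfl
  | succ m ih =>
    rw [pow_succ']
    show insL 1 ((gen 1 ^ m : NF)).1 = _
    rw [ih, insL_eq_cons (fun a ha => by have := List.eq_of_mem_replicate ha; omega)]
    simp [List.replicate_succ]

lemma pow_gen_one_mul_val (n : ℕ) (u : NF) :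
    ((gen 1) ^ n * u : NF).1 = (insL 1)^[n] u.1 := by
  induction n with
  | zero => simp
  | succ m ih =>
    rw [pow_succ', mul_assoc]
    show insL 1 ((gen 1 ^ m * u : NF)).1 = _
    rw [ih, Function.iterate_succ_apply']

lemma insL_zero (l : List ℕ) : insL 0 l = 0 :: l :=
  insL_eq_cons (fun _ _ => Nat.zero_le _)

/-! ### The main combinatorial lemma -/

lemma main_comb (n : ℕ) (Y X : NF) (heq : gen 1 ^ n * Y = X * gen 1 ^ n)
    (h0 : ∃ w : NF, X = gen 0 * w) : ∃ u : NF, X = gen 1 ^ n * u := by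
  cases n with
  | zero => exact ⟨X, by rw [pow_zero, one_mul]⟩
  | succ m =>
    set M := m + 1 with hM
    obtain ⟨w0, hw0⟩ := h0
    have hXhead : X.1 = 0 :: w0.1 := by
      rw [hw0, gen_mul_val, insL_zero]
    obtain ⟨A, B, hAB, hA, hB⟩ := exists_le_gt_split 1 X.2
    have hsAB : (A ++ B).Pairwise (· ≤ ·) := by rw [← hAB]; exact X.2
    -- A starts with 0
    obtain ⟨A'', hA0⟩ : ∃ A'', A = 0 :: A'' := by
      cases A with
      | nil =>
        exfalso
        have : (0 : ℕ) ∈ B := by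
          rw [← List.nil_append B, ← hAB, hXhead]; simp
        have := hB 0 this
        omega
      | cons a A'' =>
        refine ⟨A'', ?_⟩
        have : X.1 = a :: (A'' ++ B) := by rw [hAB]; simp
        rw [hXhead] at this
        simp only [List.cons.injEq] at this
        rw [this.1]
    -- the value equation
    have hval : (insL 1)^[M] Y.1 = A ++ List.replicate M 1 ++ B.map (· + M) := by
      have hv := congrArg Subtype.val heq
      rw [pow_gen_one_mul_val, NF_mul_val, pow_gen_one_val, hAB,
        mulL_replicate_one_formula M A B hsAB hA (fun b hb => by have := hB b hb; omega)] at hv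
      exact hv
    obtain ⟨P, Q, hYPQ, hIT, hpass, hstop⟩ := insL_iterate_inversion m Y.1 1
    rw [hval] at hIT
    -- star: A ++ 1^M ++ (B+M) = P ++ w^M ++ Q  with  w := 1 + P.length
    have star : (A ++ List.replicate M 1) ++ B.map (· + M)
        = P ++ (List.replicate M (1 + P.length) ++ Q) := by
      rw [← List.append_assoc, ← hIT, List.append_assoc]
    -- P is nonempty, i.e. w ≥ 2
    have hw2 : 2 ≤ 1 + P.length := by
      cases P with
      | cons p P' => simp; omega
      | nil =>
        exfalso
        have := congrArg List.head? star
        rw [hA0] at this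
        simp [hM, List.replicate_succ] at this
    -- length bound
    have hstarlen := congrArg List.length star
    simp only [List.length_append, List.length_replicate, List.length_map] at hstarlen
    have hlen : A.length + M ≤ P.length := by
      by_contra hcon
      push_neg at hcon
      have hidxL : P.length < (A ++ List.replicate M 1).length := by
        simp only [List.length_append, List.length_replicate]; omega
      have hidxR : P.length < (P ++ (List.replicate M (1 + P.length) ++ Q)).length := by
        simp only [List.length_append, List.length_replicate]
        omega
      have e1 : (P ++ (List.replicate M (1 + P.length) ++ Q))[P.length]'hidxR
          = 1 + P.length := by
        rw [List.getElem_append_right (Nat.le_refl P.length)]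
        simp only [Nat.sub_self]
        rw [List.getElem_append_left (by simp [hM] : 0 < (List.replicate M (1 + P.length)).length)]
        simp
      have hidxR' : P.length < ((A ++ List.replicate M 1) ++ B.map (· + M)).length := by
        simp only [List.length_append, List.length_replicate, List.length_map]; omega
      have e2 : ((A ++ List.replicate M 1) ++ B.map (· + M))[P.length]'hidxR' ≤ 1 := by
        rw [List.getElem_append_left hidxL]
        have hmem : (A ++ List.replicate M 1)[P.length]'hidxL ∈ A ++ List.replicate M 1 :=
          List.getElem_mem hidxL
        rcases List.mem_append.1 hmem with hc | hc
        · exact hA _ hc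
        · have := List.eq_of_mem_replicate hc; omega
      have e3 := List.getElem_of_eq star.symm hidxR
      rw [e1] at e3
      rw [← e3] at e2
      omega
    set k := A.length + M with hk
    -- extract the structure of P
    have hP1 : P.take k = A ++ List.replicate M 1 := by
      have h := congrArg (List.take k) star
      rw [List.take_append_of_le_length hlen] at h
      rw [List.take_left' (by simp [hk])] at h
      exact h.symm
    have hP2 : P.drop k ++ (List.replicate M (1 + P.length) ++ Q) = B.map (· + M) := by
      have h := congrArg (List.drop k) star
      rw [List.drop_append_of_le_length hlen] at h
      rw [List.drop_left' (by simp [hk])] at h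
      exact h.symm
    set P₂ := P.drop k with hP₂
    set q := P₂.length with hq
    have hPdecomp : P = (A ++ List.replicate M 1) ++ P₂ := by
      rw [← hP1, hP₂, List.take_append_drop]
    have hPlen : P.length = k + q := by
      conv_lhs => rw [hPdecomp]
      simp only [List.length_append, List.length_replicate]
      rfl
    have hqB : q + M + Q.length = B.length := by
      have := congrArg List.length hP2
      simp only [List.length_append, List.length_replicate, List.length_map] at this
      omega
    -- split B
    set B₁ := B.take q with hB₁
    set Brest := B.drop q with hBrest
    set Bm := Brest.take M with hBm
    set B₂ := Brest.drop M with hB₂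
    have hBsplit : B = B₁ ++ (Bm ++ B₂) := by
      rw [hB₁, hBm, hB₂, hBrest, List.take_append_drop, List.take_append_drop]
    have hB1map : P₂ = B₁.map (· + M) := by
      have h := congrArg (List.take q) hP2
      rw [List.take_left' rfl] at h
      rw [h, hB₁, List.map_take]
    have hrest : List.replicate M (1 + P.length) ++ Q = Brest.map (· + M) := by
      have h := congrArg (List.drop q) hP2
      rw [List.drop_left' rfl] at h
      rw [h, hBrest, List.map_drop]
    have hBmmap : List.replicate M (1 + P.length) = Bm.map (· + M) := by
      have h := congrArg (List.take M) hrest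
      rw [List.take_left' (by simp)] at h
      rw [h, hBm, List.map_take]
    have hB2map : Q = B₂.map (· + M) := by
      have h := congrArg (List.drop M) hrest
      rw [List.drop_left' (by simp)] at h
      rw [h]
      simp [hB₂, hBrest, List.map_drop]
    set w₀ := 1 + A.length + q with hw₀
    have hBmval : Bm = List.replicate M w₀ := by
      have hinj : Function.Injective (fun a : ℕ => a + M) := fun a b h => by simpa using h
      apply List.map_injective_iff.2 hinj
      rw [← hBmmap, List.map_replicate]
      congr 1
      rw [hPlen, hk, hw₀]
      omega
    -- the quotient element u
    have hsu : (A ++ (B₁ ++ B₂)).Pairwise (· ≤ ·) := by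
      have hsub : List.Sublist (A ++ (B₁ ++ B₂)) (A ++ (B₁ ++ (Bm ++ B₂))) :=
        List.Sublist.append_left (List.Sublist.append_left (List.sublist_append_right Bm B₂) B₁) A
      refine List.Pairwise.sublist ?_ hsAB
      rwa [← hBsplit] at hsub
    refine ⟨⟨A ++ (B₁ ++ B₂), hsu⟩, ?_⟩
    apply Subtype.ext
    rw [pow_gen_one_mul_val]
    show X.1 = (insL 1)^[M] (A ++ (B₁ ++ B₂))
    have hB1len : B₁.length = q := by
      rw [hB₁]
      simp
      omega
    have hABlen : (A ++ B₁).length = A.length + q := by simp [hB1len]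
    have hpass' : ∀ (t : ℕ) (ht : t < (A ++ B₁).length), (A ++ B₁)[t] < 1 + t := by
      intro t ht
      have htlen : t < A.length + q := by rw [← hABlen]; exact ht
      by_cases htA : t < A.length
      · have eg : (A ++ B₁)[t]'ht = A[t]'htA := List.getElem_append_left htA
        cases t with
        | zero =>
          have h00 : A[0]'htA = 0 := by
            have := List.getElem_of_eq hA0 htA
            simpa using this
          omega
        | succ t' =>
          have hmemA : A[t' + 1]'htA ≤ 1 := hA _ (List.getElem_mem htA)
          omega
      · push_neg at htA
        have hsq : t - A.length < B₁.length := by rw [hB1len]; omega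
        set b := B₁[t - A.length]'hsq with hbdef
        have hb : B₁[t - A.length]? = some b := List.getElem?_eq_getElem hsq
        have eg : (A ++ B₁)[t]? = some b := by
          rw [List.getElem?_append_right htA, hb]
        have hkP : k + (t - A.length) < P.length := by rw [hPlen]; omega
        have hPq : P[k + (t - A.length)]? = some (b + M) := by
          rw [hPdecomp]
          rw [List.getElem?_append_right
            (by simp [hk] : (A ++ List.replicate M 1).length ≤ k + (t - A.length))]
          have hidx : k + (t - A.length) - (A ++ List.replicate M 1).length = t - A.length := by
            simp [hk]
          rw [hidx, hB1map, List.getElem?_map, hb]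
          rfl
        have hPv : P[k + (t - A.length)]'hkP = b + M := by
          have h5 : P[k + (t - A.length)]? = some (P[k + (t - A.length)]'hkP) :=
            List.getElem?_eq_getElem hkP
          rw [hPq] at h5
          exact (Option.some.injEq _ _ ▸ h5.symm :)
        have hPval := hpass (k + (t - A.length)) hkP
        have egv : (A ++ B₁)[t]'ht = b := by
          have h6 : (A ++ B₁)[t]? = some ((A ++ B₁)[t]'ht) := List.getElem?_eq_getElem ht
          rw [eg] at h6
          exact (Option.some.injEq _ _ ▸ h6 :).symm
        omega
    have hstop' : ∀ z ∈ B₂.head?, 1 + (A ++ B₁).length ≤ z := by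
      intro z hz
      cases hB2 : B₂ with
      | nil => rw [hB2] at hz; simp at hz
      | cons b t =>
        rw [hB2] at hz
        have hzb : b = z := by simpa using hz
        have hQ : (b + M) ∈ Q.head? := by
          rw [hB2map, hB2]
          simp
        have := hstop _ hQ
        rw [hABlen]
        rw [hPlen] at this
        omega
    have hform := insL_iterate_formula 1 (A ++ B₁) B₂ hpass' hstop' M
    rw [List.append_assoc] at hform
    rw [hform]
    rw [hAB, hBsplit, hABlen, hBmval]
    have : 1 + (A.length + q) = w₀ := by rw [hw₀]; omega
    rw [this]
    simp [List.append_assoc]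

/-! ### The main theorem -/

lemma x_mem_S (i : ℕ) : x i ∈ ThompsonSemigroup :=
  Submonoid.subset_closure ⟨i, rfl⟩

theorem conj_mem_iff_dvd (Xel : ThompsonF) (hX : Xel ∈ ThompsonSemigroup)
    (h0 : ∃ w ∈ ThompsonSemigroup, Xel = x 0 * w) (n : ℕ) :
    ((x 1)⁻¹ ^ n * Xel * (x 1) ^ n ∈ ThompsonSemigroup ↔
      ∃ w ∈ ThompsonSemigroup, Xel = (x 1) ^ n * w) := by
  constructor
  · intro hmem
    obtain ⟨mY, hmY⟩ := mem_S_iff.1 hmem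
    obtain ⟨w, hwS, hXw⟩ := h0
    obtain ⟨mw, rfl⟩ := mem_S_iff.1 hwS
    set mX : NF := gen 0 * mw with hmX
    have hθX : θ mX = Xel := by
      rw [hmX, map_mul, θ_gen, ← hXw]
    have heqF : θ (gen 1 ^ n * mY) = θ (mX * gen 1 ^ n) := by
      rw [map_mul, map_mul, map_pow, θ_gen, hθX, hmY]
      rw [inv_pow]
      group
    have heqM : gen 1 ^ n * mY = mX * gen 1 ^ n := theta_injective heqF
    obtain ⟨u, hu⟩ := main_comb n mY mX heqM ⟨mw, rfl⟩
    refine ⟨θ u, theta_mem_S u, ?_⟩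
    rw [← hθX, hu, map_mul, map_pow, θ_gen]
  · rintro ⟨w, hwS, rfl⟩
    have : (x 1)⁻¹ ^ n * ((x 1) ^ n * w) * (x 1) ^ n = w * (x 1) ^ n := by
      rw [inv_pow]
      group
    rw [this]
    exact mul_mem hwS (pow_mem (x_mem_S 1) n)

end ThompsonAux

/-- For `X ∈ S` with `X_0 ∣ X` and `n ∈ ℕ`: `X_1⁻ⁿ X X_1ⁿ` lies in `S`
(computed inside Thompson's group `F`) iff `X_1ⁿ` divides `X` in `S`. -/
theorem thompson_conj_mem_iff_dvd (Xel : ThompsonF) (hX : Xel ∈ ThompsonSemigroup)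
    (h0 : ∃ w ∈ ThompsonSemigroup, Xel = x 0 * w) (n : ℕ) :
    ((x 1)⁻¹ ^ n * Xel * (x 1) ^ n ∈ ThompsonSemigroup ↔
      ∃ w ∈ ThompsonSemigroup, Xel = (x 1) ^ n * w) :=
  ThompsonAux.conj_mem_iff_dvd Xel hX h0 n
end

section
/- Let X ∈ Thompson's semigroup S with X_0 | X, and let n ∈ ℕ. Then X_1^{n} X X_1^{-n} lies in S (computed inside Thompson's group F) if and only if X = Y X_1^{n} for some Y ∈ S. -/
namespace ThompsonAux

/-! ### Cantor space -/

abbrev C := ℕ → Bool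

def cns (b : Bool) (s : C) : C := fun n => Nat.casesOn n b s

@[simp] lemma cns_zero (b : Bool) (s : C) : cns b s 0 = b := rfl
@[simp] lemma cns_succ (b : Bool) (s : C) (n : ℕ) : cns b s (n + 1) = s n := rfl

def hd (s : C) : Bool := s 0
def tl (s : C) : C := fun n => s (n + 1)

@[simp] lemma hd_cns (b : Bool) (s : C) : hd (cns b s) = b := rfl
@[simp] lemma tl_cns (b : Bool) (s : C) : tl (cns b s) = s := rfl

lemma eta (s : C) : cns (hd s) (tl s) = s := by
  funext n; cases n <;> rfl

/-! ### The generators as permutations of Cantor space -/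

def F0 (s : C) : C :=
  if hd s then (if hd (tl s) then tl s else cns false (cns true (tl (tl s))))
  else cns false s

def G0 (s : C) : C :=
  if hd s then cns true s
  else (if hd (tl s) then cns true (cns false (tl (tl s))) else tl s)

def e0 : Equiv.Perm C where
  toFun := F0
  invFun := G0
  left_inv s := by
    cases h1 : hd s with
    | false => simp [F0, G0, h1]
    | true =>
      have e1 : cns true (tl s) = s := by rw [← h1]; exact eta s
      cases h2 : hd (tl s) with
      | false =>
        have e2 : cns false (tl (tl s)) = tl s := by rw [← h2]; exact eta (tl s)
        simp [F0, G0, h1, h2, e2, e1]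
      | true => simp [F0, G0, h1, h2, e1]
  right_inv s := by
    cases h1 : hd s with
    | true => simp [F0, G0, h1]
    | false =>
      have e1 : cns false (tl s) = s := by rw [← h1]; exact eta s
      cases h2 : hd (tl s) with
      | true =>
        have e2 : cns true (tl (tl s)) = tl s := by rw [← h2]; exact eta (tl s)
        simp [F0, G0, h1, h2, e2, e1]
      | false => simp [F0, G0, h1, h2, e1]

def liftE (φ : Equiv.Perm C) : Equiv.Perm C where
  toFun s := if hd s then cns true (φ (tl s)) else s
  invFun s := if hd s then cns true (φ.symm (tl s)) else s
  left_inv s := by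
    cases h : hd s with
    | false => simp [h]
    | true =>
      have e1 : cns true (tl s) = s := by rw [← h]; exact eta s
      simp [h, e1]
  right_inv s := by
    cases h : hd s with
    | false => simp [h]
    | true =>
      have e1 : cns true (tl s) = s := by rw [← h]; exact eta s
      simp [h, e1]

def eP : ℕ → Equiv.Perm C
  | 0 => e0
  | n + 1 => liftE (eP n)

lemma eP0_coe : ⇑(eP 0) = F0 := rfl

lemma e0_f (s : C) : eP 0 (cns false s) = cns false (cns false s) := by
  rw [eP0_coe]; simp [F0]

lemma e0_tf (s : C) : eP 0 (cns true (cns false s)) = cns false (cns true s) := by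
  rw [eP0_coe]; simp [F0]

lemma e0_tt (s : C) : eP 0 (cns true (cns true s)) = cns true s := by
  rw [eP0_coe]; simp [F0]

lemma e0_f' {s : C} (h : hd s = false) : eP 0 s = cns false s := by
  conv_lhs => rw [← eta s, h]
  rw [e0_f, ← h, eta]

lemma e0_symm_t (s : C) : (eP 0).symm (cns true s) = cns true (cns true s) := by
  rw [Equiv.symm_apply_eq, e0_tt]

lemma e0_symm_ff (s : C) : (eP 0).symm (cns false (cns false s)) = cns false s := by
  rw [Equiv.symm_apply_eq, e0_f]

lemma e0_symm_ft (s : C) : (eP 0).symm (cns false (cns true s)) = cns true (cns false s) := by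
  rw [Equiv.symm_apply_eq, e0_tf]

lemma ePsucc_coe (n : ℕ) :
    ⇑(eP (n + 1)) = fun s => if hd s then cns true (eP n (tl s)) else s := rfl

lemma eP_succ_t (n : ℕ) (s : C) : eP (n + 1) (cns true s) = cns true (eP n s) := by
  rw [ePsucc_coe]; simp

lemma eP_succ_f (n : ℕ) (s : C) : eP (n + 1) (cns false s) = cns false s := by
  rw [ePsucc_coe]; simp

lemma eP_succ_f' (n : ℕ) {s : C} (h : hd s = false) : eP (n + 1) s = s := by
  conv_lhs => rw [← eta s, h]
  rw [eP_succ_f, ← h, eta]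

lemma eP_succ_symm_t (n : ℕ) (s : C) :
    (eP (n + 1)).symm (cns true s) = cns true ((eP n).symm s) := by
  rw [Equiv.symm_apply_eq, eP_succ_t, Equiv.apply_symm_apply]

lemma eP_succ_symm_f (n : ℕ) (s : C) :
    (eP (n + 1)).symm (cns false s) = cns false s := by
  rw [Equiv.symm_apply_eq, eP_succ_f]

lemma eP_rel : ∀ i j : ℕ, i < j → ∀ s : C, (eP i).symm (eP j (eP i s)) = eP (j + 1) s := by
  intro i
  induction i with
  | zero =>
    intro j hj s
    obtain ⟨j', rfl⟩ : ∃ j', j = j' + 1 := ⟨j - 1, by omega⟩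
    conv_lhs => rw [← eta s]
    conv_rhs => rw [← eta s]
    cases h1 : hd s with
    | false =>
      simp only [e0_f, eP_succ_f, e0_symm_ff]
    | true =>
      conv_lhs => rw [← eta (tl s)]
      conv_rhs => rw [← eta (tl s)]
      cases h2 : hd (tl s) with
      | false =>
        simp only [e0_tf, eP_succ_f, eP_succ_t, e0_symm_ft]
      | true =>
        simp only [e0_tt, eP_succ_t, e0_symm_t]
  | succ i ih =>
    intro j hj s
    obtain ⟨j', rfl⟩ : ∃ j', j = j' + 1 := ⟨j - 1, by omega⟩
    have hij : i < j' := by omega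
    conv_lhs => rw [← eta s]
    conv_rhs => rw [← eta s]
    cases h1 : hd s with
    | false =>
      simp only [eP_succ_f, eP_succ_symm_f]
    | true =>
      simp only [eP_succ_t, eP_succ_symm_t, ih _ hij]

lemma permRel (i j : ℕ) (hij : i < j) : eP j * eP i = eP i * eP (j + 1) := by
  ext s
  rw [Equiv.Perm.mul_apply, Equiv.Perm.mul_apply, ← eP_rel i j hij s,
    Equiv.apply_symm_apply]

/-! ### The homomorphism `ThompsonF →* Perm C` -/

lemma hrels : ∀ r ∈ thompsonGroupRels, FreeGroup.lift eP r = 1 := by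
  rintro r ⟨i, j, hij, rfl⟩
  simp only [map_mul, map_inv, FreeGroup.lift_apply_of]
  rw [mul_inv_eq_one, mul_assoc, permRel i j hij, inv_mul_cancel_left]

def psi : ThompsonF →* Equiv.Perm C := PresentedGroup.toGroup hrels

lemma psi_x (k : ℕ) : psi (x k) = eP k := PresentedGroup.toGroup.of hrels

/-! ### Words -/

def wprod (l : List ℕ) : ThompsonF := (l.map x).prod

@[simp] lemma wprod_nil : wprod [] = 1 := rfl
@[simp] lemma wprod_cons (a : ℕ) (l : List ℕ) : wprod (a :: l) = x a * wprod l := by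
  simp [wprod]

lemma wprod_append (l l' : List ℕ) : wprod (l ++ l') = wprod l * wprod l' := by
  simp [wprod]

lemma wprod_replicate (n a : ℕ) : wprod (List.replicate n a) = x a ^ n := by
  simp [wprod]

lemma wprod_mem (l : List ℕ) : wprod l ∈ ThompsonSemigroup := by
  induction l with
  | nil => exact one_mem _
  | cons a l ih =>
    rw [wprod_cons]
    exact mul_mem (Submonoid.subset_closure (Set.mem_range_self a)) ih

lemma exists_word {g : ThompsonF} (h : g ∈ ThompsonSemigroup) : ∃ l : List ℕ, wprod l = g := by
  induction h using Submonoid.closure_induction with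
  | mem g hg => obtain ⟨i, rfl⟩ := hg; exact ⟨[i], by simp⟩
  | one => exact ⟨[], rfl⟩
  | mul g g' _ _ ih ih' =>
    obtain ⟨l, rfl⟩ := ih
    obtain ⟨l', rfl⟩ := ih'
    exact ⟨l ++ l', wprod_append l l'⟩

def fperm (l : List ℕ) : Equiv.Perm C := (l.map eP).prod

@[simp] lemma fperm_nil : fperm [] = 1 := rfl
@[simp] lemma fperm_cons (a : ℕ) (l : List ℕ) : fperm (a :: l) = eP a * fperm l := by
  simp [fperm]

lemma psi_wprod (l : List ℕ) : psi (wprod l) = fperm l := by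
  induction l with
  | nil => simp
  | cons a l ih => simp [psi_x, ih]

/-- The group relation, inside `ThompsonF`. -/
lemma xmul (i j : ℕ) (hij : i < j) : x j * x i = x i * x (j + 1) := by
  have hr : ((FreeGroup.of i)⁻¹ * FreeGroup.of j * FreeGroup.of i *
      (FreeGroup.of (j + 1))⁻¹ : FreeGroup ℕ) ∈ thompsonGroupRels := ⟨i, j, hij, rfl⟩
  have h2 : PresentedGroup.mk thompsonGroupRels
      ((FreeGroup.of i)⁻¹ * FreeGroup.of j * FreeGroup.of i * (FreeGroup.of (j + 1))⁻¹) = 1 :=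
    (QuotientGroup.eq_one_iff _).mpr (Subgroup.subset_normalClosure hr)
  simp only [map_mul, map_inv] at h2
  have h3 : (x i)⁻¹ * x j * x i * (x (j + 1))⁻¹ = 1 := h2
  rw [mul_inv_eq_one] at h3
  rw [← h3]
  group

/-! ### Normal forms -/

def insertL : ℕ → List ℕ → List ℕ
  | a, [] => [a]
  | a, c :: v => if a ≤ c then a :: c :: v else c :: insertL (a + 1) v

def nf (l : List ℕ) : List ℕ := l.foldr insertL []

@[simp] lemma nf_nil : nf [] = [] := rfl
lemma nf_cons (a : ℕ) (l : List ℕ) : nf (a :: l) = insertL a (nf l) := rfl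

lemma mem_insertL : ∀ (t : List ℕ) (a y : ℕ), y ∈ insertL a t → a ≤ y ∨ y ∈ t := by
  intro t
  induction t with
  | nil => intro a y hy; simp [insertL] at hy; omega
  | cons c v ih =>
    intro a y hy
    by_cases h : a ≤ c
    · simp [insertL, h] at hy
      rcases hy with rfl | rfl | hy
      · exact Or.inl le_rfl
      · exact Or.inr (by simp)
      · exact Or.inr (by simp [hy])
    · simp only [insertL, if_neg h, List.mem_cons] at hy
      rcases hy with rfl | hy
      · exact Or.inr (by simp)
      · rcases ih (a + 1) y hy with h' | h'
        · exact Or.inl (by omega)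
        · exact Or.inr (by simp [h'])

lemma insertL_subset : ∀ (t : List ℕ) (a y : ℕ), y ∈ t → y ∈ insertL a t := by
  intro t
  induction t with
  | nil => intro a y hy; simp at hy
  | cons c v ih =>
    intro a y hy
    by_cases h : a ≤ c
    · simp only [insertL, if_pos h, List.mem_cons]
      rcases List.mem_cons.mp hy with rfl | hy
      · exact Or.inr (Or.inl rfl)
      · exact Or.inr (Or.inr hy)
    · simp only [insertL, if_neg h, List.mem_cons]
      rcases List.mem_cons.mp hy with rfl | hy
      · exact Or.inl rfl
      · exact Or.inr (ih (a + 1) y hy)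

lemma sorted_insertL : ∀ (t : List ℕ) (a : ℕ),
    t.Pairwise (· ≤ ·) → (insertL a t).Pairwise (· ≤ ·) := by
  intro t
  induction t with
  | nil => intro a _; simp [insertL]
  | cons c v ih =>
    intro a ht
    rw [List.pairwise_cons] at ht
    by_cases h : a ≤ c
    · simp only [insertL, if_pos h, List.pairwise_cons]
      refine ⟨?_, ?_⟩
      · intro b hb
        rcases List.mem_cons.mp hb with rfl | hb
        · exact h
        · exact le_trans h (ht.1 b hb)
      · exact ht
    · simp only [insertL, if_neg h, List.pairwise_cons]
      refine ⟨?_, ih (a + 1) ht.2⟩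
      intro b hb
      rcases mem_insertL v (a + 1) b hb with h' | h'
      · omega
      · exact ht.1 b h'

lemma nf_sorted (l : List ℕ) : (nf l).Pairwise (· ≤ ·) := by
  induction l with
  | nil => simp
  | cons a l ih => rw [nf_cons]; exact sorted_insertL _ a ih

lemma count1_insertL : ∀ (t : List ℕ) (a : ℕ), 2 ≤ a →
    (insertL a t).count 1 = t.count 1 := by
  intro t
  induction t with
  | nil =>
    intro a ha
    simp only [insertL]
    rw [List.count_cons, List.count_nil]
    have hne : ¬(a == 1) = true := by simp; omega
    simp [hne]
  | cons c v ih =>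
    intro a ha
    by_cases h : a ≤ c
    · simp only [insertL, if_pos h]
      rw [List.count_cons, List.count_cons (b := c)]
      have : ¬(a = 1) := by omega
      simp [this]
    · simp only [insertL, if_neg h]
      rw [List.count_cons, List.count_cons (b := c), ih (a + 1) (by omega)]

lemma count_le_insertL : ∀ (t : List ℕ) (a b : ℕ), t.count b ≤ (insertL a t).count b := by
  intro t
  induction t with
  | nil => intro a b; simp
  | cons c v ih =>
    intro a b
    by_cases h : a ≤ c
    · simp only [insertL, if_pos h]
      rw [List.count_cons, List.count_cons, List.count_cons]
      have := List.count_nil (a := b)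
      omega
    · simp only [insertL, if_neg h]
      rw [List.count_cons, List.count_cons]
      have := ih (a + 1) b
      omega

lemma fperm_insertL : ∀ (t : List ℕ) (a : ℕ), fperm (insertL a t) = fperm (a :: t) := by
  intro t
  induction t with
  | nil => intro a; rfl
  | cons c v ih =>
    intro a
    by_cases h : a ≤ c
    · simp [insertL, h]
    · simp only [insertL, if_neg h, fperm_cons]
      rw [ih (a + 1)]
      simp only [fperm_cons]
      rw [← mul_assoc, ← mul_assoc, ← permRel c a (by omega)]

lemma wprod_insertL : ∀ (t : List ℕ) (a : ℕ), wprod (insertL a t) = wprod (a :: t) := by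
  intro t
  induction t with
  | nil => intro a; rfl
  | cons c v ih =>
    intro a
    by_cases h : a ≤ c
    · simp [insertL, h]
    · simp only [insertL, if_neg h, wprod_cons]
      rw [ih (a + 1)]
      simp only [wprod_cons]
      rw [← mul_assoc, ← mul_assoc, ← xmul c a (by omega)]

lemma fperm_nf (l : List ℕ) : fperm (nf l) = fperm l := by
  induction l with
  | nil => rfl
  | cons a l ih => rw [nf_cons, fperm_insertL, fperm_cons, fperm_cons, ih]

lemma wprod_nf (l : List ℕ) : wprod (nf l) = wprod l := by
  induction l with
  | nil => rfl
  | cons a l ih => rw [nf_cons, wprod_insertL, wprod_cons, wprod_cons, ih]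

/-! ### Injectivity of `fperm` on sorted words -/

def zer : C := fun _ => false
def dl (z : ℕ) : C := fun n => decide (n = z)

lemma zer_cns : cns false zer = zer := by
  funext n; cases n <;> rfl

lemma dl_zero : dl 0 = cns true zer := by
  funext n; cases n <;> simp [dl, zer]

lemma dl_succ (z : ℕ) : dl (z + 1) = cns false (dl z) := by
  funext n; cases n <;> simp [dl]

lemma dl_inj {a b : ℕ} (h : dl a = dl b) : a = b := by
  have := congrFun h a
  simp [dl] at this
  exact this

lemma hd_zer : hd zer = false := rfl

lemma eP_zer : ∀ c : ℕ, eP c zer = zer := by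
  intro c
  cases c with
  | zero => rw [e0_f' hd_zer, zer_cns]
  | succ c => exact eP_succ_f' c hd_zer

lemma eP_dl0 {c : ℕ} (hc : 1 ≤ c) : eP c (dl 0) = dl 0 := by
  obtain ⟨c', rfl⟩ : ∃ c', c = c' + 1 := ⟨c - 1, by omega⟩
  rw [dl_zero, eP_succ_t, eP_zer]

lemma e0_dl (k : ℕ) : eP 0 (dl k) = dl (k + 1) := by
  cases k with
  | zero =>
    rw [dl_zero, ← zer_cns, e0_tf, dl_succ, dl_zero]
  | succ k =>
    rw [dl_succ, e0_f, ← dl_succ, ← dl_succ]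

lemma fperm_all1_dl0 : ∀ (u : List ℕ), (∀ c ∈ u, 1 ≤ c) → fperm u (dl 0) = dl 0 := by
  intro u
  induction u with
  | nil => intro _; rfl
  | cons a u ih =>
    intro h
    rw [fperm_cons, Equiv.Perm.mul_apply, ih (fun c hc => h c (by simp [hc])),
      eP_dl0 (h a (by simp))]

lemma fperm_count0 : ∀ (u : List ℕ), u.Pairwise (· ≤ ·) → fperm u (dl 0) = dl (u.count 0) := by
  intro u
  induction u with
  | nil => intro _; rfl
  | cons a u ih =>
    intro hs
    rw [List.pairwise_cons] at hs
    cases a with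
    | zero =>
      rw [fperm_cons, Equiv.Perm.mul_apply, ih hs.2, e0_dl]
      rw [List.count_cons]
      simp
    | succ a =>
      have h1 : ∀ c ∈ (a + 1) :: u, 1 ≤ c := by
        intro c hc
        rcases List.mem_cons.mp hc with rfl | hc
        · omega
        · have := hs.1 c hc; omega
      rw [fperm_all1_dl0 _ h1]
      have h0 : (0 : ℕ) ∉ (a + 1) :: u := by
        intro h
        have := h1 0 h; omega
      rw [List.count_eq_zero.mpr h0]

lemma fperm_lift_t : ∀ (u : List ℕ), (∀ c ∈ u, 1 ≤ c) → ∀ s : C,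
    fperm u (cns true s) = cns true (fperm (u.map Nat.pred) s) := by
  intro u
  induction u with
  | nil => intro _ s; rfl
  | cons a u ih =>
    intro h s
    obtain ⟨a', ha⟩ : ∃ a', a = a' + 1 := ⟨a - 1, by have := h a (by simp); omega⟩
    subst ha
    rw [fperm_cons, Equiv.Perm.mul_apply, ih (fun c hc => h c (by simp [hc])) s,
      eP_succ_t]
    simp only [List.map_cons, fperm_cons, Equiv.Perm.mul_apply]
    rfl

lemma sum_map_pred : ∀ (u : List ℕ), (∀ c ∈ u, 1 ≤ c) →
    (u.map Nat.pred).sum + u.length = u.sum := by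
  intro u
  induction u with
  | nil => intro _; rfl
  | cons a u ih =>
    intro h
    have ha := h a (by simp)
    have := ih (fun c hc => h c (by simp [hc]))
    simp only [List.map_cons, List.sum_cons, List.length_cons, Nat.pred_eq_sub_one]
    omega

lemma map_pred_succ : ∀ (u : List ℕ), (∀ c ∈ u, 1 ≤ c) →
    (u.map Nat.pred).map (· + 1) = u := by
  intro u
  induction u with
  | nil => intro _; rfl
  | cons a u ih =>
    intro h
    have ha := h a (by simp)
    simp only [List.map_cons]
    rw [show Nat.pred a + 1 = a by rw [Nat.pred_eq_sub_one]; omega,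
      ih (fun c hc => h c (by simp [hc]))]

lemma sorted_map_pred {u : List ℕ} (h : u.Pairwise (· ≤ ·)) :
    (u.map Nat.pred).Pairwise (· ≤ ·) :=
  List.Pairwise.map _ (fun _ _ hab => Nat.pred_le_pred hab) h

lemma fperm_inj : ∀ (N : ℕ) (u v : List ℕ),
    u.length + v.length + u.sum + v.sum ≤ N →
    u.Pairwise (· ≤ ·) → v.Pairwise (· ≤ ·) → fperm u = fperm v → u = v := by
  intro N
  induction N with
  | zero =>
    intro u v hm _ _ _
    cases u with
    | nil =>
      cases v with
      | nil => rfl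
      | cons b v' => simp at hm
    | cons a u' => simp at hm
  | succ N IH =>
    intro u v hm hu hv h
    have hz : u.count 0 = v.count 0 := by
      apply dl_inj
      rw [← fperm_count0 u hu, ← fperm_count0 v hv, h]
    cases u with
    | nil =>
      cases v with
      | nil => rfl
      | cons b v' =>
        exfalso
        have h0 : (0 : ℕ) ∉ b :: v' := by
          rw [← List.count_eq_zero, ← hz]; rfl
        have hb : ∀ c ∈ b :: v', 1 ≤ c := by
          intro c hc
          rcases Nat.eq_zero_or_pos c with rfl | hc'
          · exact absurd hc h0
          · exact hc'
        have h2 : fperm ((b :: v').map Nat.pred) = fperm ([] : List ℕ) := by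
          apply Equiv.ext
          intro s
          have h3 := DFunLike.congr_fun h (cns true s)
          rw [fperm_lift_t _ hb s] at h3
          simp only [fperm_nil, Equiv.Perm.one_apply] at h3 ⊢
          have := congrArg tl h3.symm
          simpa using this
        have hmeas : ((b :: v').map Nat.pred).length + ([] : List ℕ).length +
            ((b :: v').map Nat.pred).sum + ([] : List ℕ).sum ≤ N := by
          have hsum := sum_map_pred _ hb
          simp only [List.length_map, List.length_nil, List.sum_nil, List.length_cons] at *
          omega
        have := IH _ _ hmeas (sorted_map_pred hv) List.Pairwise.nil h2
        simp at this
    | cons a u' =>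
      cases v with
      | nil =>
        exfalso
        have h0 : (0 : ℕ) ∉ a :: u' := by
          rw [← List.count_eq_zero, hz]; rfl
        have hb : ∀ c ∈ a :: u', 1 ≤ c := by
          intro c hc
          rcases Nat.eq_zero_or_pos c with rfl | hc'
          · exact absurd hc h0
          · exact hc'
        have h2 : fperm ((a :: u').map Nat.pred) = fperm ([] : List ℕ) := by
          apply Equiv.ext
          intro s
          have h3 := DFunLike.congr_fun h (cns true s)
          rw [fperm_lift_t _ hb s] at h3
          simp only [fperm_nil, Equiv.Perm.one_apply] at h3 ⊢
          have := congrArg tl h3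
          simpa using this
        have hmeas : ((a :: u').map Nat.pred).length + ([] : List ℕ).length +
            ((a :: u').map Nat.pred).sum + ([] : List ℕ).sum ≤ N := by
          have hsum := sum_map_pred _ hb
          simp only [List.length_map, List.length_nil, List.sum_nil, List.length_cons] at *
          omega
        have := IH _ _ hmeas (sorted_map_pred hu) List.Pairwise.nil h2
        simp at this
      | cons b v' =>
        by_cases hz0 : (0 : ℕ) ∈ a :: u'
        · have ha : a = 0 := by
            rcases List.mem_cons.mp hz0 with h' | h'
            · omega
            · have := List.rel_of_pairwise_cons hu h'; omega
          have hz0v : (0 : ℕ) ∈ b :: v' := by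
            have hpos : 0 < (b :: v').count 0 := by
              rw [← hz]
              exact List.count_pos_iff.mpr hz0
            exact List.count_pos_iff.mp hpos
          have hbv : b = 0 := by
            rcases List.mem_cons.mp hz0v with h' | h'
            · omega
            · have := List.rel_of_pairwise_cons hv h'; omega
          subst ha; subst hbv
          simp only [fperm_cons] at h
          have h2 : fperm u' = fperm v' := mul_left_cancel h
          have hmeas : u'.length + v'.length + u'.sum + v'.sum ≤ N := by
            simp only [List.length_cons, List.sum_cons] at hm
            omega
          rw [IH _ _ hmeas hu.of_cons hv.of_cons h2]
        · have hau : ∀ c ∈ a :: u', 1 ≤ c := by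
            intro c hc
            rcases Nat.eq_zero_or_pos c with rfl | hc'
            · exact absurd hc hz0
            · exact hc'
          have h0v : (0 : ℕ) ∉ b :: v' := by
            rw [← List.count_eq_zero, ← hz, List.count_eq_zero]
            exact hz0
          have hbv : ∀ c ∈ b :: v', 1 ≤ c := by
            intro c hc
            rcases Nat.eq_zero_or_pos c with rfl | hc'
            · exact absurd hc h0v
            · exact hc'
          have h2 : fperm ((a :: u').map Nat.pred) = fperm ((b :: v').map Nat.pred) := by
            apply Equiv.ext
            intro s
            have h3 := DFunLike.congr_fun h (cns true s)
            rw [fperm_lift_t _ hau s, fperm_lift_t _ hbv s] at h3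
            have := congrArg tl h3
            simpa using this
          have hmeas : ((a :: u').map Nat.pred).length + ((b :: v').map Nat.pred).length +
              ((a :: u').map Nat.pred).sum + ((b :: v').map Nat.pred).sum ≤ N := by
            have hs1 := sum_map_pred _ hau
            have hs2 := sum_map_pred _ hbv
            simp only [List.length_map, List.length_cons] at *
            omega
          have h4 := IH _ _ hmeas (sorted_map_pred hu) (sorted_map_pred hv) h2
          have h5 : ((a :: u').map Nat.pred).map (· + 1) = a :: u' := map_pred_succ _ hau
          have h6 : ((b :: v').map Nat.pred).map (· + 1) = b :: v' := map_pred_succ _ hbv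
          rw [← h5, ← h6, h4]

/-! ### Combinatorics of normal forms and powers of `x 1` -/

def cP (t : List ℕ) : ℕ := t.countP (fun y => decide (y ≤ 1))

lemma cP_cons (c : ℕ) (t : List ℕ) :
    cP (c :: t) = cP t + if c ≤ 1 then 1 else 0 := by
  simp [cP, List.countP_cons]

lemma count1_le_cP : ∀ t : List ℕ, t.count 1 ≤ cP t := by
  intro t
  induction t with
  | nil => simp [cP]
  | cons c t ih =>
    rw [cP_cons, List.count_cons]
    by_cases h : c = 1
    · subst h
      simp
      omega
    · have h2 : (c == 1) = false := by simp [h]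
      rw [h2]
      simp only [Bool.false_eq_true, if_false]
      by_cases h3 : c ≤ 1 <;> simp [h3] <;> omega

lemma lettersC (n : ℕ) : ∀ (t : List ℕ) (a : ℕ),
    t.Pairwise (· ≤ ·) → (∀ y ∈ t, y ≤ 1 ∨ n + 2 ≤ y) →
    (a ≤ 1 ∨ n + 2 ≤ a + cP t) → (a ≤ 1 → n ≤ t.count 1) →
    ∀ y ∈ insertL a t, y ≤ 1 ∨ n + 2 ≤ y := by
  intro t
  induction t with
  | nil =>
    intro a _ _ hI _ y hy
    simp [insertL] at hy
    subst hy
    rcases hI with h | h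
    · exact Or.inl h
    · right; simp [cP] at h; omega
  | cons c t' ih =>
    intro a hs hl hI hJ y hy
    rw [List.pairwise_cons] at hs
    by_cases h : a ≤ c
    · simp only [insertL, if_pos h, List.mem_cons] at hy
      rcases hy with rfl | hy
      · by_cases ha : y ≤ 1
        · exact Or.inl ha
        · rcases hI with h' | h'
          · omega
          · right
            have hcp : cP (c :: t') = 0 := by
              apply List.countP_eq_zero.mpr
              intro z hz
              have hz2 : c ≤ z := by
                rcases List.mem_cons.mp hz with rfl | hz'
                · exact le_rfl
                · exact hs.1 z hz'
              simp only [decide_eq_true_eq]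
              omega
            omega
      · exact hl y (List.mem_cons.mpr hy)
    · simp only [insertL, if_neg h, List.mem_cons] at hy
      rcases hy with rfl | hy
      · exact hl y (by simp)
      · refine ih (a + 1) hs.2 (fun z hz => hl z (by simp [hz])) ?_ (by omega) y hy
        right
        rcases hI with h' | h'
        · have ha1 : a = 1 := by omega
          have hc0 : c = 0 := by omega
          have hcount : n ≤ (c :: t').count 1 := hJ (by omega)
          have hn : n ≤ t'.count 1 := by
            rw [List.count_cons] at hcount
            subst hc0
            simpa using hcount
          have := count1_le_cP t'
          omega
        · by_cases hc : c ≤ 1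
          · rw [cP_cons, if_pos hc] at h'
            omega
          · have hcp : cP t' = 0 := by
              apply List.countP_eq_zero.mpr
              intro z hz
              have := hs.1 z hz
              simp only [decide_eq_true_eq]
              omega
            rw [cP_cons, if_neg hc] at h'
            omega

lemma sorted_replicate (n a : ℕ) : (List.replicate n a).Pairwise (· ≤ ·) := by
  induction n with
  | zero => simp
  | succ n ih =>
    rw [List.replicate_succ, List.pairwise_cons]
    exact ⟨fun b hb => le_of_eq (List.eq_of_mem_replicate hb).symm, ih⟩

lemma nf_replicate_one (n : ℕ) : nf (List.replicate n 1) = List.replicate n 1 := by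
  induction n with
  | zero => rfl
  | succ n ih =>
    rw [List.replicate_succ, nf_cons, ih]
    cases n with
    | zero => rfl
    | succ m => simp [List.replicate_succ, insertL]

lemma foldr_rep_prop (n : ℕ) : ∀ u : List ℕ,
    (List.foldr insertL (List.replicate n 1) u).Pairwise (· ≤ ·) ∧
    n ≤ (List.foldr insertL (List.replicate n 1) u).count 1 ∧
    ∀ y ∈ List.foldr insertL (List.replicate n 1) u, y ≤ 1 ∨ n + 2 ≤ y := by
  intro u
  induction u with
  | nil =>
    refine ⟨sorted_replicate n 1, ?_, ?_⟩
    · simp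
    · intro y hy
      rw [List.eq_of_mem_replicate hy]
      omega
  | cons a u ih =>
    obtain ⟨hs, hc, hl⟩ := ih
    simp only [List.foldr_cons]
    refine ⟨sorted_insertL _ a hs, le_trans hc (count_le_insertL _ a 1), ?_⟩
    apply lettersC n _ a hs hl
    · by_cases ha : a ≤ 1
      · exact Or.inl ha
      · right
        have := count1_le_cP (List.foldr insertL (List.replicate n 1) u)
        omega
    · intro _; exact hc

lemma nf_append_rep (u : List ℕ) (n : ℕ) :
    nf (u ++ List.replicate n 1) = List.foldr insertL (List.replicate n 1) u := by
  rw [nf, List.foldr_append]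
  congr 1
  exact nf_replicate_one n

def it2 : ℕ → List ℕ → List ℕ
  | 0, t => t
  | n + 1, t => insertL 2 (it2 n t)

lemma insertL_zero (t : List ℕ) : insertL 0 t = 0 :: t := by
  cases t <;> simp [insertL]

lemma foldr_rep_cons : ∀ (n : ℕ) (t : List ℕ),
    List.foldr insertL (0 :: t) (List.replicate n 1) = 0 :: it2 n t := by
  intro n
  induction n with
  | zero => intro t; rfl
  | succ n ih =>
    intro t
    rw [List.replicate_succ, List.foldr_cons, ih]
    simp [insertL, it2]

lemma nf_rep_cons (n : ℕ) (wl : List ℕ) :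
    nf (List.replicate n 1 ++ 0 :: wl) = 0 :: it2 n (nf wl) := by
  rw [nf, List.foldr_append]
  show List.foldr insertL (nf (0 :: wl)) (List.replicate n 1) = _
  rw [nf_cons, insertL_zero, foldr_rep_cons]

lemma count1_it2 (n : ℕ) (t : List ℕ) : (it2 n t).count 1 = t.count 1 := by
  induction n with
  | zero => rfl
  | succ n ih => rw [it2, count1_insertL _ 2 le_rfl, ih]

lemma mem_it2 (n : ℕ) (t : List ℕ) (y : ℕ) (hy : y ∈ t) : y ∈ it2 n t := by
  induction n with
  | zero => exact hy
  | succ n ih => exact insertL_subset _ 2 y ih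

/-! ### Factoring out `x 1 ^ n` -/

lemma split_small (n : ℕ) : ∀ t : List ℕ, t.Pairwise (· ≤ ·) →
    (∀ y ∈ t, y ≤ 1 ∨ n + 2 ≤ y) →
    ∃ p q, t = p ++ q ∧ (∀ y ∈ p, y ≤ 1) ∧ (∀ y ∈ q, n + 2 ≤ y) ∧
      t.count 1 = p.count 1 := by
  intro t
  induction t with
  | nil => intro _ _; exact ⟨[], [], rfl, by simp, by simp, rfl⟩
  | cons c t' ih =>
    intro hs hl
    rw [List.pairwise_cons] at hs
    by_cases hc : c ≤ 1
    · obtain ⟨p, q, hpq, hp, hq, hcount⟩ := ih hs.2 (fun y hy => hl y (by simp [hy]))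
      refine ⟨c :: p, q, by simp [hpq], ?_, hq, ?_⟩
      · intro y hy
        rcases List.mem_cons.mp hy with rfl | hy
        · exact hc
        · exact hp y hy
      · rw [List.count_cons, List.count_cons, hcount]
    · have hc2 : n + 2 ≤ c := by
        rcases hl c (by simp) with h | h
        · omega
        · exact h
      refine ⟨[], c :: t', rfl, by simp, ?_, ?_⟩
      · intro y hy
        rcases List.mem_cons.mp hy with rfl | hy
        · exact hc2
        · have := hs.1 y hy; omega
      · have h1 : (1 : ℕ) ∉ c :: t' := by
          intro h1
          rcases List.mem_cons.mp h1 with h' | h'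
          · omega
          · have := hs.1 1 h'; omega
        rw [List.count_eq_zero.mpr h1]
        rfl

lemma ends_one : ∀ p : List ℕ, p.Pairwise (· ≤ ·) → (∀ y ∈ p, y ≤ 1) →
    1 ≤ p.count 1 → ∃ p', p = p' ++ [1] := by
  intro p
  induction p with
  | nil => intro _ _ h; simp at h
  | cons c p' ih =>
    intro hs hl hc
    rw [List.pairwise_cons] at hs
    cases p' with
    | nil =>
      have hc1 : c = 1 := by
        by_contra hne
        rw [List.count_cons, List.count_nil] at hc
        simp [hne] at hc
      exact ⟨[], by simp [hc1]⟩
    | cons d p'' =>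
      by_cases h1 : 1 ≤ (d :: p'').count 1
      · obtain ⟨r, hr⟩ := ih hs.2 (fun y hy => hl y (by simp [hy])) h1
        exact ⟨c :: r, by simp [hr]⟩
      · exfalso
        have hc1 : c = 1 := by
          by_contra hne
          rw [List.count_cons] at hc
          have hb : (c == 1) = false := by simp [hne]
          rw [hb] at hc
          simp only [Bool.false_eq_true, if_false, add_zero] at hc
          exact h1 hc
        have hd1 : d = 1 := by
          have h2 := hs.1 d (by simp)
          have h3 := hl d (by simp)
          omega
        apply h1
        rw [List.count_cons, hd1]
        simp

lemma wprod_mul_x1 : ∀ u : List ℕ, (∀ c ∈ u, 2 ≤ c) →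
    wprod u * x 1 = x 1 * wprod (u.map (· + 1)) := by
  intro u
  induction u with
  | nil => simp
  | cons c u ih =>
    intro h
    have hc := h c (by simp)
    simp only [wprod_cons, List.map_cons]
    rw [mul_assoc, ih (fun d hd => h d (by simp [hd])), ← mul_assoc,
      xmul 1 c (by omega), mul_assoc]

lemma cond_factor : ∀ (n : ℕ) (t p q : List ℕ), t = p ++ q → (∀ y ∈ p, y ≤ 1) →
    p.Pairwise (· ≤ ·) → (∀ y ∈ q, n + 2 ≤ y) → n ≤ p.count 1 →
    ∃ g ∈ ThompsonSemigroup, wprod t = g * (x 1) ^ n := by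
  intro n
  induction n with
  | zero => intro t _ _ _ _ _ _ _; exact ⟨wprod t, wprod_mem t, by simp⟩
  | succ n ih =>
    intro t p q ht hp hps hq hcount
    obtain ⟨p', hp'⟩ := ends_one p hps hp (by omega)
    have hq1 : ∀ c ∈ q.map (· - 1), 2 ≤ c := by
      intro c hc
      obtain ⟨d, hd, rfl⟩ := List.mem_map.mp hc
      have := hq d hd
      omega
    have hmap : (q.map (· - 1)).map (· + 1) = q := by
      rw [List.map_map]
      conv_rhs => rw [← List.map_id q]
      apply List.map_congr_left
      intro d hd
      have := hq d hd
      simp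
      omega
    have hE := wprod_mul_x1 (q.map (· - 1)) hq1
    rw [hmap] at hE
    have key : wprod t = wprod (p' ++ q.map (· - 1)) * x 1 := by
      rw [ht, hp', wprod_append, wprod_append, wprod_append]
      have h1 : wprod [1] = x 1 := by simp
      rw [h1, mul_assoc, ← hE, ← mul_assoc]
    have hp'sub : List.Sublist p' p := by
      rw [hp']; exact List.sublist_append_left p' [1]
    have hcount' : n ≤ p'.count 1 := by
      have : p.count 1 = p'.count 1 + 1 := by
        rw [hp', List.count_append]
        simp
      omega
    obtain ⟨g, hg, hfact⟩ := ih (p' ++ q.map (· - 1)) p' (q.map (· - 1)) rfl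
      (fun y hy => hp y (hp'sub.mem hy))
      (List.Pairwise.sublist hp'sub hps)
      (fun y hy => by
        obtain ⟨d, hd, rfl⟩ := List.mem_map.mp hy
        have := hq d hd
        omega)
      hcount'
    refine ⟨g, hg, ?_⟩
    rw [key, hfact, pow_succ, mul_assoc]

end ThompsonAux

open ThompsonAux in
/-- For `X ∈ S` with `X_0 ∣ X` and `n ∈ ℕ`: `X_1ⁿ X X_1⁻ⁿ` lies in `S`
(computed inside Thompson's group `F`) iff `X = Y X_1ⁿ` for some `Y ∈ S`. -/
theorem thompson_conj_mem_iff_right_factor (Xel : ThompsonF) (hX : Xel ∈ ThompsonSemigroup)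
    (h0 : ∃ w ∈ ThompsonSemigroup, Xel = x 0 * w) (n : ℕ) :
    ((x 1) ^ n * Xel * (x 1)⁻¹ ^ n ∈ ThompsonSemigroup ↔
      ∃ Y ∈ ThompsonSemigroup, Xel = Y * (x 1) ^ n) := by
  constructor
  · intro hZ
    obtain ⟨w, hw, hXw⟩ := h0
    obtain ⟨wl, hwl⟩ := exists_word hw
    obtain ⟨Zl, hZl⟩ := exists_word hZ
    have key : wprod (Zl ++ List.replicate n 1) = wprod (List.replicate n 1 ++ 0 :: wl) := by
      rw [wprod_append, wprod_append, hZl, wprod_replicate, wprod_cons, hXw, ← hwl]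
      group
    have hperm : fperm (Zl ++ List.replicate n 1) = fperm (List.replicate n 1 ++ 0 :: wl) := by
      have := congrArg psi key
      rwa [psi_wprod, psi_wprod] at this
    have hnf : nf (Zl ++ List.replicate n 1) = nf (List.replicate n 1 ++ 0 :: wl) := by
      apply fperm_inj ((nf (Zl ++ List.replicate n 1)).length +
        (nf (List.replicate n 1 ++ 0 :: wl)).length +
        (nf (Zl ++ List.replicate n 1)).sum + (nf (List.replicate n 1 ++ 0 :: wl)).sum)
        _ _ le_rfl (nf_sorted _) (nf_sorted _)
      rw [fperm_nf, fperm_nf, hperm]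
    obtain ⟨hTs, hTc, hTl⟩ := foldr_rep_prop n Zl
    rw [← nf_append_rep] at hTs hTc hTl
    rw [hnf, nf_rep_cons] at hTc hTl
    set v := nf wl with hv
    have hvc : n ≤ v.count 1 := by
      have h1 : (0 :: it2 n v).count 1 = (it2 n v).count 1 := by
        rw [List.count_cons]
        simp
      rw [h1, count1_it2] at hTc
      exact hTc
    have hvl : ∀ y ∈ v, y ≤ 1 ∨ n + 2 ≤ y := by
      intro y hy
      exact hTl y (by simp [mem_it2 n v y hy])
    have hvs : v.Pairwise (· ≤ ·) := nf_sorted wl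
    obtain ⟨p, q, hpq, hp, hq, hcount⟩ := split_small n v hvs hvl
    have hps : p.Pairwise (· ≤ ·) := by
      have hsub : List.Sublist p v := by rw [hpq]; exact List.sublist_append_left p q
      exact List.Pairwise.sublist hsub hvs
    obtain ⟨g, hg, hfact⟩ := cond_factor n (0 :: v) (0 :: p) q (by simp [hpq])
      (by intro y hy
          rcases List.mem_cons.mp hy with rfl | hy
          · omega
          · exact hp y hy)
      (by rw [List.pairwise_cons]; exact ⟨fun b _ => Nat.zero_le b, hps⟩)
      hq
      (by rw [List.count_cons]
          simp
          omega)
    refine ⟨g, hg, ?_⟩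
    have hXv : Xel = wprod (0 :: v) := by
      rw [wprod_cons, hv, wprod_nf, hwl, ← hXw]
    rw [hXv, hfact]
  · rintro ⟨Y, hY, rfl⟩
    have h1 : (x 1) ^ n * (Y * (x 1) ^ n) * (x 1)⁻¹ ^ n = (x 1) ^ n * Y := by
      rw [inv_pow, ← mul_assoc, mul_inv_cancel_right]
    rw [h1]
    exact mul_mem (pow_mem (Submonoid.subset_closure (Set.mem_range_self 1)) n) hY
end

section
/- The total order ≼ on Thompson's semigroup is compatible with multiplication: if u_i ≼ v_i for 1 ≤ i ≤ n, then u_1⋯u_n ≼ v_1⋯v_n, with equality if and only if u_i = v_i for all i. -/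
/-- The defining relations of Thompson's semigroup:
`X_j * X_i = X_i * X_{j+1}` for `i < j`. -/
def thompsonRel : FreeMonoid ℕ → FreeMonoid ℕ → Prop := fun a b =>
  ∃ i j : ℕ, i < j ∧ a = FreeMonoid.of j * FreeMonoid.of i ∧
    b = FreeMonoid.of i * FreeMonoid.of (j + 1)

def thompsonCon : Con (FreeMonoid ℕ) := conGen thompsonRel

/-- Thompson's semigroup (with unit). -/
def ThompsonS : Type := thompsonCon.Quotient

instance : Monoid ThompsonS := inferInstanceAs (Monoid thompsonCon.Quotient)

/-- The generators of Thompson's semigroup. -/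
def X (n : ℕ) : ThompsonS := thompsonCon.mk' (FreeMonoid.of n)


/-- The index of an element of Thompson's semigroup: the sum of the exponents in
its unique normal form, equivalently the common length of all words representing it. -/
noncomputable def ind (x : ThompsonS) : ℕ :=
  sInf {n | ∃ w : FreeMonoid ℕ, thompsonCon.mk' w = x ∧ w.length = n}

/-- `indAt i x` is the exponent of `X_i` in the unique normal form of `x`:
the number of occurrences of the letter `i` in the unique sorted word representing `x`. -/
noncomputable def indAt (i : ℕ) (x : ThompsonS) : ℕ :=
  sInf {n | ∃ w : List ℕ, w.Pairwise (· ≤ ·) ∧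
    thompsonCon.mk' (FreeMonoid.ofList w) = x ∧ w.count i = n}

/-- The strict total order `≺` on Thompson's semigroup determined by
`(ind, ind_0, ind_1, ind_2, ...)`. -/
def tlt (u v : ThompsonS) : Prop :=
  ind u < ind v ∨
    (ind u = ind v ∧ (indAt 0 v < indAt 0 u ∨
      (indAt 0 u = indAt 0 v ∧ ∃ i : ℕ, 1 ≤ i ∧
        (∀ j, j < i → indAt j u = indAt j v) ∧ indAt i v < indAt i u)))

/-- The total order `≼` on Thompson's semigroup. -/
def tle (u v : ThompsonS) : Prop := tlt u v ∨ u = v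

namespace TT
/-- right insertion -/
def ins : List ℕ → ℕ → List ℕ
  | [], a => [a]
  | x :: s, a => if x ≤ a then x :: ins s a else a :: (x :: s).map (· + 1)

def nrm (w : List ℕ) : List ℕ := w.foldl ins []

def lins : ℕ → List ℕ → List ℕ
  | c, [] => [c]
  | c, x :: s => if x < c then x :: lins (c+1) s else c :: x :: s

@[simp] lemma ins_nil (a : ℕ) : ins [] a = [a] := rfl
lemma ins_cons_le {x a : ℕ} (s : List ℕ) (h : x ≤ a) : ins (x :: s) a = x :: ins s a := by
  simp [ins, h]
lemma ins_cons_gt {x a : ℕ} (s : List ℕ) (h : a < x) :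
    ins (x :: s) a = a :: (x :: s).map (· + 1) := by
  simp [ins, Nat.not_le.2 h]

@[simp] lemma ins_length (s : List ℕ) (a : ℕ) : (ins s a).length = s.length + 1 := by
  induction s generalizing a with
  | nil => rfl
  | cons x s ih => by_cases h : x ≤ a <;> simp [ins, h, ih]

lemma ins_le {s : List ℕ} {b a : ℕ} (hs : ∀ y ∈ s, b ≤ y) (hba : b ≤ a) :
    ∀ y ∈ ins s a, b ≤ y := by
  induction s generalizing a with
  | nil => simpa using hba
  | cons x s ih =>
    by_cases h : x ≤ a
    · rw [ins_cons_le s h]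
      intro y hy
      rcases List.mem_cons.1 hy with rfl | hy
      · exact hs y (List.mem_cons_self)
      · exact ih (fun z hz => hs z (List.mem_cons_of_mem _ hz)) hba y hy
    · rw [ins_cons_gt s (Nat.not_le.1 h)]
      intro y hy
      rcases List.mem_cons.1 hy with rfl | hy
      · exact hba
      · rcases List.mem_map.1 hy with ⟨z, hz, rfl⟩
        exact le_trans (hs z hz) (Nat.le_succ z)

lemma ins_sorted {s : List ℕ} (hs : s.Pairwise (· ≤ ·)) (a : ℕ) : (ins s a).Pairwise (· ≤ ·) := by
  induction s generalizing a with
  | nil => simp [List.pairwise_singleton]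
  | cons x s ih =>
    rw [List.pairwise_cons] at hs
    by_cases h : x ≤ a
    · rw [ins_cons_le s h, List.pairwise_cons]
      exact ⟨ins_le hs.1 h, ih hs.2 a⟩
    · rw [ins_cons_gt s (Nat.not_le.1 h), List.pairwise_cons]
      constructor
      · intro y hy
        rcases List.mem_map.1 hy with ⟨z, hz, rfl⟩
        rcases List.mem_cons.1 hz with rfl | hz
        · omega
        · have := hs.1 z hz; omega
      · exact List.Pairwise.map _ (fun {p q} (hpq : p ≤ q) => Nat.succ_le_succ hpq) (List.pairwise_cons.2 hs)

@[simp] lemma lins_nil (c : ℕ) : lins c [] = [c] := rfl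
lemma lins_cons_lt {x c : ℕ} (s : List ℕ) (h : x < c) : lins c (x :: s) = x :: lins (c+1) s := by
  simp [lins, h]
lemma lins_cons_ge {x c : ℕ} (s : List ℕ) (h : c ≤ x) : lins c (x :: s) = c :: x :: s := by
  simp [lins, Nat.not_lt.2 h]

@[simp] lemma lins_length (s : List ℕ) (c : ℕ) : (lins c s).length = s.length + 1 := by
  induction s generalizing c with
  | nil => rfl
  | cons x s ih => by_cases h : x < c <;> simp [lins, h, ih]

lemma lins_le {s : List ℕ} {b c : ℕ} (hs : ∀ y ∈ s, b ≤ y) (hbc : b ≤ c) :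
    ∀ y ∈ lins c s, b ≤ y := by
  induction s generalizing c with
  | nil => simpa using hbc
  | cons x s ih =>
    by_cases h : x < c
    · rw [lins_cons_lt s h]
      intro y hy
      rcases List.mem_cons.1 hy with rfl | hy
      · exact hs y (List.mem_cons_self)
      · exact ih (fun z hz => hs z (List.mem_cons_of_mem _ hz)) (le_trans hbc (Nat.le_succ c)) y hy
    · rw [lins_cons_ge s (Nat.not_lt.1 h)]
      intro y hy
      rcases List.mem_cons.1 hy with rfl | hy
      · exact hbc
      · exact hs y hy

lemma lins_sorted {s : List ℕ} (hs : s.Pairwise (· ≤ ·)) (c : ℕ) : (lins c s).Pairwise (· ≤ ·) := by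
  induction s generalizing c with
  | nil => simp [List.pairwise_singleton]
  | cons x s ih =>
    rw [List.pairwise_cons] at hs
    by_cases h : x < c
    · rw [lins_cons_lt s h, List.pairwise_cons]
      exact ⟨lins_le hs.1 (le_of_lt (Nat.lt_succ_of_lt h)), ih hs.2 (c+1)⟩
    · rw [lins_cons_ge s (Nat.not_lt.1 h), List.pairwise_cons]
      refine ⟨?_, List.pairwise_cons.2 hs⟩
      intro y hy
      rcases List.mem_cons.1 hy with rfl | hy
      · exact Nat.not_lt.1 h
      · exact le_trans (Nat.not_lt.1 h) (hs.1 y hy)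

/-- map (+1) commutes with ins -/
lemma ins_map_succ (s : List ℕ) (a : ℕ) :
    (ins s a).map (· + 1) = ins (s.map (· + 1)) (a + 1) := by
  induction s generalizing a with
  | nil => rfl
  | cons x s ih =>
    by_cases h : x ≤ a
    · rw [ins_cons_le s h, List.map_cons, List.map_cons, ins_cons_le _ (Nat.succ_le_succ h), ih]
    · rw [ins_cons_gt s (Nat.not_le.1 h)]
      simp only [List.map_cons]
      rw [ins_cons_gt _ (show a + 1 < x + 1 by omega)]
      simp

/-- key commuting lemma F' -/
lemma ins_ins (s : List ℕ) {a c : ℕ} (h : c < a) :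
    ins (ins s a) c = ins (ins s c) (a + 1) := by
  induction s with
  | nil =>
    rw [ins_nil, ins_nil, ins_cons_gt _ h, ins_cons_le _ (by omega)]
    simp
  | cons x s ih =>
    rcases Nat.lt_or_ge c x with hcx | hxc
    · -- c < x
      rcases Nat.lt_or_ge a x with hax | hxa
      · -- c < a < x
        rw [ins_cons_gt s hax, ins_cons_gt _ h, ins_cons_gt s hcx]
        simp only [List.map_cons]
        rw [ins_cons_le _ (show c ≤ a + 1 by omega),
          ins_cons_gt _ (show a + 1 < x + 1 by omega)]
        simp
      · -- c < x ≤ a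
        rw [ins_cons_le s hxa, ins_cons_gt _ hcx, ins_cons_gt s hcx]
        simp only [List.map_cons]
        rw [ins_cons_le _ (show c ≤ a + 1 by omega),
          ins_cons_le _ (show x + 1 ≤ a + 1 by omega), ins_map_succ]
    · -- x ≤ c < a
      rw [ins_cons_le s (le_trans hxc (le_of_lt h)), ins_cons_le _ hxc,
        ins_cons_le s hxc, ins_cons_le _ (by omega), ih]

/-- key lemma (L): for sorted `t`. -/
lemma ins_foldl (t : List ℕ) (ht : t.Pairwise (· ≤ ·)) :
    ∀ (s : List ℕ) (c : ℕ), ins (t.foldl ins s) c = (ins t c).foldl ins s := by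
  induction t with
  | nil => intro s c; rfl
  | cons a t ih =>
    intro s c
    rw [List.pairwise_cons] at ht
    by_cases h : a ≤ c
    · rw [ins_cons_le t h, List.foldl_cons, List.foldl_cons, ih ht.2]
    · rw [ins_cons_gt t (Nat.not_le.1 h), List.foldl_cons, List.foldl_cons, List.map_cons,
        List.foldl_cons]
      -- t is sorted with all elements ≥ a > c, so ins t c = c :: map (+1) t
      have htc : ins t c = c :: t.map (· + 1) := by
        cases t with
        | nil => rfl
        | cons b t' => exact ins_cons_gt _ (lt_of_lt_of_le (Nat.not_le.1 h) (ht.1 b (List.mem_cons_self)))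
      have : ins (t.foldl ins (ins s a)) c = (ins t c).foldl ins (ins s a) := ih ht.2 (ins s a) c
      rw [htc, List.foldl_cons] at this
      rw [this, ins_ins s (Nat.not_le.1 h)]

@[simp] lemma nrm_nil : nrm [] = [] := rfl
lemma nrm_append (u v : List ℕ) : nrm (u ++ v) = v.foldl ins (nrm u) := List.foldl_append ..
lemma nrm_concat (u : List ℕ) (a : ℕ) : nrm (u ++ [a]) = ins (nrm u) a := by
  rw [nrm_append]; rfl

lemma foldl_ins_sorted (w : List ℕ) : ∀ {s : List ℕ}, s.Pairwise (· ≤ ·) →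
    (w.foldl ins s).Pairwise (· ≤ ·) := by
  induction w with
  | nil => intro s hs; exact hs
  | cons a w ih => intro s hs; exact ih (ins_sorted hs a)

lemma nrm_sorted (w : List ℕ) : (nrm w).Pairwise (· ≤ ·) :=
  foldl_ins_sorted w (by simp)

lemma foldl_ins_length (w : List ℕ) : ∀ s : List ℕ, (w.foldl ins s).length = s.length + w.length := by
  induction w with
  | nil => simp
  | cons a w ih => intro s; rw [List.foldl_cons, ih, ins_length, List.length_cons]; omega

@[simp] lemma nrm_length (w : List ℕ) : (nrm w).length = w.length := by
  rw [nrm, foldl_ins_length]; simp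

/-- lemma (N): folding a word is the same as folding its normal form. -/
lemma foldl_ins_nrm (w : List ℕ) : ∀ s : List ℕ, w.foldl ins s = (nrm w).foldl ins s := by
  induction w using List.reverseRecOn with
  | nil => intro s; rfl
  | append_singleton w x ih =>
    intro s
    rw [List.foldl_append, List.foldl_cons, List.foldl_nil, ih s,
      ins_foldl (nrm w) (nrm_sorted w), nrm_concat]

lemma ins_eq_append {s : List ℕ} {a : ℕ} (h : ∀ y ∈ s, y ≤ a) : ins s a = s ++ [a] := by
  induction s with
  | nil => rfl
  | cons x s ih =>
    rw [ins_cons_le s (h x (List.mem_cons_self)), ih (fun y hy => h y (List.mem_cons_of_mem _ hy))]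
    rfl

lemma nrm_of_sorted : ∀ {s : List ℕ}, s.Pairwise (· ≤ ·) → nrm s = s := by
  intro s
  induction s using List.reverseRecOn with
  | nil => intro _; rfl
  | append_singleton s x ih =>
    intro hs
    have h1 : s.Pairwise (· ≤ ·) := (List.pairwise_append.1 hs).1
    have h2 : ∀ y ∈ s, y ≤ x := by
      intro y hy
      exact (List.pairwise_append.1 hs).2.2 y hy x (List.mem_singleton_self x)
    rw [nrm_concat, ih h1, ins_eq_append h2]

/-- The congruence of having equal normal forms. -/
def normCon : Con (FreeMonoid ℕ) where
  r a b := nrm a.toList = nrm b.toList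
  iseqv := ⟨fun _ => rfl, Eq.symm, Eq.trans⟩
  mul' := by
    intro a b c d hab hcd
    show nrm (a * c).toList = nrm (b * d).toList
    rw [FreeMonoid.toList_mul, FreeMonoid.toList_mul, nrm_append, nrm_append,
      foldl_ins_nrm c.toList, foldl_ins_nrm d.toList, hab, hcd]

lemma thompson_nrm {a b : FreeMonoid ℕ} (h : thompsonCon a b) : nrm a.toList = nrm b.toList := by
  have h' : conGen thompsonRel a b := h
  refine Con.le_def.1 ((Con.conGen_le (c := normCon)).2 (fun x y hxy => ?_)) h'
  obtain ⟨i, j, hij, rfl, rfl⟩ := hxy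
  show nrm [j, i] = nrm [i, j + 1]
  show ins (ins [] j) i = ins (ins [] i) (j + 1)
  rw [ins_nil, ins_nil, ins_cons_gt _ hij, ins_cons_le _ (by omega)]
  rfl

/-! ### Representatives in the quotient -/

def e (s : List ℕ) : ThompsonS := thompsonCon.mk' (FreeMonoid.ofList s)

lemma e_append (u v : List ℕ) : e (u ++ v) = e u * e v := by
  rw [e, FreeMonoid.ofList_append, map_mul]; rfl

lemma e_cons (a : ℕ) (s : List ℕ) : e (a :: s) = e [a] * e s := by
  rw [show a :: s = [a] ++ s from rfl, e_append]

lemma rel_e {a x : ℕ} (h : a < x) : e [x, a] = e [a, x + 1] := by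
  have h2 : thompsonRel (FreeMonoid.ofList [x, a]) (FreeMonoid.ofList [a, x + 1]) :=
    ⟨a, x, h, rfl, rfl⟩
  exact (Con.eq thompsonCon).2 (ConGen.Rel.of _ _ h2)

lemma shift_rep {s : List ℕ} {a : ℕ} (h : ∀ y ∈ s, a < y) :
    e (s ++ [a]) = e (a :: s.map (· + 1)) := by
  induction s with
  | nil => rfl
  | cons x s ih =>
    have hx : a < x := h x (List.mem_cons_self)
    calc e ((x :: s) ++ [a]) = e [x] * e (s ++ [a]) := by
          rw [← e_append]; rfl
      _ = e [x] * e (a :: s.map (· + 1)) := by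
          rw [ih (fun y hy => h y (List.mem_cons_of_mem _ hy))]
      _ = e [x, a] * e (s.map (· + 1)) := by
          rw [← e_append, ← e_append]; rfl
      _ = e [a, x + 1] * e (s.map (· + 1)) := by rw [rel_e hx]
      _ = e (a :: (x :: s).map (· + 1)) := by rw [← e_append]; rfl

lemma ins_rep {s : List ℕ} (hs : s.Pairwise (· ≤ ·)) (a : ℕ) :
    e (s ++ [a]) = e (ins s a) := by
  induction s with
  | nil => rfl
  | cons x s ih =>
    rw [List.pairwise_cons] at hs
    by_cases h : x ≤ a
    · rw [ins_cons_le s h, show (x :: s) ++ [a] = [x] ++ (s ++ [a]) from rfl, e_append,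
        ih hs.2, show x :: ins s a = [x] ++ ins s a from rfl, e_append]
    · rw [ins_cons_gt s (Nat.not_le.1 h)]
      refine shift_rep ?_
      intro y hy
      rcases List.mem_cons.1 hy with rfl | hy
      · exact Nat.not_le.1 h
      · exact lt_of_lt_of_le (Nat.not_le.1 h) (hs.1 y hy)

lemma lins_rep (s : List ℕ) : ∀ c : ℕ, e (c :: s) = e (lins c s) := by
  induction s with
  | nil => intro c; rfl
  | cons x s ih =>
    intro c
    by_cases h : x < c
    · rw [lins_cons_lt s h]
      calc e (c :: x :: s) = e [c, x] * e s := by rw [← e_append]; rfl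
        _ = e [x, c + 1] * e s := by rw [rel_e h]
        _ = e [x] * e ((c + 1) :: s) := by rw [← e_append, ← e_append]; rfl
        _ = e [x] * e (lins (c + 1) s) := by rw [ih]
        _ = e (x :: lins (c + 1) s) := by rw [← e_cons]
    · rw [lins_cons_ge s (Nat.not_lt.1 h)]

lemma nrm_rep (w : List ℕ) : e (nrm w) = e w := by
  induction w using List.reverseRecOn with
  | nil => rfl
  | append_singleton w x ih =>
    rw [nrm_concat, ← ins_rep (nrm_sorted w) x, e_append, ih, ← e_append]

/-! ### The normal form map on the quotient -/

def nf (x : ThompsonS) : List ℕ :=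
  Con.liftOn x (fun w => nrm w.toList) (fun _ _ h => thompson_nrm h)

lemma nf_mk (w : FreeMonoid ℕ) : nf (thompsonCon.mk' w) = nrm w.toList := rfl

lemma nf_e (s : List ℕ) : nf (e s) = nrm s := nf_mk _

lemma e_nf (x : ThompsonS) : e (nf x) = x := by
  obtain ⟨w, rfl⟩ := Con.mk'_surjective (c := thompsonCon) x
  rw [nf_mk, nrm_rep]
  rfl

lemma nf_sorted (x : ThompsonS) : (nf x).Pairwise (· ≤ ·) := by
  obtain ⟨w, rfl⟩ := Con.mk'_surjective (c := thompsonCon) x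
  rw [nf_mk]
  exact nrm_sorted _

lemma nf_inj {x y : ThompsonS} (h : nf x = nf y) : x = y := by
  rw [← e_nf x, ← e_nf y, h]

lemma nf_mul (x y : ThompsonS) : nf (x * y) = (nf y).foldl ins (nf x) := by
  have : x * y = e (nf x ++ nf y) := by rw [e_append, e_nf, e_nf]
  rw [this, nf_e, nrm_append, nrm_of_sorted (nf_sorted x)]

lemma nf_X_mul (c : ℕ) (x : ThompsonS) : nf (X c * x) = lins c (nf x) := by
  have h1 : X c * x = e (c :: nf x) := by
    rw [e_cons, e_nf]
    rfl
  rw [h1, lins_rep, nf_e, nrm_of_sorted (lins_sorted (nf_sorted x) c)]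

lemma nf_length_mul (x y : ThompsonS) :
    (nf (x * y)).length = (nf x).length + (nf y).length := by
  rw [nf_mul, foldl_ins_length]

/-! ### `ind` and `indAt` via the normal form -/

lemma ind_eq (x : ThompsonS) : ind x = (nf x).length := by
  have : {n | ∃ w : FreeMonoid ℕ, thompsonCon.mk' w = x ∧ w.length = n} = {(nf x).length} := by
    ext n
    simp only [Set.mem_setOf_eq, Set.mem_singleton_iff]
    constructor
    · rintro ⟨w, rfl, rfl⟩
      rw [nf_mk, nrm_length]
      rfl
    · rintro rfl
      exact ⟨FreeMonoid.ofList (nf x), e_nf x, rfl⟩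
  rw [ind, this, csInf_singleton]

lemma indAt_eq (i : ℕ) (x : ThompsonS) : indAt i x = (nf x).count i := by
  have : {n | ∃ w : List ℕ, w.Pairwise (· ≤ ·) ∧
      thompsonCon.mk' (FreeMonoid.ofList w) = x ∧ w.count i = n} = {(nf x).count i} := by
    ext n
    simp only [Set.mem_setOf_eq, Set.mem_singleton_iff]
    constructor
    · rintro ⟨w, hsort, hw, rfl⟩
      have : w = nf x := by
        rw [← hw, show thompsonCon.mk' (FreeMonoid.ofList w) = e w from rfl, nf_e,
          nrm_of_sorted hsort]
      rw [this]
    · rintro rfl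
      exact ⟨nf x, nf_sorted x, e_nf x, rfl⟩
  rw [indAt, this, csInf_singleton]


/-! ### Lexicographic comparison lemmas -/

lemma lex_map_succ : ∀ {s t : List ℕ}, List.Lex (· < ·) s t →
    List.Lex (· < ·) (s.map (· + 1)) (t.map (· + 1)) := by
  intro s t h
  induction h with
  | nil => exact List.Lex.nil
  | cons h ih => exact List.Lex.cons ih
  | rel h => exact List.Lex.rel (Nat.succ_lt_succ h)

lemma ins_head_le (s : List ℕ) (a : ℕ) : ∃ h r, ins s a = h :: r ∧ h ≤ a := by
  cases s with
  | nil => exact ⟨a, [], rfl, le_refl a⟩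
  | cons x s =>
    by_cases h : x ≤ a
    · exact ⟨x, ins s a, ins_cons_le s h, h⟩
    · exact ⟨a, (x :: s).map (· + 1), ins_cons_gt s (Nat.not_le.1 h), le_refl a⟩

lemma lex_ins {s t : List ℕ} (h : List.Lex (· < ·) s t) :
    ∀ a, s.length = t.length → List.Lex (· < ·) (ins s a) (ins t a) := by
  induction h with
  | nil => intro a hlen; simp at hlen
  | @cons x l1 l2 h ih =>
    intro a hlen
    simp only [List.length_cons, Nat.add_right_cancel_iff] at hlen
    by_cases hxa : x ≤ a
    · rw [ins_cons_le l1 hxa, ins_cons_le l2 hxa]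
      exact List.Lex.cons (ih a hlen)
    · rw [ins_cons_gt l1 (Nat.not_le.1 hxa), ins_cons_gt l2 (Nat.not_le.1 hxa)]
      exact List.Lex.cons (lex_map_succ (List.Lex.cons h))
  | @rel x l1 y l2 h =>
    intro a _
    rcases Nat.lt_or_ge a x with hax | hxa
    · -- a < x < y
      rw [ins_cons_gt l1 hax, ins_cons_gt l2 (lt_trans hax h)]
      exact List.Lex.cons (lex_map_succ (List.Lex.rel h))
    · -- x ≤ a
      rw [ins_cons_le l1 hxa]
      by_cases hya : y ≤ a
      · rw [ins_cons_le l2 hya]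
        exact List.Lex.rel h
      · rw [ins_cons_gt l2 (Nat.not_le.1 hya)]
        rcases Nat.lt_or_ge x a with hxa' | haxx
        · exact List.Lex.rel hxa'
        · -- x = a
          have hxeq : x = a := le_antisymm hxa haxx
          subst hxeq
          obtain ⟨hh, hr, heq, hle⟩ := ins_head_le l1 x
          rw [heq, List.map_cons]
          exact List.Lex.cons (List.Lex.rel (by omega))

lemma lex_lins {s t : List ℕ} (h : List.Lex (· < ·) s t) :
    ∀ c, s.length = t.length → List.Lex (· < ·) (lins c s) (lins c t) := by
  induction h with
  | nil => intro c hlen; simp at hlen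
  | @cons x l1 l2 h ih =>
    intro c hlen
    simp only [List.length_cons, Nat.add_right_cancel_iff] at hlen
    by_cases hxc : x < c
    · rw [lins_cons_lt l1 hxc, lins_cons_lt l2 hxc]
      exact List.Lex.cons (ih (c+1) hlen)
    · rw [lins_cons_ge l1 (Nat.not_lt.1 hxc), lins_cons_ge l2 (Nat.not_lt.1 hxc)]
      exact List.Lex.cons (List.Lex.cons h)
  | @rel x l1 y l2 h =>
    intro c _
    rcases Nat.lt_or_ge y c with hyc | hcy
    · rw [lins_cons_lt l1 (lt_trans h hyc), lins_cons_lt l2 hyc]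
      exact List.Lex.rel h
    · rw [lins_cons_ge l2 hcy]
      by_cases hxc : x < c
      · rw [lins_cons_lt l1 hxc]
        exact List.Lex.rel hxc
      · rw [lins_cons_ge l1 (Nat.not_lt.1 hxc)]
        exact List.Lex.cons (List.Lex.rel h)

lemma lex_foldl (r : List ℕ) : ∀ {s t : List ℕ}, s.length = t.length →
    List.Lex (· < ·) s t → List.Lex (· < ·) (r.foldl ins s) (r.foldl ins t) := by
  induction r with
  | nil => intro s t _ h; exact h
  | cons a r ih =>
    intro s t hlen h
    rw [List.foldl_cons, List.foldl_cons]
    exact ih (by rw [ins_length, ins_length, hlen]) (lex_ins h a hlen)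


/-! ### Counting characterization of Lex for sorted lists -/

def CC (s t : List ℕ) : Prop :=
  ∃ i, (∀ j, j < i → s.count j = t.count j) ∧ t.count i < s.count i

lemma count_eq_zero_of_sorted_lt {x : ℕ} {l : List ℕ} (hl : (x :: l).Pairwise (· ≤ ·))
    {j : ℕ} (hj : j < x) : (x :: l).count j = 0 := by
  rw [List.count_eq_zero]
  intro hmem
  rcases List.mem_cons.1 hmem with rfl | hmem
  · omega
  · have := (List.pairwise_cons.1 hl).1 j hmem
    omega

lemma lex_to_CC {s t : List ℕ} (h : List.Lex (· < ·) s t) :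
    s.Pairwise (· ≤ ·) → t.Pairwise (· ≤ ·) → s.length = t.length → CC s t := by
  induction h with
  | nil => intro _ _ hlen; simp at hlen
  | @cons x l1 l2 h ih =>
    intro hs ht hlen
    simp only [List.length_cons, Nat.add_right_cancel_iff] at hlen
    obtain ⟨i, h1, h2⟩ := ih (List.pairwise_cons.1 hs).2 (List.pairwise_cons.1 ht).2 hlen
    refine ⟨i, fun j hj => ?_, ?_⟩
    · simp [List.count_cons, h1 j hj]
    · simp only [List.count_cons]
      by_cases hxi : x = i <;> simp [hxi] <;> omega
  | @rel x l1 y l2 h =>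
    intro hs ht _
    refine ⟨x, fun j hj => ?_, ?_⟩
    · rw [count_eq_zero_of_sorted_lt hs hj, count_eq_zero_of_sorted_lt ht (lt_trans hj h)]
    · rw [count_eq_zero_of_sorted_lt ht h]
      simp [List.count_cons]

lemma CC_asymm {s t : List ℕ} (h1 : CC s t) (h2 : CC t s) : False := by
  obtain ⟨i, hi1, hi2⟩ := h1
  obtain ⟨i', hi1', hi2'⟩ := h2
  rcases lt_trichotomy i i' with hlt | rfl | hlt
  · have := hi1' i hlt; omega
  · omega
  · have := hi1 i' hlt; omega

lemma lex_iff_CC {s t : List ℕ} (hs : s.Pairwise (· ≤ ·)) (ht : t.Pairwise (· ≤ ·))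
    (hlen : s.length = t.length) : List.Lex (· < ·) s t ↔ CC s t := by
  constructor
  · intro h; exact lex_to_CC h hs ht hlen
  · intro h
    rcases trichotomous_of (List.Lex (· < ·)) s t with hl | rfl | hl
    · exact hl
    · obtain ⟨i, _, hi⟩ := h; omega
    · exact absurd (lex_to_CC hl ht hs hlen.symm) (fun h' => CC_asymm h h')

lemma CC_shape (s t : List ℕ) :
    (t.count 0 < s.count 0 ∨ (s.count 0 = t.count 0 ∧ ∃ i, 1 ≤ i ∧
      (∀ j, j < i → s.count j = t.count j) ∧ t.count i < s.count i)) ↔ CC s t := by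
  constructor
  · rintro (h | ⟨h0, i, _, hj, hi⟩)
    · exact ⟨0, fun j hj => absurd hj (Nat.not_lt_zero j), h⟩
    · exact ⟨i, hj, hi⟩
  · rintro ⟨i, hj, hi⟩
    rcases Nat.eq_zero_or_pos i with rfl | hpos
    · exact Or.inl hi
    · exact Or.inr ⟨hj 0 hpos, i, hpos, hj, hi⟩

/-! ### Characterization of `tlt` -/

lemma tlt_iff (u v : ThompsonS) : tlt u v ↔
    ((nf u).length < (nf v).length ∨
      ((nf u).length = (nf v).length ∧ List.Lex (· < ·) (nf u) (nf v))) := by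
  rw [tlt]
  simp only [ind_eq, indAt_eq]
  constructor
  · rintro (h | ⟨hlen, hrest⟩)
    · exact Or.inl h
    · refine Or.inr ⟨hlen, ?_⟩
      rw [lex_iff_CC (nf_sorted u) (nf_sorted v) hlen]
      exact (CC_shape (nf u) (nf v)).1 hrest
  · rintro (h | ⟨hlen, hlex⟩)
    · exact Or.inl h
    · refine Or.inr ⟨hlen, (CC_shape (nf u) (nf v)).2 ?_⟩
      rw [← lex_iff_CC (nf_sorted u) (nf_sorted v) hlen]
      exact hlex

lemma tlt_irrefl (u : ThompsonS) : ¬ tlt u u := by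
  rintro (h | ⟨-, h | ⟨-, i, -, -, h⟩⟩) <;> omega

lemma tlt_ne {u v : ThompsonS} (h : tlt u v) : u ≠ v := by
  rintro rfl; exact tlt_irrefl u h

lemma tlt_trans {u v w : ThompsonS} (h1 : tlt u v) (h2 : tlt v w) : tlt u w := by
  rw [tlt_iff] at *
  rcases h1 with h1 | ⟨hl1, hx1⟩ <;> rcases h2 with h2 | ⟨hl2, hx2⟩
  · exact Or.inl (lt_trans h1 h2)
  · exact Or.inl (hl2 ▸ h1)
  · exact Or.inl (hl1 ▸ h2)
  · exact Or.inr ⟨hl1.trans hl2, List.lex_trans lt_trans hx1 hx2⟩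

lemma tlt_total {u v : ThompsonS} (h : u ≠ v) : tlt u v ∨ tlt v u := by
  rcases lt_trichotomy (nf u).length (nf v).length with hl | hl | hl
  · exact Or.inl ((tlt_iff u v).2 (Or.inl hl))
  · have hne : nf u ≠ nf v := fun he => h (nf_inj he)
    rcases trichotomous_of (List.Lex (· < ·)) (nf u) (nf v) with hx | hx | hx
    · exact Or.inl ((tlt_iff u v).2 (Or.inr ⟨hl, hx⟩))
    · exact absurd hx hne
    · exact Or.inr ((tlt_iff v u).2 (Or.inr ⟨hl.symm, hx⟩))
  · exact Or.inr ((tlt_iff v u).2 (Or.inl hl))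

/-! ### Monotonicity of `tlt` under multiplication -/

lemma tlt_mul_right {u v : ThompsonS} (h : tlt u v) (w : ThompsonS) :
    tlt (u * w) (v * w) := by
  rw [tlt_iff] at h ⊢
  rcases h with h | ⟨hlen, hlex⟩
  · exact Or.inl (by rw [nf_length_mul, nf_length_mul]; omega)
  · refine Or.inr ⟨by rw [nf_length_mul, nf_length_mul, hlen], ?_⟩
    rw [nf_mul, nf_mul]
    exact lex_foldl (nf w) hlen hlex

lemma tlt_X_mul {u v : ThompsonS} (h : tlt u v) (c : ℕ) :
    tlt (X c * u) (X c * v) := by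
  rw [tlt_iff] at h ⊢
  rcases h with h | ⟨hlen, hlex⟩
  · exact Or.inl (by rw [nf_X_mul, nf_X_mul, lins_length, lins_length]; omega)
  · refine Or.inr ⟨by rw [nf_X_mul, nf_X_mul, lins_length, lins_length, hlen], ?_⟩
    rw [nf_X_mul, nf_X_mul]
    exact lex_lins hlex c hlen

lemma tlt_e_mul {u v : ThompsonS} (h : tlt u v) (s : List ℕ) :
    tlt (e s * u) (e s * v) := by
  induction s with
  | nil =>
    have he : e [] = 1 := map_one thompsonCon.mk'
    rwa [he, one_mul, one_mul]
  | cons a s ih =>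
    have ha : e [a] = X a := rfl
    rw [e_cons, ha, mul_assoc, mul_assoc]
    exact tlt_X_mul ih a

lemma tlt_mul_left {u v : ThompsonS} (h : tlt u v) (w : ThompsonS) :
    tlt (w * u) (w * v) := by
  obtain ⟨z, rfl⟩ := Con.mk'_surjective (c := thompsonCon) w
  have : thompsonCon.mk' z = e z.toList := rfl
  rw [this]
  exact tlt_e_mul h z.toList

lemma tle_refl (u : ThompsonS) : tle u u := Or.inr rfl

lemma tlt_tle_mul {u v P Q : ThompsonS} (h1 : tlt u v) (h2 : tle P Q) :
    tlt (u * P) (v * Q) := by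
  rcases h2 with h2 | rfl
  · exact tlt_trans (tlt_mul_right h1 P) (tlt_mul_left h2 v)
  · exact tlt_mul_right h1 P


end TT

/-- The total order `≼` on Thompson's semigroup is compatible with multiplication:
if `u_i ≼ v_i` for `1 ≤ i ≤ n`, then `u_1⋯u_n ≼ v_1⋯v_n`, with equality iff
`u_i = v_i` for all `i`. -/
theorem thompson_order_mul (us vs : List ThompsonS) (h : List.Forall₂ tle us vs) :
    tle us.prod vs.prod ∧ (us.prod = vs.prod ↔ us = vs) := by
  induction h with
  | nil => exact ⟨Or.inr rfl, by simp⟩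
  | @cons u v us vs huv hrest ih =>
    obtain ⟨ihle, ihiff⟩ := ih
    rw [List.prod_cons, List.prod_cons]
    refine ⟨?_, ?_, ?_⟩
    · rcases huv with hlt | rfl
      · exact Or.inl (TT.tlt_tle_mul hlt ihle)
      · rcases ihle with hlt | heq
        · exact Or.inl (TT.tlt_mul_left hlt u)
        · exact Or.inr (by rw [heq])
    · intro heq
      rcases huv with hlt | rfl
      · exact absurd heq (TT.tlt_ne (TT.tlt_tle_mul hlt ihle))
      · have hPQ : us.prod = vs.prod := by
          by_contra hne
          rcases TT.tlt_total hne with h' | h'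
          · exact TT.tlt_ne (TT.tlt_mul_left h' u) heq
          · exact TT.tlt_ne (TT.tlt_mul_left h' u) heq.symm
        rw [ihiff.1 hPQ]
    · intro heq
      injection heq with h1 h2
      rw [h1, h2]
end

section
/- Every nonempty subset of Thompson's semigroup has a unique minimal element with respect to the total order ≼ (i.e., ≼ is a well-order on S). -/
/- ──────────────────────── auxiliary development ──────────────────────── -/

open Relation

/-- Insertion of a letter into a (reversed, i.e. decreasing) stack, implementing
the rewriting `X_j X_i → X_i X_{j+1}`. -/
def tins : List ℕ → ℕ → List ℕ
  | [], a => [a]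
  | c :: t, a => if c ≤ a then a :: c :: t else (c + 1) :: tins t a

/-- Normal form (as a decreasing list) of a word. -/
def tnf (w : List ℕ) : List ℕ := w.foldl tins []

lemma tins_key : ∀ (s : List ℕ) (i j : ℕ), i < j →
    tins (tins s j) i = tins (tins s i) (j + 1) := by
  intro s
  induction s with
  | nil =>
      intro i j h
      simp [tins, Nat.not_le.2 h, h.le.trans (Nat.le_succ j)]
  | cons c t IH =>
      intro i j h
      rcases le_or_gt c i with hci | hic
      · have hcj : c ≤ j := hci.trans h.le
        simp [tins, hci, hcj, Nat.not_le.2 h, h.le.trans (Nat.le_succ j)]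
      · rcases le_or_gt c j with hcj | hjc
        · simp [tins, hcj, Nat.not_le.2 hic, Nat.not_le.2 h, Nat.succ_le_succ hcj]
        · have h1 : ¬ c ≤ j := Nat.not_le.2 hjc
          have h2 : ¬ c ≤ i := Nat.not_le.2 hic
          have h3 : ¬ c + 1 ≤ i := by omega
          have h4 : ¬ c + 1 ≤ j + 1 := by omega
          simp [tins, h1, h2, h3, h4, IH i j h]

/-- One rewriting step (in context). -/
def tstep (u v : List ℕ) : Prop :=
  ∃ (x y : List ℕ) (i j : ℕ), i < j ∧ u = x ++ j :: i :: y ∧ v = x ++ i :: (j + 1) :: y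

lemma tnf_tstep {u v : List ℕ} (h : tstep u v) : tnf u = tnf v := by
  obtain ⟨x, y, i, j, hij, rfl, rfl⟩ := h
  simp only [tnf, List.foldl_append, List.foldl_cons]
  rw [tins_key _ _ _ hij]

lemma tstep_context {u v : List ℕ} (x y : List ℕ) (h : tstep u v) :
    tstep (x ++ u ++ y) (x ++ v ++ y) := by
  obtain ⟨p, q, i, j, hij, rfl, rfl⟩ := h
  exact ⟨x ++ p, q ++ y, i, j, hij, by simp, by simp⟩

lemma estep_context {u v : List ℕ} (x y : List ℕ) (h : EqvGen tstep u v) :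
    EqvGen tstep (x ++ u ++ y) (x ++ v ++ y) := by
  induction h with
  | rel a b hab => exact EqvGen.rel _ _ (tstep_context x y hab)
  | refl a => exact EqvGen.refl _
  | symm a b _ ih => exact EqvGen.symm _ _ ih
  | trans a b c _ _ ih1 ih2 => exact EqvGen.trans _ _ _ ih1 ih2

lemma estep_length {u v : List ℕ} (h : EqvGen tstep u v) : u.length = v.length := by
  induction h with
  | rel a b hab => obtain ⟨x, y, i, j, _, rfl, rfl⟩ := hab; simp
  | refl a => rfl
  | symm a b _ ih => exact ih.symm
  | trans a b c _ _ ih1 ih2 => exact ih1.trans ih2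

lemma estep_tnf {u v : List ℕ} (h : EqvGen tstep u v) : tnf u = tnf v := by
  induction h with
  | rel a b hab => exact tnf_tstep hab
  | refl a => rfl
  | symm a b _ ih => exact ih.symm
  | trans a b c _ _ ih1 ih2 => exact ih1.trans ih2

/-- The congruence corresponding to `EqvGen tstep`. -/
def tcon2 : Con (FreeMonoid ℕ) where
  r a b := EqvGen tstep a.toList b.toList
  iseqv := ⟨fun _ => EqvGen.refl _, fun h => EqvGen.symm _ _ h,
    fun h1 h2 => EqvGen.trans _ _ _ h1 h2⟩
  mul' {a b c d} h1 h2 := by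
    have e1 := estep_context [] c.toList h1
    have e2 := estep_context b.toList [] h2
    simp only [List.nil_append, List.append_nil] at e1 e2
    exact EqvGen.trans _ _ _ e1 e2

lemma ofList_pair (j i : ℕ) :
    FreeMonoid.ofList [j, i] = FreeMonoid.of j * FreeMonoid.of i := rfl

lemma con_iff_estep (u v : List ℕ) :
    thompsonCon (FreeMonoid.ofList u) (FreeMonoid.ofList v) ↔ EqvGen tstep u v := by
  constructor
  · intro h
    have hle : thompsonCon ≤ tcon2 := by
      apply Con.conGen_le.2
      rintro a b ⟨i, j, hij, rfl, rfl⟩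
      exact EqvGen.rel _ _ ⟨[], [], i, j, hij, rfl, rfl⟩
    exact hle h
  · intro h
    induction h with
    | rel a b hab =>
        obtain ⟨x, y, i, j, hij, rfl, rfl⟩ := hab
        have base : thompsonCon (FreeMonoid.ofList [j, i]) (FreeMonoid.ofList [i, j + 1]) :=
          ConGen.Rel.of _ _ ⟨i, j, hij, rfl, rfl⟩
        have h1 : FreeMonoid.ofList (x ++ j :: i :: y) =
            FreeMonoid.ofList x * FreeMonoid.ofList [j, i] * FreeMonoid.ofList y := by
          rw [show x ++ j :: i :: y = x ++ [j, i] ++ y by simp, FreeMonoid.ofList_append,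
            FreeMonoid.ofList_append]
        have h2 : FreeMonoid.ofList (x ++ i :: (j + 1) :: y) =
            FreeMonoid.ofList x * FreeMonoid.ofList [i, j + 1] * FreeMonoid.ofList y := by
          rw [show x ++ i :: (j + 1) :: y = x ++ [i, j + 1] ++ y by simp,
            FreeMonoid.ofList_append, FreeMonoid.ofList_append]
        rw [h1, h2]
        exact thompsonCon.mul (thompsonCon.mul (thompsonCon.refl _) base) (thompsonCon.refl _)
    | refl a => exact thompsonCon.refl _
    | symm a b _ ih => exact thompsonCon.symm ih
    | trans a b c _ _ ih1 ih2 => exact thompsonCon.trans ih1 ih2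

/-- Interpret a list as an element of `ThompsonS`. -/
def mkw (w : List ℕ) : ThompsonS := thompsonCon.mk' (FreeMonoid.ofList w)

lemma mkw_eq_iff {u v : List ℕ} : mkw u = mkw v ↔ EqvGen tstep u v := by
  have h : mkw u = mkw v ↔ thompsonCon (FreeMonoid.ofList u) (FreeMonoid.ofList v) := Con.eq _
  exact h.trans (con_iff_estep u v)

lemma tins_le {s : List ℕ} {a M : ℕ} (hs : ∀ x ∈ s, x ≤ M) (ha : a ≤ M) :
    ∀ x ∈ tins s a, x ≤ M + 1 := by
  induction s with
  | nil =>
      intro x hx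
      simp only [tins, List.mem_singleton] at hx
      omega
  | cons c t IH =>
      intro x hx
      by_cases hca : c ≤ a
      · simp only [tins, if_pos hca] at hx
        rcases List.mem_cons.1 hx with rfl | hx
        · omega
        · have := hs x hx
          omega
      · simp only [tins, if_neg hca] at hx
        rcases List.mem_cons.1 hx with rfl | hx
        · have := hs c (by simp)
          omega
        · exact IH (fun y hy => hs y (by simp [hy])) x hx

lemma tins_pairwise {s : List ℕ} {a : ℕ} (hs : s.Pairwise (· ≥ ·)) :
    (tins s a).Pairwise (· ≥ ·) := by
  induction s with
  | nil => simp [tins]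
  | cons c t IH =>
      rcases List.pairwise_cons.1 hs with ⟨hc, ht⟩
      by_cases hca : c ≤ a
      · simp only [tins, if_pos hca]
        refine List.pairwise_cons.2 ⟨?_, hs⟩
        intro b hb
        rcases List.mem_cons.1 hb with rfl | hb
        · exact hca
        · exact (hc b hb).trans hca
      · simp only [tins, if_neg hca]
        refine List.pairwise_cons.2 ⟨?_, IH ht⟩
        intro b hb
        exact tins_le hc (by omega) b hb

lemma tins_reach : ∀ (s : List ℕ) (a : ℕ) (w : List ℕ), s.Pairwise (· ≥ ·) →
    EqvGen tstep (s.reverse ++ a :: w) ((tins s a).reverse ++ w) := by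
  intro s
  induction s with
  | nil =>
      intro a w _
      exact EqvGen.refl _
  | cons c t IH =>
      intro a w hs
      by_cases hca : c ≤ a
      · simp only [tins, if_pos hca, List.reverse_cons, List.append_assoc, List.cons_append,
          List.nil_append]
        exact EqvGen.refl _
      · have hac : a < c := Nat.not_le.1 hca
        have hstep : tstep (t.reverse ++ c :: a :: w) (t.reverse ++ a :: (c + 1) :: w) :=
          ⟨t.reverse, w, a, c, hac, rfl, rfl⟩
        have h1 : EqvGen tstep (t.reverse ++ a :: (c + 1) :: w)
            ((tins t a).reverse ++ (c + 1) :: w) := IH a ((c + 1) :: w) hs.of_cons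
        have hgoal1 : (c :: t).reverse ++ a :: w = t.reverse ++ c :: a :: w := by
          simp
        have hgoal2 : (tins (c :: t) a).reverse ++ w = (tins t a).reverse ++ (c + 1) :: w := by
          simp [tins, if_neg hca]
        rw [hgoal1, hgoal2]
        exact EqvGen.trans _ _ _ (EqvGen.rel _ _ hstep) h1

lemma tnf_pairwise (w : List ℕ) : (tnf w).Pairwise (· ≥ ·) := by
  suffices h : ∀ (w s : List ℕ), s.Pairwise (· ≥ ·) → (w.foldl tins s).Pairwise (· ≥ ·) by
    exact h w [] (by simp)
  intro w
  induction w with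
  | nil => intro s hs; exact hs
  | cons a w' IH => intro s hs; exact IH (tins s a) (tins_pairwise hs)

lemma tnf_reach (w : List ℕ) : EqvGen tstep w (tnf w).reverse := by
  suffices h : ∀ (w s : List ℕ), s.Pairwise (· ≥ ·) →
      EqvGen tstep (s.reverse ++ w) ((w.foldl tins s).reverse) by
    simpa [tnf] using h w [] (by simp)
  intro w
  induction w with
  | nil =>
      intro s _
      simp only [List.foldl_nil, List.append_nil]
      exact EqvGen.refl _
  | cons a w' IH =>
      intro s hs
      have h1 := tins_reach s a w' hs
      have h2 := IH (tins s a) (tins_pairwise hs)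
      exact EqvGen.trans _ _ _ h1 h2

lemma tnf_sorted (w : List ℕ) : (tnf w).reverse.Pairwise (· ≤ ·) := by
  have := tnf_pairwise w
  exact List.pairwise_reverse.2 this

lemma tnf_of_sorted {s : List ℕ} (hs : s.Pairwise (· ≤ ·)) : tnf s = s.reverse := by
  suffices h : ∀ (s t : List ℕ), (∀ x ∈ t, ∀ y ∈ s, x ≤ y) → s.Pairwise (· ≤ ·) →
      s.foldl tins t = s.reverse ++ t by
    simpa [tnf] using h s [] (by simp) hs
  intro s
  induction s with
  | nil => intro t _ _; simp
  | cons a s' IH =>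
      intro t ht hsort
      have h1 : tins t a = a :: t := by
        cases t with
        | nil => rfl
        | cons c t' => simp [tins, ht c (by simp) a (by simp)]
      rw [List.foldl_cons, h1, IH (a :: t) ?_ (List.pairwise_cons.1 hsort).2]
      · simp
      · intro x hx y hy
        rcases List.mem_cons.1 hx with rfl | hx
        · exact (List.pairwise_cons.1 hsort).1 y hy
        · exact ht x hx y (by simp [hy])

/-- A chosen representative. -/
noncomputable def trep (x : ThompsonS) : FreeMonoid ℕ := (Con.mk'_surjective x).choose

lemma trep_spec (x : ThompsonS) : thompsonCon.mk' (trep x) = x :=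
  (Con.mk'_surjective x).choose_spec

/-- The normal form of an element of `ThompsonS`: the unique sorted word representing it. -/
noncomputable def tNF (x : ThompsonS) : List ℕ := (tnf (trep x).toList).reverse

lemma tNF_sorted (x : ThompsonS) : (tNF x).Pairwise (· ≤ ·) := tnf_sorted _

lemma mkw_toList (w : FreeMonoid ℕ) : mkw w.toList = thompsonCon.mk' w := rfl

lemma tNF_spec (x : ThompsonS) : mkw (tNF x) = x := by
  have h := tnf_reach (trep x).toList
  have h2 : mkw (trep x).toList = mkw (tNF x) := mkw_eq_iff.2 h
  rw [← h2, mkw_toList, trep_spec]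

lemma tNF_unique {s : List ℕ} {x : ThompsonS} (hs : s.Pairwise (· ≤ ·)) (hx : mkw s = x) :
    s = tNF x := by
  have h : mkw s = mkw (tNF x) := by rw [hx, tNF_spec]
  have h2 := estep_tnf (mkw_eq_iff.1 h)
  rw [tnf_of_sorted hs, tnf_of_sorted (tNF_sorted x)] at h2
  exact List.reverse_injective h2

lemma tNF_inj {x y : ThompsonS} (h : tNF x = tNF y) : x = y := by
  rw [← tNF_spec x, ← tNF_spec y, h]

lemma ind_eq (x : ThompsonS) : ind x = (tNF x).length := by
  have hset : {n | ∃ w : FreeMonoid ℕ, thompsonCon.mk' w = x ∧ w.length = n} =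
      {(tNF x).length} := by
    ext n
    simp only [Set.mem_setOf_eq, Set.mem_singleton_iff]
    constructor
    · rintro ⟨w, hw, rfl⟩
      have h1 : mkw w.toList = mkw (tNF x) := by rw [mkw_toList, hw, tNF_spec]
      exact estep_length (mkw_eq_iff.1 h1)
    · rintro rfl
      exact ⟨FreeMonoid.ofList (tNF x), tNF_spec x, rfl⟩
  rw [ind, hset, csInf_singleton]

lemma indAt_eq (i : ℕ) (x : ThompsonS) : indAt i x = (tNF x).count i := by
  have hset : {n | ∃ w : List ℕ, w.Pairwise (· ≤ ·) ∧
      thompsonCon.mk' (FreeMonoid.ofList w) = x ∧ w.count i = n} = {(tNF x).count i} := by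
    ext n
    simp only [Set.mem_setOf_eq, Set.mem_singleton_iff]
    constructor
    · rintro ⟨w, hw, hx, rfl⟩
      rw [tNF_unique hw hx]
    · rintro rfl
      exact ⟨tNF x, tNF_sorted x, tNF_spec x, rfl⟩
  rw [indAt, hset, csInf_singleton]

lemma tlt_iff {u v : ThompsonS} :
    tlt u v ↔ (ind u < ind v ∨ (ind u = ind v ∧
      ∃ i, (∀ j, j < i → indAt j u = indAt j v) ∧ indAt i v < indAt i u)) := by
  constructor
  · rintro (h | ⟨he, h0 | ⟨h0, i, hi1, hjs, hlt⟩⟩)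
    · exact Or.inl h
    · exact Or.inr ⟨he, 0, fun j hj => absurd hj (Nat.not_lt_zero j), h0⟩
    · refine Or.inr ⟨he, i, ?_, hlt⟩
      exact hjs
  · rintro (h | ⟨he, i, hjs, hlt⟩)
    · exact Or.inl h
    · refine Or.inr ⟨he, ?_⟩
      rcases Nat.eq_zero_or_pos i with rfl | hi
      · exact Or.inl hlt
      · exact Or.inr ⟨hjs 0 hi, i, hi, hjs, hlt⟩

lemma tlt_asymm {u v : ThompsonS} (h1 : tlt u v) (h2 : tlt v u) : False := by
  rw [tlt_iff] at h1 h2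
  rcases h1 with h1 | ⟨he1, i, hjs1, hlt1⟩ <;> rcases h2 with h2 | ⟨he2, i', hjs2, hlt2⟩
  · omega
  · omega
  · omega
  · rcases lt_trichotomy i i' with h | rfl | h
    · have := hjs2 i h
      omega
    · omega
    · have := hjs1 i' h
      omega

/-- The count-lexicographic order on words. -/
def clt (s t : List ℕ) : Prop :=
  ∃ i, (∀ j, j < i → s.count j = t.count j) ∧ t.count i < s.count i

lemma count_eq_zero_of_sorted_lt {a : ℕ} {t : List ℕ} (hs : (a :: t).Pairwise (· ≤ ·))
    {j : ℕ} (hj : j < a) : (a :: t).count j = 0 := by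
  rw [List.count_eq_zero]
  intro hmem
  rcases List.mem_cons.1 hmem with rfl | hmem
  · omega
  · have := (List.pairwise_cons.1 hs).1 j hmem
    omega

lemma exists_min_word : ∀ (n : ℕ) (S : Set (List ℕ)), S.Nonempty →
    (∀ w ∈ S, w.Pairwise (· ≤ ·) ∧ w.length = n) →
    ∃ m ∈ S, ∀ w ∈ S, m = w ∨ clt m w := by
  intro n
  induction n with
  | zero =>
      rintro S ⟨w0, hw0⟩ hS
      have h0 : w0 = [] := List.length_eq_zero_iff.1 (hS w0 hw0).2
      subst h0
      exact ⟨[], hw0, fun w hw => Or.inl (List.length_eq_zero_iff.1 (hS w hw).2).symm⟩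
  | succ n IH =>
      rintro S ⟨w0, hw0⟩ hS
      have hne : ∀ w ∈ S, w ≠ [] := by
        intro w hw h
        have := (hS w hw).2
        rw [h] at this
        simp at this
      have hHne : {a : ℕ | ∃ t, a :: t ∈ S}.Nonempty := by
        obtain ⟨a, t, rfl⟩ := List.exists_cons_of_ne_nil (hne w0 hw0)
        exact ⟨a, t, hw0⟩
      set h := sInf {a : ℕ | ∃ t, a :: t ∈ S} with hh
      have hhH : h ∈ {a : ℕ | ∃ t, a :: t ∈ S} := Nat.sInf_mem hHne
      obtain ⟨t0, ht0⟩ := hhH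
      have hS'prop : ∀ t ∈ {t | h :: t ∈ S}, t.Pairwise (· ≤ ·) ∧ t.length = n := by
        intro t ht
        have h2 := hS _ ht
        exact ⟨(List.pairwise_cons.1 h2.1).2, by simpa using h2.2⟩
      obtain ⟨m', hm'S, hm'⟩ := IH {t | h :: t ∈ S} ⟨t0, ht0⟩ hS'prop
      have hmS : h :: m' ∈ S := hm'S
      refine ⟨h :: m', hmS, ?_⟩
      intro w hw
      obtain ⟨a, t, rfl⟩ := List.exists_cons_of_ne_nil (hne w hw)
      have hha : h ≤ a := Nat.sInf_le ⟨t, hw⟩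
      rcases eq_or_lt_of_le hha with rfl | hlt
      · rcases hm' t hw with rfl | hclt
        · exact Or.inl rfl
        · right
          obtain ⟨i, hjs, hlt'⟩ := hclt
          refine ⟨i, ?_, ?_⟩
          · intro j hj
            rw [List.count_cons, List.count_cons, hjs j hj]
          · rcases eq_or_ne i h with rfl | hih
            · simp only [List.count_cons_self]
              omega
            · simp only [List.count_cons_of_ne (Ne.symm hih)]
              exact hlt'
      · right
        refine ⟨h, ?_, ?_⟩
        · intro j hj
          rw [count_eq_zero_of_sorted_lt (hS _ hmS).1 hj,
            count_eq_zero_of_sorted_lt (hS _ hw).1 (hj.trans hlt)]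
        · have h2 : (a :: t).count h = 0 := count_eq_zero_of_sorted_lt (hS _ hw).1 hlt
          have h1 : 0 < (h :: m').count h := List.count_pos_iff.2 (by simp)
          omega

/-- Every nonempty subset of Thompson's semigroup has a unique minimal element
with respect to the total order `≼` (i.e. `≼` is a well-order). -/
theorem thompson_exists_unique_min (A : Set ThompsonS) (hA : A.Nonempty) :
    ∃! m : ThompsonS, m ∈ A ∧ ∀ a ∈ A, tle m a := by
  have hine : (ind '' A).Nonempty := hA.image ind
  set n := sInf (ind '' A) with hn
  obtain ⟨a₀, ha₀A, ha₀⟩ := Nat.sInf_mem hine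
  have hSne : (tNF '' {a | a ∈ A ∧ ind a = n}).Nonempty := ⟨tNF a₀, a₀, ⟨ha₀A, ha₀⟩, rfl⟩
  have hSprop : ∀ w ∈ tNF '' {a | a ∈ A ∧ ind a = n}, w.Pairwise (· ≤ ·) ∧ w.length = n := by
    rintro w ⟨a, ⟨haA, hand⟩, rfl⟩
    exact ⟨tNF_sorted a, by rw [← ind_eq, hand]⟩
  obtain ⟨mw, hmwS, hmin⟩ := exists_min_word n _ hSne hSprop
  obtain ⟨m, ⟨hmA, hmind⟩, hmw⟩ := hmwS
  have hmintle : ∀ a ∈ A, tle m a := by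
    intro a haA
    by_cases hia : ind a = n
    · have hNFa : tNF a ∈ tNF '' {a | a ∈ A ∧ ind a = n} := ⟨a, ⟨haA, hia⟩, rfl⟩
      rcases hmin _ hNFa with heq | hclt
      · right
        exact tNF_inj (by rw [hmw, heq])
      · left
        rw [tlt_iff]
        right
        refine ⟨hmind.trans hia.symm, ?_⟩
        obtain ⟨i, hjs, hlt⟩ := hclt
        refine ⟨i, fun j hj => ?_, ?_⟩
        · rw [indAt_eq, indAt_eq, hmw]
          exact hjs j hj
        · rw [indAt_eq, indAt_eq, hmw]
          exact hlt
    · left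
      rw [tlt_iff]
      left
      have h1 : n ≤ ind a := Nat.sInf_le ⟨a, haA, rfl⟩
      omega
  refine ⟨m, ⟨hmA, hmintle⟩, ?_⟩
  rintro m' ⟨hm'A, hm'min⟩
  rcases hm'min m hmA with h1 | h1
  · rcases hmintle m' hm'A with h2 | h2
    · exact (tlt_asymm h1 h2).elim
    · exact h2.symm
  · exact h1
end

section
/- The free semigroup F_n on n ≥ 2 generators is a unique factorization semigroup: there is a countable subset {X_1, X_2, X_3, ...} of F_n such that every nontrivial element can be uniquely written as X_{i_1}^{α_1} ⋯ X_{i_k}^{α_k} with i_1 < ⋯ < i_k and α_j ≥ 1. -/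
/-- The product `X_{i_1}^{α_1} ⋯ X_{i_k}^{α_k}` encoded by a list of
(index, exponent) pairs. -/
def factorProd {M : Type*} [Monoid M] (X : ℕ → M) (l : List (ℕ × ℕ)) : M :=
  (l.map fun p => X p.1 ^ p.2).prod

/-- A monoid `M` is a unique factorization semigroup if there is a countable family
`X_1, X_2, …` in `M` such that (i) every nontrivial element can be uniquely written as
`X_{i_1}^{α_1} ⋯ X_{i_k}^{α_k}` with `i_1 < ⋯ < i_k` and positive exponents `α_j`, and
(ii) no nontrivial product of nonnegative powers of the `X_i` equals the unit. -/
def IsUniqueFactorizationSemigroup (M : Type*) [Monoid M] : Prop :=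
  ∃ X : ℕ → M,
    (∀ m : M, m ≠ 1 → ∃! l : List (ℕ × ℕ),
      l.Chain' (fun p q => p.1 < q.1) ∧ (∀ p ∈ l, 0 < p.2) ∧ factorProd X l = m) ∧
    (∀ l : List (ℕ × ℕ), l.Chain' (fun p q => p.1 < q.1) → factorProd X l = 1 →
      ∀ p ∈ l, p.2 = 0)

namespace UFS
open List

section Parse
variable {A : Type} {g : A}

/-- Decode a list of blocks `(c, i) ↦ c g^i` into a word over `A`. -/
def blocks (g : A) (m : List ({a : A // a ≠ g} × ℕ)) : List A :=
  m.flatMap fun p => p.1.1 :: List.replicate p.2 g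

/-- `rep g α m = g^α ++ blocks m`. -/
def rep (g : A) (α : ℕ) (m : List ({a : A // a ≠ g} × ℕ)) : List A :=
  List.replicate α g ++ blocks g m

open Classical in
/-- Parse a word over `A` as `g^α ++ blocks m`. -/
noncomputable def parse (g : A) : List A → ℕ × List ({a : A // a ≠ g} × ℕ)
  | [] => (0, [])
  | a :: l =>
    if h : a = g then ((parse g l).1 + 1, (parse g l).2)
    else (0, (⟨a, h⟩, (parse g l).1) :: (parse g l).2)

@[simp] lemma blocks_nil : blocks g ([] : List ({a : A // a ≠ g} × ℕ)) = [] := rfl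

@[simp] lemma blocks_cons (p : {a : A // a ≠ g} × ℕ) (m) :
    blocks g (p :: m) = p.1.1 :: (List.replicate p.2 g ++ blocks g m) := by
  simp [blocks]

@[simp] lemma parse_nil : parse g ([] : List A) = (0, []) := by simp [parse]

lemma rep_parse (l : List A) : rep g (parse g l).1 (parse g l).2 = l := by
  induction l with
  | nil => simp [rep]
  | cons a l ih =>
    rw [parse]
    split_ifs with h
    · subst h
      simpa [rep, List.replicate_succ] using ih
    · simpa [rep, List.replicate_succ] using ih

lemma parse_replicate_append (α : ℕ) (l : List A) :
    parse g (List.replicate α g ++ l) = ((parse g l).1 + α, (parse g l).2) := by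
  induction α with
  | zero => simp
  | succ k ih =>
    rw [List.replicate_succ, List.cons_append, parse]
    simp [ih]
    omega

lemma parse_blocks (m : List ({a : A // a ≠ g} × ℕ)) : parse g (blocks g m) = (0, m) := by
  induction m with
  | nil => simp
  | cons p m ih =>
    rw [blocks_cons, parse]
    rw [dif_neg p.1.2]
    rw [parse_replicate_append, ih]
    simp

lemma parse_rep (α : ℕ) (m : List ({a : A // a ≠ g} × ℕ)) : parse g (rep g α m) = (α, m) := by
  rw [rep, parse_replicate_append, parse_blocks]
  simp


end Parse

structure Lv (n : ℕ) where
  A : Type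
  emb : A → List (Fin n)
  emb_ne : ∀ a, emb a ≠ []
  inj : Function.Injective fun l : List A => (l.map emb).flatten
  nontriv : ∃ a b : A, a ≠ b
  finite : ∀ L : ℕ, {a : A | (emb a).length = L}.Finite

namespace Lv
variable {n : ℕ} (S : Lv n)

def phi (l : List S.A) : List (Fin n) := (l.map S.emb).flatten

@[simp] lemma phi_nil : S.phi [] = [] := rfl
@[simp] lemma phi_cons (a : S.A) (l) : S.phi (a :: l) = S.emb a ++ S.phi l := rfl
@[simp] lemma phi_append (l l' : List S.A) : S.phi (l ++ l') = S.phi l ++ S.phi l' := by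
  simp [phi]

lemma phi_inj : Function.Injective S.phi := S.inj

lemma range_ne : (Set.range fun a : S.A => (S.emb a).length).Nonempty := by
  obtain ⟨a, _, _⟩ := S.nontriv; exact ⟨_, a, rfl⟩

noncomputable def m : ℕ := sInf (Set.range fun a : S.A => (S.emb a).length)

lemma exists_len_m : ∃ a : S.A, (S.emb a).length = S.m := Nat.sInf_mem S.range_ne

noncomputable def g : S.A := S.exists_len_m.choose

lemma len_g : (S.emb S.g).length = S.m := S.exists_len_m.choose_spec

lemma m_le_len (a : S.A) : S.m ≤ (S.emb a).length := Nat.sInf_le ⟨a, rfl⟩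

lemma m_pos : 0 < S.m := by
  rw [← S.len_g]; exact List.length_pos_iff.mpr (S.emb_ne _)

lemma phi_blocks_eq (m : List ({a : S.A // a ≠ S.g} × ℕ)) :
    S.phi (blocks S.g m) = (m.map fun p => S.phi (p.1.1 :: List.replicate p.2 S.g)).flatten := by
  induction m with
  | nil => simp [blocks]
  | cons p m ih =>
    have : blocks S.g (p :: m) = (p.1.1 :: List.replicate p.2 S.g) ++ blocks S.g m := by
      simp [blocks]
    rw [this, phi_append, ih]
    simp

noncomputable def next : Lv n where
  A := {a : S.A // a ≠ S.g} × ℕ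
  emb := fun p => S.phi (p.1.1 :: List.replicate p.2 S.g)
  emb_ne := by
    intro p h
    simp only [phi_cons] at h
    exact S.emb_ne p.1.1 (List.append_eq_nil_iff.mp h).1
  inj := by
    intro l l' h
    simp only at h
    have h2 : S.phi (blocks S.g l) = S.phi (blocks S.g l') := by
      rw [S.phi_blocks_eq, S.phi_blocks_eq]; exact h
    have h3 := S.phi_inj h2
    have := congrArg (parse S.g) h3
    rw [parse_blocks, parse_blocks] at this
    exact (Prod.ext_iff.mp this).2
  nontriv := by
    obtain ⟨a, b, hab⟩ := S.nontriv
    have : ∃ c : S.A, c ≠ S.g := by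
      by_cases h : a = S.g
      · exact ⟨b, by rw [← h]; exact fun e => hab e.symm⟩
      · exact ⟨a, h⟩
    obtain ⟨c, hc⟩ := this
    exact ⟨(⟨c, hc⟩, 0), (⟨c, hc⟩, 1), by simp⟩
  finite := by
    intro L
    have hf : ({a : S.A | (S.emb a).length ≤ L} ×ˢ Set.Iic L).Finite := by
      apply Set.Finite.prod _ (Set.finite_Iic L)
      have : {a : S.A | (S.emb a).length ≤ L} ⊆
          ⋃ j ∈ Set.Iic L, {a : S.A | (S.emb a).length = j} := by
        intro a ha; exact Set.mem_biUnion ha rfl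
      exact Set.Finite.subset (Set.Finite.biUnion (Set.finite_Iic L) fun j _ => S.finite j) this
    have hpre := Set.Finite.preimage (f := fun p : {a : S.A // a ≠ S.g} × ℕ => (p.1.1, p.2))
      (s := {a : S.A | (S.emb a).length ≤ L} ×ˢ Set.Iic L)
      (fun p _ q _ h => by
        obtain ⟨⟨p1, hp1⟩, p2⟩ := p; obtain ⟨⟨q1, hq1⟩, q2⟩ := q
        simpa [Prod.ext_iff] using h) hf
    apply hpre.subset
    intro p hp
    simp only [Set.mem_setOf_eq, phi_cons] at hp
    have hlen : (S.emb p.1.1).length + p.2 * S.m = L := by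
      have : S.phi (List.replicate p.2 S.g) = (List.replicate p.2 (S.emb S.g)).flatten := by
        simp [phi]
      rw [this] at hp
      have h2 : ((List.replicate p.2 (S.emb S.g)).flatten).length = p.2 * S.m := by
        simp [List.length_flatten, S.len_g]
      rw [List.length_append, h2] at hp
      exact hp
    constructor
    · simp only [Set.mem_setOf_eq]
      omega
    · simp only [Set.mem_Iic]
      nlinarith [S.m_pos]

lemma next_phi (l : List S.next.A) : S.next.phi l = S.phi (blocks S.g l) := by
  exact (S.phi_blocks_eq l).symm

lemma next_emb (p : S.next.A) : S.next.emb p = S.emb p.1.1 ++ S.phi (List.replicate p.2 S.g) := by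
  rfl

lemma len_next (p : S.next.A) :
    (S.next.emb p).length = (S.emb p.1.1).length + p.2 * S.m := by
  rw [next_emb, List.length_append]
  congr 1
  have : S.phi (List.replicate p.2 S.g) = (List.replicate p.2 (S.emb S.g)).flatten := by
    simp [phi]
  rw [this]
  simp [List.length_flatten, S.len_g]

lemma m_le_next_m : S.m ≤ S.next.m := by
  obtain ⟨p, hp⟩ := S.next.exists_len_m
  rw [← hp, len_next]
  have := S.m_le_len p.1.1
  omega

/-- number of letters of minimal length -/
noncomputable def N : ℕ := {a : S.A | (S.emb a).length = S.m}.ncard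

lemma N_pos : 0 < S.N := by
  rw [N, Set.ncard_pos (S.finite S.m)]
  exact ⟨S.g, S.len_g⟩

lemma N_next_lt (h : S.next.m = S.m) : S.next.N < S.N := by
  have hfin : {a : S.A | (S.emb a).length = S.m}.Finite := S.finite S.m
  have hsub : ∀ p : S.next.A, p ∈ {a : S.next.A | (S.next.emb a).length = S.next.m} →
      p.2 = 0 ∧ (S.emb p.1.1).length = S.m := by
    intro p hp
    simp only [Set.mem_setOf_eq, len_next, h] at hp
    have h1 := S.m_le_len p.1.1
    have h2 := S.m_pos
    constructor <;> nlinarith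
  have hle : S.next.N ≤ ({a : S.A | (S.emb a).length = S.m} \ {S.g}).ncard := by
    refine Set.ncard_le_ncard_of_injOn (fun p => p.1.1) ?_ ?_ (hfin.diff)
    · intro p hp
      exact ⟨(hsub p hp).2, p.1.2⟩
    · intro p hp q hq hpq
      have := (hsub p hp).1
      have := (hsub q hq).1
      obtain ⟨⟨p1, hp1⟩, p2⟩ := p; obtain ⟨⟨q1, hq1⟩, q2⟩ := q
      simp only at hpq
      simp_all
      rfl
  calc S.next.N ≤ _ := hle
    _ < S.N := Set.ncard_diff_singleton_lt_of_mem S.len_g hfin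

end Lv

/-- The tower of levels over a base level. -/
noncomputable def T {n : ℕ} (base : Lv n) : ℕ → Lv n
  | 0 => base
  | k + 1 => (T base k).next

variable {n : ℕ} {base : Lv n}

lemma T_m_mono (base : Lv n) : Monotone fun k => (T base k).m := by
  apply monotone_nat_of_le_succ
  intro k
  exact (T base k).m_le_next_m

lemma exists_big_m (base : Lv n) (L : ℕ) : ∃ K, L < (T base K).m := by
  induction L with
  | zero => exact ⟨0, (T base 0).m_pos⟩
  | succ L ih =>
    obtain ⟨K, hK⟩ := ih
    by_contra hcon
    push_neg at hcon
    -- for all k, m k ≤ L + 1; so for k ≥ K, m k = L + 1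
    have hconst : ∀ j, (T base (K + j)).m = L + 1 := by
      intro j
      have h1 := T_m_mono base (Nat.le_add_right K j)
      have h2 := hcon (K + j)
      simp only at h1
      omega
    have hdec : ∀ j, (T base (K + j)).N + j ≤ (T base K).N := by
      intro j
      induction j with
      | zero => simp
      | succ j ihj =>
        have hlt : (T base (K + (j+1))).N < (T base (K + j)).N := by
          have : (T base (K + (j+1))) = (T base (K + j)).next := by
            rw [← Nat.add_assoc]; rfl
          rw [this]
          apply Lv.N_next_lt
          rw [← this, hconst, hconst]
        omega
    have := hdec ((T base K).N + 1)
    omega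

section Main
variable (base : Lv n)

/-- The sequence of factors (as words). -/
noncomputable def Y (k : ℕ) : List (Fin n) := (T base k).emb (T base k).g

/-- `Y k` to the power `β`. -/
noncomputable def pw (k β : ℕ) : List (Fin n) := (List.replicate β (Y base k)).flatten

/-- The product of a factor list, as a word. -/
noncomputable def prodF (F : List (ℕ × ℕ)) : List (Fin n) :=
  (F.map fun p => pw base p.1 p.2).flatten

@[simp] lemma prodF_nil : prodF base [] = [] := rfl
@[simp] lemma prodF_cons (p : ℕ × ℕ) (F) :
    prodF base (p :: F) = pw base p.1 p.2 ++ prodF base F := by simp [prodF]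

/-- Valid factor lists with all indices `≥ k`. -/
def Valid (k : ℕ) (F : List (ℕ × ℕ)) : Prop :=
  F.Pairwise (fun p q => p.1 < q.1) ∧ (∀ p ∈ F, 0 < p.2) ∧ ∀ p ∈ F, k ≤ p.1

lemma valid_cons {k j β : ℕ} {F : List (ℕ × ℕ)} (h : Valid k ((j, β) :: F)) :
    k ≤ j ∧ 0 < β ∧ Valid (j + 1) F := by
  obtain ⟨hp, hpos, hlb⟩ := h
  rw [List.pairwise_cons] at hp
  refine ⟨hlb (j, β) (by simp), hpos (j, β) (by simp), hp.2, ?_, ?_⟩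
  · intro p hp'
    exact hpos p (List.mem_cons_of_mem _ hp')
  · intro p hp'
    exact hp.1 p hp'

lemma phi_replicate (k α : ℕ) :
    (T base k).phi (List.replicate α (T base k).g) = pw base k α := by
  induction α with
  | zero => simp [pw]
  | succ a ih =>
    rw [List.replicate_succ, Lv.phi_cons, ih]
    simp only [pw, List.replicate_succ, List.flatten_cons, Y]

lemma phi_rep (k α : ℕ) (m : List ({a : (T base k).A // a ≠ (T base k).g} × ℕ)) :
    (T base k).phi (rep (T base k).g α m) = pw base k α ++ (T base (k+1)).phi m := by
  rw [rep, Lv.phi_append, phi_replicate]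
  congr 1
  exact ((T base k).next_phi m).symm

lemma downIter {k j : ℕ} (hkj : k ≤ j) (l : List (T base j).A) :
    ∃ l0, (T base j).phi l = (T base k).phi l0 := by
  induction j, hkj using Nat.le_induction with
  | base => exact ⟨l, rfl⟩
  | succ j hkj ih =>
    obtain ⟨l0, h0⟩ := ih (blocks (T base j).g l)
    exact ⟨l0, by rw [← h0]; exact (T base j).next_phi l⟩

lemma prodF_eq_phi {k : ℕ} {F : List (ℕ × ℕ)} (h : Valid k F) :
    ∃ l, prodF base F = (T base k).phi l := by
  induction F generalizing k with
  | nil => exact ⟨[], rfl⟩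
  | cons p F ih =>
    obtain ⟨j, β⟩ := p
    obtain ⟨hkj, hβ, hF⟩ := valid_cons h
    obtain ⟨l1, hl1⟩ := ih hF
    obtain ⟨l0, hl0⟩ := downIter base hkj (rep (T base j).g β l1)
    refine ⟨l0, ?_⟩
    rw [prodF_cons, ← hl0, phi_rep base j β l1, hl1]

lemma pw_ne_nil {k β : ℕ} (hβ : 0 < β) : pw base k β ≠ [] := by
  obtain ⟨β, rfl⟩ := Nat.exists_eq_succ_of_ne_zero hβ.ne'
  rw [pw, List.replicate_succ]
  simp only [List.flatten_cons, ne_eq, List.append_eq_nil_iff, not_and]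
  intro h
  exact absurd h ((T base k).emb_ne _)

lemma uniq {k : ℕ} {F G : List (ℕ × ℕ)} (hF : Valid k F) (hG : Valid k G)
    (h : prodF base F = prodF base G) : F = G := by
  induction F generalizing G k with
  | nil =>
    rcases G with _ | ⟨⟨j, β⟩, G⟩
    · rfl
    · exfalso
      obtain ⟨-, hβ, -⟩ := valid_cons hG
      rw [prodF_nil, prodF_cons] at h
      exact pw_ne_nil base hβ (List.append_eq_nil_iff.mp h.symm).1
  | cons p F ihF =>
    obtain ⟨j1, β1⟩ := p
    obtain ⟨hkj1, hβ1, hF'⟩ := valid_cons hF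
    rcases G with _ | ⟨⟨j2, β2⟩, G⟩
    · exfalso
      rw [prodF_nil, prodF_cons] at h
      exact pw_ne_nil base hβ1 (List.append_eq_nil_iff.mp h).1
    obtain ⟨hkj2, hβ2, hG'⟩ := valid_cons hG
    obtain ⟨l1, hl1⟩ := prodF_eq_phi base hF'
    obtain ⟨l2, hl2⟩ := prodF_eq_phi base hG'
    have e1 : prodF base ((j1, β1) :: F) = (T base j1).phi (rep (T base j1).g β1 l1) := by
      rw [prodF_cons, phi_rep base j1 β1 l1, hl1]
    have e2 : prodF base ((j2, β2) :: G) = (T base j2).phi (rep (T base j2).g β2 l2) := by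
      rw [prodF_cons, phi_rep base j2 β2 l2, hl2]
    have key : ∀ j β (l : List ({a : (T base j).A // a ≠ (T base j).g} × ℕ))
        j' β' (l' : List ({a : (T base j').A // a ≠ (T base j').g} × ℕ)), 0 < β →
        (T base j).phi (rep (T base j).g β l) = (T base j').phi (rep (T base j').g β' l') →
        ¬ j < j' := by
      intro j β l j' β' l' hβ heq hjj'
      obtain ⟨y, hy⟩ := downIter base (Nat.succ_le_of_lt hjj') (rep (T base j').g β' l')
      rw [hy] at heq
      have : (T base j).phi (rep (T base j).g β l) =
          (T base j).phi (blocks (T base j).g y) := by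
        rw [heq]; exact ((T base j).next_phi y).symm ▸ rfl
      have h3 := (T base j).phi_inj this
      have h4 := congrArg (parse (T base j).g) h3
      rw [parse_rep, parse_blocks (g := (T base j).g) y] at h4
      have : β = 0 := (Prod.ext_iff.mp h4).1
      omega
    have hj : j1 = j2 := by
      rcases lt_trichotomy j1 j2 with hlt | heq | hgt
      · exact absurd hlt (key j1 β1 l1 j2 β2 l2 hβ1 (by rw [← e1, ← e2, h]))
      · exact heq
      · exact absurd hgt (key j2 β2 l2 j1 β1 l1 hβ2 (by rw [← e1, ← e2, h]))
    subst hj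
    have heq2 : rep (T base j1).g β1 l1 = rep (T base j1).g β2 l2 :=
      (T base j1).phi_inj (by rw [← e1, ← e2, h])
    have h4 := congrArg (parse (T base j1).g) heq2
    rw [parse_rep (g := (T base j1).g) β1 l1, parse_rep (g := (T base j1).g) β2 l2, Prod.mk.injEq (α := ℕ) (β := List ({ a // a ≠ (T base j1).g } × ℕ)) β1 l1 β2 l2] at h4
    obtain ⟨hβ12, hl12⟩ := h4
    have hFG : prodF base F = prodF base G := by
      rw [hl1, hl2, hl12]
    rw [hβ12, ihF hF' hG' hFG]

lemma exist_aux (K : ℕ) : ∀ d k, K = k + d → ∀ l : List (T base k).A,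
    ((T base k).phi l).length < (T base K).m →
    ∃ F, Valid k F ∧ prodF base F = (T base k).phi l := by
  intro d
  induction d with
  | zero =>
    intro k hK l hl
    rcases l with _ | ⟨a, l⟩
    · exact ⟨[], ⟨List.Pairwise.nil, by simp, by simp⟩, by simp⟩
    · exfalso
      rw [Lv.phi_cons, List.length_append] at hl
      have h2 := (T base k).m_le_len a
      rw [hK] at hl
      simp only [Nat.add_zero] at hl
      omega
  | succ d ih =>
    rintro k rfl l hl
    set α := (parse (T base k).g l).1 with hα
    set m := (parse (T base k).g l).2 with hm
    have hrep : rep (T base k).g α m = l := rep_parse l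
    have hphi : (T base k).phi l = pw base k α ++ (T base (k+1)).phi m := by
      rw [← hrep, phi_rep]
    have hlen : ((T base (k+1)).phi m).length < (T base (k + (d+1))).m := by
      rw [hphi, List.length_append] at hl
      omega
    obtain ⟨F', hF', hpF'⟩ := ih (k+1) (by omega) m hlen
    rcases Nat.eq_zero_or_pos α with h0 | hpos
    · refine ⟨F', ⟨hF'.1, hF'.2.1, fun p hp => le_trans (by omega) (hF'.2.2 p hp)⟩, ?_⟩
      rw [hpF', hphi, h0]
      simp [pw]
    · refine ⟨(k, α) :: F', ⟨?_, ?_, ?_⟩, ?_⟩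
      · rw [List.pairwise_cons]
        exact ⟨fun p hp => lt_of_lt_of_le (Nat.lt_succ_self k) (hF'.2.2 p hp), hF'.1⟩
      · intro p hp
        rcases List.mem_cons.mp hp with rfl | hp'
        · exact hpos
        · exact hF'.2.1 p hp'
      · intro p hp
        rcases List.mem_cons.mp hp with rfl | hp'
        · exact le_refl k
        · exact le_trans (by omega) (hF'.2.2 p hp')
      · rw [prodF_cons, hpF', hphi]

lemma exist (w : List (Fin n)) (hbase : ∀ w : List (Fin n), ∃ l : List (T base 0).A, (T base 0).phi l = w) :
    ∃ F, Valid 0 F ∧ prodF base F = w := by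
  obtain ⟨l, hl⟩ := hbase w
  obtain ⟨K, hK⟩ := exists_big_m base w.length
  obtain ⟨F, h1, h2⟩ := exist_aux base K K 0 (by omega) l (by rw [hl]; exact hK)
  exact ⟨F, h1, by rw [h2, hl]⟩

lemma prodF_filter (F : List (ℕ × ℕ)) :
    prodF base (F.filter fun p => 0 < p.2) = prodF base F := by
  induction F with
  | nil => rfl
  | cons p F ih =>
    by_cases h : 0 < p.2
    · rw [List.filter_cons_of_pos (by simpa using h), prodF_cons, prodF_cons, ih]
    · rw [List.filter_cons_of_neg (by simpa using h), prodF_cons, ih]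
      have : p.2 = 0 := by omega
      rw [this]
      simp [pw]

end Main
end UFS

/-- The base level : the alphabet itself. -/
noncomputable def UFS.base (n : ℕ) (hn : 2 ≤ n) : UFS.Lv n where
  A := Fin n
  emb := fun a => [a]
  emb_ne := fun a => by simp
  inj := by
    have key : ∀ l : List (Fin n), (List.map (fun a => [a]) l).flatten = l := by
      intro l; induction l <;> simp [*]
    intro l l' h
    simp only at h
    rwa [key, key] at h
  nontriv := ⟨⟨0, by omega⟩, ⟨1, by omega⟩, by simp⟩
  finite := fun L => Set.toFinite _

lemma UFS.base_phi {n : ℕ} (hn : 2 ≤ n) (w : List (Fin n)) :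
    (UFS.T (UFS.base n hn) 0).phi w = w := by
  show ((w.map fun a => [a]).flatten) = w
  induction w <;> simp [*]

lemma UFS.toList_pow {α : Type*} (x : FreeMonoid α) (β : ℕ) :
    FreeMonoid.toList (x ^ β) = (List.replicate β (FreeMonoid.toList x)).flatten := by
  induction β with
  | zero => simp
  | succ b ih =>
    rw [pow_succ', FreeMonoid.toList_mul, ih, List.replicate_succ]
    simp


/-- The free semigroup (free monoid) on `n ≥ 2` generators is a unique
factorization semigroup. -/
theorem freeMonoid_isUniqueFactorizationSemigroup (n : ℕ) (hn : 2 ≤ n) :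
    IsUniqueFactorizationSemigroup (FreeMonoid (Fin n)) := by
  classical
  set B := UFS.base n hn with hB
  set X : ℕ → FreeMonoid (Fin n) := fun k => FreeMonoid.ofList (UFS.Y B k) with hX
  have bridge : ∀ F : List (ℕ × ℕ), FreeMonoid.toList (factorProd X F) = UFS.prodF B F := by
    intro F
    induction F with
    | nil => simp [factorProd, UFS.prodF]
    | cons p F ih =>
      rw [factorProd, List.map_cons, List.prod_cons, FreeMonoid.toList_mul]
      show _ ++ FreeMonoid.toList (factorProd X F) = _
      rw [ih, UFS.prodF_cons, UFS.toList_pow]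
      simp [hX, UFS.pw]
  have toList_inj : Function.Injective (FreeMonoid.toList (α := Fin n)) :=
    FreeMonoid.toList.injective
  refine ⟨X, ?_, ?_⟩
  · intro m hm
    obtain ⟨F, hFv, hFp⟩ := UFS.exist B (FreeMonoid.toList m)
      (fun w => ⟨w, UFS.base_phi hn w⟩)
    refine ⟨F, ⟨hFv.1.isChain, hFv.2.1, ?_⟩, ?_⟩
    · apply toList_inj
      rw [bridge, hFp]
    · intro G ⟨hGc, hGpos, hGp⟩
      haveI : IsTrans (ℕ × ℕ) (fun p q : ℕ × ℕ => p.1 < q.1) :=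
        ⟨fun a b c h1 h2 => lt_trans h1 h2⟩
      refine UFS.uniq B ⟨List.isChain_iff_pairwise.mp hGc, hGpos, fun p _ => Nat.zero_le _⟩
        ⟨hFv.1, hFv.2.1, fun p _ => Nat.zero_le _⟩ ?_
      rw [← bridge, ← bridge, hGp]
      apply toList_inj
      rw [bridge, hFp]
  · intro l hlc hlp p hp
    haveI : IsTrans (ℕ × ℕ) (fun p q : ℕ × ℕ => p.1 < q.1) :=
      ⟨fun a b c h1 h2 => lt_trans h1 h2⟩
    by_contra hp2
    set F := l.filter (fun p => 0 < p.2) with hF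
    have hFv : UFS.Valid 0 F := by
      refine ⟨(List.isChain_iff_pairwise.mp hlc).sublist (List.filter_sublist), ?_,
        fun p _ => Nat.zero_le _⟩
      intro q hq
      have := (List.mem_filter.mp hq).2
      simpa using this
    have hFp : UFS.prodF B F = [] := by
      rw [hF, UFS.prodF_filter]
      rw [← bridge, hlp]
      simp
    have hFnil : F = [] := by
      refine UFS.uniq B hFv ⟨List.Pairwise.nil, by simp, by simp⟩ ?_
      rw [hFp, UFS.prodF_nil]
    have : p ∈ F := List.mem_filter.mpr ⟨hp, by simpa using Nat.pos_of_ne_zero hp2⟩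
    rw [hFnil] at this
    exact absurd this List.not_mem_nil
end

section
/- Let T be the semigroup generated by the matrices A = [[1,0],[0,2]], B = [[2,0],[0,1]], C = [[0,2],[3,0]]. Then the representation of each element of T in the form A^{α} B^{β} C^{γ} (α, β, γ ∈ ℕ) is unique: if A^{α_1} B^{α_2} C^{α_3} = A^{β_1} B^{β_2} C^{β_3} then α_i = β_i for i = 1, 2, 3. -/
def MatA : Matrix (Fin 2) (Fin 2) ℤ := !![1, 0; 0, 2]
def MatB : Matrix (Fin 2) (Fin 2) ℤ := !![2, 0; 0, 1]
def MatC : Matrix (Fin 2) (Fin 2) ℤ := !![0, 2; 3, 0]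

/-- The multiplicative semigroup generated by `A`, `B`, `C`. -/
def SemigroupT : Subsemigroup (Matrix (Fin 2) (Fin 2) ℤ) :=
  Subsemigroup.closure {MatA, MatB, MatC}

lemma powA (n : ℕ) : MatA ^ n = !![1, 0; 0, 2 ^ n] := by
  induction n with
  | zero => simp [Matrix.one_fin_two]
  | succ n ih => rw [pow_succ, ih, MatA, Matrix.mul_fin_two]; ring_nf

lemma powB (n : ℕ) : MatB ^ n = !![2 ^ n, 0; 0, 1] := by
  induction n with
  | zero => simp [Matrix.one_fin_two]
  | succ n ih => rw [pow_succ, ih, MatB, Matrix.mul_fin_two]; ring_nf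

lemma smul_fin_two (c a b d e : ℤ) :
    c • (!![a, b; d, e] : Matrix (Fin 2) (Fin 2) ℤ) = !![c * a, c * b; c * d, c * e] := by
  rw [Matrix.smul_of]; ext i j; fin_cases i <;> fin_cases j <;> simp

lemma mul_diag (x y : ℤ) :
    (!![1, 0; 0, x] : Matrix (Fin 2) (Fin 2) ℤ) * !![y, 0; 0, 1] = !![y, 0; 0, x] := by
  rw [Matrix.mul_fin_two]; norm_num

lemma smul_one_fin_two (c : ℤ) : c • (1 : Matrix (Fin 2) (Fin 2) ℤ) = !![c, 0; 0, c] := by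
  rw [Matrix.one_fin_two, Matrix.smul_of]
  ext i j; fin_cases i <;> fin_cases j <;> simp

lemma powC_even (k : ℕ) : MatC ^ (2 * k) = ((6 : ℤ) ^ k) • 1 := by
  have h2 : MatC ^ 2 = (6 : ℤ) • 1 := by
    rw [pow_two, MatC, Matrix.mul_fin_two, smul_one_fin_two]; norm_num
  rw [pow_mul, h2, smul_pow, one_pow]

lemma powC_odd (k : ℕ) : MatC ^ (2 * k + 1) = ((6 : ℤ) ^ k) • MatC := by
  rw [pow_succ, powC_even, smul_mul_assoc, one_mul]

lemma key (a k b l : ℕ) (h : (2:ℤ) ^ a * 6 ^ k = 2 ^ b * 6 ^ l) : a = b ∧ k = l := by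
  have h' : 2 ^ a * 6 ^ k = 2 ^ b * 6 ^ l := by exact_mod_cast h
  have h2 : 2 ^ (a + k) * 3 ^ k = 2 ^ (b + l) * 3 ^ l := by
    have : (6 : ℕ) = 2 * 3 := rfl
    rw [this, mul_pow, mul_pow, ← mul_assoc, ← pow_add, ← mul_assoc, ← pow_add] at h'
    exact h'
  have hk : k = l := by
    have := congrArg (Nat.factorization · 3) h2
    simpa [Nat.factorization_mul, Nat.Prime.factorization_pow, (by norm_num : Nat.Prime 2),
      (by norm_num : Nat.Prime 3), Nat.Prime.factorization, pow_ne_zero] using this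
  subst hk
  have : 2 ^ (a + k) = 2 ^ (b + k) := by
    have h3 : (3:ℕ) ^ k ≠ 0 := pow_ne_zero _ (by norm_num)
    exact Nat.eq_of_mul_eq_mul_right (Nat.pos_of_ne_zero h3) h2
  have := Nat.pow_right_injective (le_refl 2) this
  exact ⟨Nat.add_right_cancel this, rfl⟩

/-- Uniqueness of the representation `A^α B^β C^γ` in the semigroup generated by
`A`, `B`, `C`. -/
theorem matrixT_unique_factorization (α₁ α₂ α₃ β₁ β₂ β₃ : ℕ)
    (h : MatA ^ α₁ * MatB ^ α₂ * MatC ^ α₃ = MatA ^ β₁ * MatB ^ β₂ * MatC ^ β₃) :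
    α₁ = β₁ ∧ α₂ = β₂ ∧ α₃ = β₃ := by
  rw [powA, powA, powB, powB] at h
  rcases Nat.even_or_odd α₃ with ⟨k, hk⟩ | ⟨k, hk⟩ <;>
  rcases Nat.even_or_odd β₃ with ⟨l, hl⟩ | ⟨l, hl⟩
  · rw [show α₃ = 2 * k from by omega, show β₃ = 2 * l from by omega] at h
    simp only [powC_even, smul_one_fin_two, mul_diag, Matrix.mul_fin_two] at h
    have h00 := congrFun (congrFun h 0) 0
    have h11 := congrFun (congrFun h 1) 1
    simp at h00 h11
    obtain ⟨h1, h2⟩ := key _ _ _ _ (by linarith [h00] : (2:ℤ) ^ α₂ * 6 ^ k = 2 ^ β₂ * 6 ^ l)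
    obtain ⟨h3, h4⟩ := key _ _ _ _ (by linarith [h11] : (2:ℤ) ^ α₁ * 6 ^ k = 2 ^ β₁ * 6 ^ l)
    exact ⟨h3, h1, by omega⟩
  · rw [show α₃ = 2 * k from by omega, show β₃ = 2 * l + 1 from by omega,
      powC_even, powC_odd, MatC, smul_one_fin_two, smul_fin_two, mul_diag,
      Matrix.mul_fin_two] at h
    have h00 := congrFun (congrFun h 0) 0
    simp at h00
  · rw [show α₃ = 2 * k + 1 from by omega, show β₃ = 2 * l from by omega,
      powC_odd, powC_even, MatC, smul_one_fin_two, smul_fin_two, mul_diag,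
      Matrix.mul_fin_two] at h
    have h00 := congrFun (congrFun h 0) 0
    simp at h00
  · rw [show α₃ = 2 * k + 1 from by omega, show β₃ = 2 * l + 1 from by omega,
      powC_odd, powC_odd, MatC, smul_fin_two, mul_diag, Matrix.mul_fin_two] at h
    have h01 := congrFun (congrFun h 0) 1
    have h10 := congrFun (congrFun h 1) 0
    simp at h01 h10
    obtain ⟨h1, h2⟩ := key (α₂ + 1) k (β₂ + 1) l
      (by rw [pow_succ, pow_succ]; linarith [h01])
    obtain ⟨h3, h4⟩ := key _ _ _ _
      (by linarith [h10] : (2:ℤ) ^ α₁ * 6 ^ k = 2 ^ β₁ * 6 ^ l)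
    exact ⟨h3, by omega, by omega⟩
end

section
/- The semigroup T generated by A = [[1,0],[0,2]], B = [[2,0],[0,1]], C = [[0,2],[3,0]] is left amenable: the sets F_N = {A^{α} B^{β} C^{γ} : 0 ≤ α, β, γ ≤ N−1} form a left Følner sequence, i.e., for every s ∈ T, |s F_N △ F_N| / |F_N| → 0 as N → ∞. -/
/-- The Følner sets `F_N = {A^α B^β C^γ : 0 ≤ α, β, γ ≤ N-1}`. -/
def FolnerF (N : ℕ) : Finset (Matrix (Fin 2) (Fin 2) ℤ) :=
  (Finset.range N ×ˢ Finset.range N ×ˢ Finset.range N).image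
    fun p => MatA ^ p.1 * MatB ^ p.2.1 * MatC ^ p.2.2

open scoped symmDiff

/-! ### Auxiliary lemmas -/

/-- Normal form matrices with even `C`-exponent. -/
def nfE (a b m : ℕ) : Matrix (Fin 2) (Fin 2) ℤ := !![2^b*6^m, 0; 0, 2^a*6^m]
/-- Normal form matrices with odd `C`-exponent. -/
def nfO (a b m : ℕ) : Matrix (Fin 2) (Fin 2) ℤ := !![0, 2^b*2*6^m; 2^a*3*6^m, 0]

lemma A_pow (n : ℕ) : MatA ^ n = !![1,0;0,2^n] := by
  induction n with
  | zero => simp [Matrix.one_fin_two]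
  | succ n ih => rw [pow_succ, ih, MatA, Matrix.mul_fin_two]; ring_nf

lemma B_pow (n : ℕ) : MatB ^ n = !![2^n,0;0,1] := by
  induction n with
  | zero => simp [Matrix.one_fin_two]
  | succ n ih => rw [pow_succ, ih, MatB, Matrix.mul_fin_two]; ring_nf

lemma C_pow_even (m : ℕ) : MatC ^ (2*m) = !![6^m,0;0,6^m] := by
  induction m with
  | zero => simp [Matrix.one_fin_two]
  | succ m ih =>
    rw [Nat.mul_succ, pow_add, ih, MatC, pow_two, Matrix.mul_fin_two, Matrix.mul_fin_two]
    ring_nf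

lemma C_pow_odd (m : ℕ) : MatC ^ (2*m+1) = !![0, 2*6^m; 3*6^m, 0] := by
  rw [pow_add, C_pow_even, pow_one, MatC, Matrix.mul_fin_two]; ring_nf

lemma phi_even (a b m : ℕ) : MatA^a * MatB^b * MatC^(2*m) = nfE a b m := by
  rw [A_pow, B_pow, C_pow_even, Matrix.mul_fin_two, Matrix.mul_fin_two, nfE]; ring_nf

lemma phi_odd (a b m : ℕ) : MatA^a * MatB^b * MatC^(2*m+1) = nfO a b m := by
  rw [A_pow, B_pow, C_pow_odd, Matrix.mul_fin_two, Matrix.mul_fin_two, nfO]; ring_nf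

lemma key23 {a b c d : ℕ} (h : 2^a*3^b = 2^c*3^d) : a = c ∧ b = d := by
  constructor
  · have h2 := congrArg (fun n => n.factorization 2) h
    simpa [Nat.factorization_mul, Nat.Prime.factorization_pow, Nat.prime_two,
      Nat.prime_three, pow_ne_zero] using h2
  · have h3 := congrArg (fun n => n.factorization 3) h
    simpa [Nat.factorization_mul, Nat.Prime.factorization_pow, Nat.prime_two,
      Nat.prime_three, pow_ne_zero] using h3

lemma key26 {a b c d : ℕ} (h : (2^a*6^b : ℤ) = 2^c*6^d) : a = c ∧ b = d := by
  have h' : (2:ℕ)^a*6^b = 2^c*6^d := by exact_mod_cast h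
  have e : ∀ x y : ℕ, 2^x*6^y = 2^(x+y)*3^y := by
    intro x y
    rw [show (6:ℕ) = 2*3 by norm_num, mul_pow, pow_add]; ring
  rw [e, e] at h'
  obtain ⟨h1, h2⟩ := key23 h'
  omega

lemma nfE_inj {a b m a' b' m' : ℕ} (h : nfE a b m = nfE a' b' m') :
    a = a' ∧ b = b' ∧ m = m' := by
  have h00 := congrArg (fun M => M 0 0) h
  have h11 := congrArg (fun M => M 1 1) h
  simp [nfE] at h00 h11
  obtain ⟨e1, e2⟩ := key26 h00
  obtain ⟨e3, e4⟩ := key26 h11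
  exact ⟨e3, e1, e2⟩

lemma nfO_inj {a b m a' b' m' : ℕ} (h : nfO a b m = nfO a' b' m') :
    a = a' ∧ b = b' ∧ m = m' := by
  have h01 := congrArg (fun M => M 0 1) h
  have h10 := congrArg (fun M => M 1 0) h
  simp [nfO] at h01 h10
  have e1 : (2:ℤ)^(b+1)*6^m = 2^(b'+1)*6^m' := by push_cast [pow_succ]; linarith
  obtain ⟨e2, e3⟩ := key26 e1
  have h10' : (2:ℤ)^a*6^m = 2^a'*6^m' := by
    have : (3:ℤ) * (2^a*6^m) = 3 * (2^a'*6^m') := by linarith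
    linarith
  obtain ⟨e4, e5⟩ := key26 h10'
  omega

lemma nfE_ne_nfO (a b m a' b' m' : ℕ) : nfE a b m ≠ nfO a' b' m' := by
  intro h
  have h00 := congrArg (fun M => M 0 0) h
  simp [nfE, nfO] at h00

lemma phi_inj : Function.Injective
    (fun p : ℕ × ℕ × ℕ => MatA ^ p.1 * MatB ^ p.2.1 * MatC ^ p.2.2) := by
  rintro ⟨a, b, c⟩ ⟨a', b', c'⟩ h
  simp only at h
  rcases Nat.even_or_odd c with ⟨m, hm⟩ | ⟨m, hm⟩ <;>
    rcases Nat.even_or_odd c' with ⟨m', hm'⟩ | ⟨m', hm'⟩ <;>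
    subst hm <;> subst hm'
  · rw [show m+m=2*m by omega, show m'+m'=2*m' by omega, phi_even, phi_even] at h
    obtain ⟨e1, e2, e3⟩ := nfE_inj h
    simp_all
  · rw [show m+m=2*m by omega, phi_even, phi_odd] at h
    exact absurd h (nfE_ne_nfO _ _ _ _ _ _)
  · rw [show m'+m'=2*m' by omega, phi_odd, phi_even] at h
    exact absurd h.symm (nfE_ne_nfO _ _ _ _ _ _)
  · rw [phi_odd, phi_odd] at h
    obtain ⟨e1, e2, e3⟩ := nfO_inj h
    simp_all

lemma nfE_mul_nfE (p q a x y b : ℕ) :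
    nfE p q a * nfE x y b = nfE (p+x) (q+y) (a+b) := by
  rw [nfE, nfE, nfE, Matrix.mul_fin_two]; ring_nf

lemma nfE_mul_nfO (p q a x y b : ℕ) :
    nfE p q a * nfO x y b = nfO (p+x) (q+y) (a+b) := by
  rw [nfE, nfO, nfO, Matrix.mul_fin_two]; ring_nf

lemma nfO_mul_nfE (p q a x y b : ℕ) :
    nfO p q a * nfE x y b = nfO (p+y) (q+x) (a+b) := by
  rw [nfE, nfO, nfO, Matrix.mul_fin_two]; ring_nf

lemma nfO_mul_nfO (p q a x y b : ℕ) :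
    nfO p q a * nfO x y b = nfE (p+y) (q+x) (a+b+1) := by
  rw [nfE, nfO, nfO, Matrix.mul_fin_two]; ring_nf

lemma phi_mul (p q r x y c : ℕ) :
    (MatA^p*MatB^q*MatC^r) * (MatA^x*MatB^y*MatC^c) =
      if r % 2 = 0 then MatA^(p+x)*MatB^(q+y)*MatC^(r+c)
      else MatA^(p+y)*MatB^(q+x)*MatC^(r+c) := by
  rcases Nat.even_or_odd r with ⟨a, ha⟩ | ⟨a, ha⟩ <;>
    rcases Nat.even_or_odd c with ⟨b, hb⟩ | ⟨b, hb⟩ <;> subst ha <;> subst hb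
  · rw [show a+a=2*a by omega, show b+b=2*b by omega, phi_even, phi_even,
      nfE_mul_nfE, if_pos (by omega), show 2*a+2*b = 2*(a+b) by omega, phi_even]
  · rw [show a+a=2*a by omega, phi_even, phi_odd, nfE_mul_nfO, if_pos (by omega),
      show 2*a+(2*b+1) = 2*(a+b)+1 by omega, phi_odd]
  · rw [show b+b=2*b by omega, phi_odd, phi_even, nfO_mul_nfE, if_neg (by omega),
      show 2*a+1+2*b = 2*(a+b)+1 by omega, phi_odd]
  · rw [phi_odd, phi_odd, nfO_mul_nfO, if_neg (by omega),
      show 2*a+1+(2*b+1) = 2*(a+b+1) by omega, phi_even]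

lemma normal_form {s : Matrix (Fin 2) (Fin 2) ℤ} (hs : s ∈ SemigroupT) :
    ∃ p q r : ℕ, 1 ≤ p + q + r ∧ s = MatA^p * MatB^q * MatC^r := by
  induction hs using Subsemigroup.closure_induction with
  | mem x hx =>
    rcases hx with h | h | h
    · exact ⟨1, 0, 0, by norm_num, by simp [Set.mem_singleton_iff.mp h]⟩
    · exact ⟨0, 1, 0, by norm_num, by simp [Set.mem_singleton_iff.mp h]⟩
    · exact ⟨0, 0, 1, by norm_num, by simp [Set.mem_singleton_iff.mp h]⟩
  | mul x y hx hy ihx ihy =>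
    obtain ⟨p, q, r, hpqr, rfl⟩ := ihx
    obtain ⟨x', y', c, hxyc, rfl⟩ := ihy
    rw [phi_mul]
    split
    · exact ⟨p+x', q+y', r+c, by omega, rfl⟩
    · exact ⟨p+y', q+x', r+c, by omega, rfl⟩

lemma det_phi_ne (p q r : ℕ) : (MatA^p * MatB^q * MatC^r).det ≠ 0 := by
  rw [Matrix.det_mul, Matrix.det_mul, Matrix.det_pow, Matrix.det_pow, Matrix.det_pow]
  have hA : MatA.det = 2 := by simp [MatA, Matrix.det_fin_two_of]
  have hB : MatB.det = 2 := by simp [MatB, Matrix.det_fin_two_of]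
  have hC : MatC.det = -6 := by simp [MatC, Matrix.det_fin_two_of]
  rw [hA, hB, hC]
  positivity

lemma matMul_left_inj {s : Matrix (Fin 2) (Fin 2) ℤ} (hs : s.det ≠ 0) :
    Function.Injective (fun m : Matrix (Fin 2) (Fin 2) ℤ => s * m) := by
  intro x y h
  simp only at h
  have h2 := congrArg (fun m => s.adjugate * m) h
  simp only [← Matrix.mul_assoc, Matrix.adjugate_mul] at h2
  have h3 : s.det • x = s.det • y := by simpa using h2
  exact smul_right_injective _ hs h3

lemma card_FolnerF (N : ℕ) : (FolnerF N).card = N^3 := by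
  rw [FolnerF, Finset.card_image_of_injective _ phi_inj]
  simp [Finset.card_product]; ring

/-- The semigroup `T` generated by `A, B, C` is left amenable: the sets `F_N`
form a left Følner sequence, i.e. `|s F_N △ F_N| / |F_N| → 0` for every `s ∈ T`. -/
theorem matrixT_folner :
    ∀ s ∈ SemigroupT,
      Filter.Tendsto
        (fun N : ℕ =>
          (((((FolnerF N).image fun m => s * m) ∆ FolnerF N).card : ℝ) /
            ((FolnerF N).card : ℝ)))
        Filter.atTop (nhds 0) := by
  intro s hs
  obtain ⟨p, q, r, hpqr, rfl⟩ := normal_form hs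
  set s := MatA^p * MatB^q * MatC^r with hs_def
  set k := max p (max q r) with hk
  have hk1 : 1 ≤ k := by omega
  have hinj : Function.Injective (fun m : Matrix (Fin 2) (Fin 2) ℤ => s * m) :=
    matMul_left_inj (det_phi_ne p q r)
  -- counting facts for each N ≥ k
  have key : ∀ N : ℕ, k ≤ N → 1 ≤ N →
      ((((FolnerF N).image fun m => s * m) ∆ FolnerF N).card : ℝ) /
        ((FolnerF N).card : ℝ) ≤ 6*k/N := by
    intro N hkN h1N
    set im := (FolnerF N).image fun m => s * m with him_def
    have him : im.card = N^3 := by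
      rw [him_def, Finset.card_image_of_injective _ hinj, card_FolnerF]
    -- intersection lower bound
    have hint : (N-k)^3 ≤ (im ∩ FolnerF N).card := by
      have := Finset.card_le_card_of_injOn
        (f := fun t : ℕ × ℕ × ℕ => s * (MatA ^ t.1 * MatB ^ t.2.1 * MatC ^ t.2.2))
        (s := Finset.range (N-k) ×ˢ Finset.range (N-k) ×ˢ Finset.range (N-k))
        (t := im ∩ FolnerF N)
        (by
          rintro ⟨a, b, c⟩ hmem
          simp only [Finset.mem_coe, Finset.mem_product, Finset.mem_range] at hmem
          obtain ⟨ha, hb, hc⟩ := hmem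
          refine Finset.mem_inter.mpr ⟨?_, ?_⟩
          · refine Finset.mem_image.mpr ⟨MatA ^ a * MatB ^ b * MatC ^ c, ?_, rfl⟩
            refine Finset.mem_image.mpr ⟨(a, b, c), ?_, rfl⟩
            simp only [Finset.mem_product, Finset.mem_range]
            omega
          · show s * (MatA ^ a * MatB ^ b * MatC ^ c) ∈ FolnerF N
            rw [hs_def, phi_mul]
            split
            · refine Finset.mem_image.mpr ⟨(p+a, q+b, r+c), ?_, rfl⟩
              simp only [Finset.mem_product, Finset.mem_range]
              omega
            · refine Finset.mem_image.mpr ⟨(p+b, q+a, r+c), ?_, rfl⟩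
              simp only [Finset.mem_product, Finset.mem_range]
              omega)
        (fun x _ y _ h => (hinj.comp phi_inj) h)
      simpa [Finset.card_product, pow_succ, mul_assoc] using this
    have hIle : (im ∩ FolnerF N).card ≤ N^3 := by
      calc (im ∩ FolnerF N).card ≤ (FolnerF N).card :=
            Finset.card_le_card (Finset.inter_subset_right)
        _ = N^3 := card_FolnerF N
    -- symmetric difference cardinality
    have hsd1 : (im \ FolnerF N).card + (im ∩ FolnerF N).card = N^3 := by
      rw [Finset.card_sdiff_add_card_inter, him]
    have hsd2 : (FolnerF N \ im).card + (im ∩ FolnerF N).card = N^3 := by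
      rw [Finset.inter_comm, Finset.card_sdiff_add_card_inter, card_FolnerF]
    have hsymm : (im ∆ FolnerF N).card
        = (im \ FolnerF N).card + (FolnerF N \ im).card := by
      rw [symmDiff_def, Finset.sup_eq_union,
        Finset.card_union_of_disjoint disjoint_sdiff_sdiff]
    -- cube bound
    have hcube : N^3 ≤ (N-k)^3 + 3*(k*N^2) := by
      have hNe : N = (N-k) + k := by omega
      set m := N - k
      rw [hNe]
      nlinarith [sq_nonneg m, sq_nonneg k, Nat.zero_le (m*k^2), Nat.zero_le (k^3)]
    have hcard : (im ∆ FolnerF N).card ≤ 6*(k*N^2) := by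
      have hD : N^3 - (im ∩ FolnerF N).card ≤ 3*(k*N^2) := by
        have h1 : N^3 - (im ∩ FolnerF N).card ≤ N^3 - (N-k)^3 :=
          Nat.sub_le_sub_left hint _
        have h2 : N^3 - (N-k)^3 ≤ 3*(k*N^2) :=
          Nat.sub_le_iff_le_add.mpr (by linarith)
        exact le_trans h1 h2
      have e1 : (im \ FolnerF N).card = N^3 - (im ∩ FolnerF N).card :=
        Nat.eq_sub_of_add_eq hsd1
      have e2 : (FolnerF N \ im).card = N^3 - (im ∩ FolnerF N).card :=
        Nat.eq_sub_of_add_eq hsd2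
      rw [hsymm, e1, e2]
      linarith
    -- pass to the reals
    have hN0 : (0:ℝ) < (N:ℝ) := by exact_mod_cast h1N
    rw [card_FolnerF]
    have hcardR : ((im ∆ FolnerF N).card : ℝ) ≤ 6*((k:ℝ)*(N:ℝ)^2) := by
      exact_mod_cast hcard
    have step1 : ((im ∆ FolnerF N).card : ℝ) / ((N:ℝ)^3)
        ≤ (6*((k:ℝ)*(N:ℝ)^2)) / ((N:ℝ)^3) := by gcongr
    have step2 : (6*((k:ℝ)*(N:ℝ)^2)) / ((N:ℝ)^3) = 6*(k:ℝ)/(N:ℝ) := by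
      field_simp
    push_cast
    rw [step2] at step1
    exact step1
  apply tendsto_of_tendsto_of_tendsto_of_le_of_le' tendsto_const_nhds
    (tendsto_const_div_atTop_nhds_zero_nat (6*(k:ℝ)))
  · exact Filter.Eventually.of_forall fun N => by positivity
  · filter_upwards [Filter.eventually_ge_atTop k, Filter.eventually_ge_atTop 1] with N h1 h2
    exact key N h1 h2
end
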